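/- arXiv:2205.05059 — 6 statements merged into one kernel-verified Lean document; each statement's English description precedes it below -/
import Mathlib

section
/- Let T be a nondegenerate tetrahedron in ℝ³ with diameter h_T and insphere diameter ρ_T. Then for every edge e of T, the dihedral angle α_e of T at e satisfies sin(α_e) ≥ ρ_T / h_T. -/
open scoped RealInnerProductSpace

/-- The dihedral angle of a tetrahedron at the edge `[a, b]`, where `p` and `q` are the two
remaining vertices: it is the angle between the components of `p - a` and `q - a` orthogonal
to the edge direction `b - a`. -/
noncomputable def dihedralAngle (a b p q : EuclideanSpace ℝ (Fin 3)) : ℝ :=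
  InnerProductGeometry.angle
    ((p - a) - (⟪p - a, b - a⟫ / ⟪b - a, b - a⟫) • (b - a))
    ((q - a) - (⟪q - a, b - a⟫ / ⟪b - a, b - a⟫) • (b - a))

private lemma fin4_distinct : ∀ i j k l : Fin 4,
    ({i, j, k, l} : Finset (Fin 4)) = Finset.univ →
    i ≠ j ∧ i ≠ k ∧ i ≠ l ∧ j ≠ k ∧ j ≠ l ∧ k ≠ l := by decide

section helpers

variable {E : Type*} [NormedAddCommGroup E] [InnerProductSpace ℝ E]

private lemma expandL (x y z : E) (c : ℝ) : ⟪x - c • y, z⟫ = ⟪x, z⟫ - c * ⟪y, z⟫ := by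
  rw [inner_sub_left, real_inner_smul_left]

private lemma expandR (x y z : E) (c : ℝ) : ⟪x, y - c • z⟫ = ⟪x, y⟫ - c * ⟪x, z⟫ := by
  rw [inner_sub_right, real_inner_smul_right]

private lemma expandAddR (x y z : E) (c : ℝ) : ⟪x, y + c • z⟫ = ⟪x, y⟫ + c * ⟪x, z⟫ := by
  rw [inner_add_right, real_inner_smul_right]

private lemma orth (x u : E) (h : ⟪u, u⟫ ≠ 0) : ⟪x - (⟪x, u⟫ / ⟪u, u⟫) • u, u⟫ = 0 := by
  rw [expandL x u u (⟪x, u⟫ / ⟪u, u⟫), div_mul_cancel₀ _ h, sub_self]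

private lemma normsq_add_smul (x y : E) (c : ℝ) (h : ⟪x, y⟫ = 0) :
    ⟪x + c • y, x + c • y⟫ = ⟪x, x⟫ + c ^ 2 * ⟪y, y⟫ := by
  have h' : ⟪y, x⟫ = 0 := by rw [← h]; exact real_inner_comm x y
  simp only [inner_add_left, inner_add_right, real_inner_smul_left, real_inner_smul_right, h, h']
  ring

end helpers

/-- Let `T` be a nondegenerate tetrahedron in `ℝ³` with diameter `h_T` and
insphere diameter `ρ_T = 2 * r`.  Then for every edge `e = [v i, v j]` of `T` (shared by the
two faces through the remaining vertices `v k`, `v l`), the dihedral angle `α_e` of `T` at `e`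
satisfies `sin α_e ≥ ρ_T / h_T`. -/
theorem sin_dihedral_angle_ge
    (v : Fin 4 → EuclideanSpace ℝ (Fin 3))
    (hv : AffineIndependent ℝ v)
    (T : Set (EuclideanSpace ℝ (Fin 3)))
    (hT : T = convexHull ℝ (Set.range v))
    (z : EuclideanSpace ℝ (Fin 3)) (r : ℝ)
    (hball : Metric.closedBall z r ⊆ T)
    (hmax : ∀ (z' : EuclideanSpace ℝ (Fin 3)) (r' : ℝ),
      Metric.closedBall z' r' ⊆ T → r' ≤ r)
    (i j k l : Fin 4) (hijkl : ({i, j, k, l} : Finset (Fin 4)) = Finset.univ) :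
    2 * r / Metric.diam T ≤ Real.sin (dihedralAngle (v i) (v j) (v k) (v l)) := by
  obtain ⟨hij, hik, hil, hjk, hjl, hkl⟩ := fin4_distinct i j k l hijkl
  set u : EuclideanSpace ℝ (Fin 3) := v j - v i with hu_def
  set ek : EuclideanSpace ℝ (Fin 3) := v k - v i with hek_def
  set el : EuclideanSpace ℝ (Fin 3) := v l - v i with hel_def
  -- linear independence of u, ek, el
  have hlin := (affineIndependent_iff_linearIndependent_vsub ℝ v i).mp hv
  have key : ∀ A B C : ℝ, A • u + B • ek + C • el = 0 → A = 0 ∧ B = 0 ∧ C = 0 := by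
    intro A B C hsum
    rw [linearIndependent_iff'] at hlin
    classical
    set s : Finset {x : Fin 4 // x ≠ i} :=
      {⟨j, Ne.symm hij⟩, ⟨k, Ne.symm hik⟩, ⟨l, Ne.symm hil⟩} with hs_def
    set g : {x : Fin 4 // x ≠ i} → ℝ :=
      fun x => if x.1 = j then A else if x.1 = k then B else C with hg_def
    have hsum' : ∑ x ∈ s, g x • (v x.1 -ᵥ v i) = 0 := by
      rw [hs_def]
      rw [Finset.sum_insert (by simp [hjk, hjl]),
        Finset.sum_insert (by simp [hkl]), Finset.sum_singleton]
      simp only [hg_def, if_pos rfl, if_neg (Ne.symm hjk), if_neg (Ne.symm hjl),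
        if_neg (Ne.symm hkl), if_pos rfl]
      simp only [vsub_eq_sub, ← hu_def, ← hek_def, ← hel_def, ← add_assoc]
      exact hsum
    have hall := hlin s g hsum'
    refine ⟨?_, ?_, ?_⟩
    · have := hall ⟨j, Ne.symm hij⟩ (by simp [hs_def])
      simpa [hg_def] using this
    · have := hall ⟨k, Ne.symm hik⟩ (by simp [hs_def])
      simpa [hg_def, Ne.symm hjk] using this
    · have := hall ⟨l, Ne.symm hil⟩ (by simp [hs_def])
      simpa [hg_def, Ne.symm hjl, Ne.symm hkl] using this
  have hu : u ≠ 0 := by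
    intro h
    have := (key 1 0 0 (by simp [h])).1
    norm_num at this
  have huu : ⟪u, u⟫ ≠ 0 := inner_self_ne_zero.mpr hu
  -- projections
  set w1 : EuclideanSpace ℝ (Fin 3) := ek - (⟪ek, u⟫ / ⟪u, u⟫) • u with hw1_def
  set w2 : EuclideanSpace ℝ (Fin 3) := el - (⟪el, u⟫ / ⟪u, u⟫) • u with hw2_def
  have hw1 : w1 ≠ 0 := by
    intro h
    have : (-(⟪ek, u⟫ / ⟪u, u⟫)) • u + (1:ℝ) • ek + (0:ℝ) • el = 0 := by
      rw [← h, hw1_def]; module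
    have := (key _ _ _ this).2.1
    norm_num at this
  have hw2 : w2 ≠ 0 := by
    intro h
    have : (-(⟪el, u⟫ / ⟪u, u⟫)) • u + (0:ℝ) • ek + (1:ℝ) • el = 0 := by
      rw [← h, hw2_def]; module
    have := (key _ _ _ this).2.2
    norm_num at this
  have hw1w1 : ⟪w1, w1⟫ ≠ 0 := inner_self_ne_zero.mpr hw1
  set m : EuclideanSpace ℝ (Fin 3) := w2 - (⟪w2, w1⟫ / ⟪w1, w1⟫) • w1 with hm_def
  have hm : m ≠ 0 := by
    intro h
    have : ((⟪w2, w1⟫ / ⟪w1, w1⟫) * (⟪ek, u⟫ / ⟪u, u⟫) - ⟪el, u⟫ / ⟪u, u⟫) • u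
        + (-(⟪w2, w1⟫ / ⟪w1, w1⟫)) • ek + (1:ℝ) • el = 0 := by
      rw [← h, hm_def, hw1_def, hw2_def]; module
    have := (key _ _ _ this).2.2
    norm_num at this
  -- orthogonality facts
  have F1 : ⟪w1, u⟫ = 0 := by rw [hw1_def]; exact orth ek u huu
  have F2 : ⟪w2, u⟫ = 0 := by rw [hw2_def]; exact orth el u huu
  have F3 : ⟪m, w1⟫ = 0 := by rw [hm_def]; exact orth w2 w1 hw1w1
  have F4 : ⟪m, u⟫ = 0 := by
    rw [hm_def, expandL w2 w1 u (⟪w2, w1⟫ / ⟪w1, w1⟫), F1, F2]; ring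
  have hek2 : ek = w1 + (⟪ek, u⟫ / ⟪u, u⟫) • u := by rw [hw1_def]; abel
  have hel2 : el = w2 + (⟪el, u⟫ / ⟪u, u⟫) • u := by rw [hw2_def]; abel
  have hw22 : w2 = m + (⟪w2, w1⟫ / ⟪w1, w1⟫) • w1 := by rw [hm_def]; abel
  have F5 : ⟪m, ek⟫ = 0 := by
    calc ⟪m, ek⟫ = ⟪m, w1 + (⟪ek, u⟫ / ⟪u, u⟫) • u⟫ := by rw [← hek2]
      _ = ⟪m, w1⟫ + (⟪ek, u⟫ / ⟪u, u⟫) * ⟪m, u⟫ := expandAddR m w1 u _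
      _ = 0 := by rw [F3, F4]; ring
  have hmw2 : ⟪m, w2⟫ = ⟪m, m⟫ := by
    calc ⟪m, w2⟫ = ⟪m, m + (⟪w2, w1⟫ / ⟪w1, w1⟫) • w1⟫ := by rw [← hw22]
      _ = ⟪m, m⟫ + (⟪w2, w1⟫ / ⟪w1, w1⟫) * ⟪m, w1⟫ := expandAddR m m w1 _
      _ = ⟪m, m⟫ := by rw [F3]; ring
  have F6 : ⟪m, el⟫ = ⟪m, m⟫ := by
    calc ⟪m, el⟫ = ⟪m, w2 + (⟪el, u⟫ / ⟪u, u⟫) • u⟫ := by rw [← hel2]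
      _ = ⟪m, w2⟫ + (⟪el, u⟫ / ⟪u, u⟫) * ⟪m, u⟫ := expandAddR m w2 u _
      _ = ⟪m, m⟫ := by rw [hmw2, F4]; ring
  -- membership of vertices
  have hmemT : ∀ x : Fin 4, v x ∈ T := by
    intro x
    rw [hT]
    exact subset_convexHull ℝ _ (Set.mem_range_self x)
  have hmm0 : (0:ℝ) ≤ ⟪m, m⟫ := real_inner_self_nonneg
  -- slab
  have hslab : ∀ x ∈ T, ⟪x - v i, m⟫ ∈ Set.Icc (0:ℝ) ⟪m, m⟫ := by
    intro x hx
    rw [hT] at hx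
    have hconv : Convex ℝ {x : EuclideanSpace ℝ (Fin 3) |
        ⟪x - v i, m⟫ ∈ Set.Icc (0:ℝ) ⟪m, m⟫} := by
      intro p hp q hq s t hs ht hst
      obtain rfl : t = 1 - s := by linarith
      have hcomb : (s • p + (1 - s) • q) - v i = s • (p - v i) + (1 - s) • (q - v i) := by
        module
      simp only [Set.mem_setOf_eq, hcomb, inner_add_left, real_inner_smul_left] at *
      constructor
      · have h1 := hp.1; have h2 := hq.1
        have := mul_nonneg hs h1
        have := mul_nonneg ht h2
        linarith
      · nlinarith [hp.2, hq.2, hp.1, hq.1]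
    refine convexHull_min ?_ hconv hx
    rintro _ ⟨x, rfl⟩
    have hx4 : x = i ∨ x = j ∨ x = k ∨ x = l := by
      have : x ∈ ({i, j, k, l} : Finset (Fin 4)) := by rw [hijkl]; exact Finset.mem_univ x
      simpa using this
    simp only [Set.mem_setOf_eq, Set.mem_Icc]
    rcases hx4 with h | h | h | h <;> rw [h]
    · rw [sub_self, inner_zero_left]
      exact ⟨le_rfl, hmm0⟩
    · rw [show (v j - v i : EuclideanSpace ℝ (Fin 3)) = u from rfl, real_inner_comm m u, F4]
      exact ⟨le_rfl, hmm0⟩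
    · rw [show (v k - v i : EuclideanSpace ℝ (Fin 3)) = ek from rfl, real_inner_comm m ek, F5]
      exact ⟨le_rfl, hmm0⟩
    · rw [show (v l - v i : EuclideanSpace ℝ (Fin 3)) = el from rfl, real_inner_comm m el, F6]
      exact ⟨hmm0, le_rfl⟩
  -- r ≥ 0
  have hr0 : 0 ≤ r :=
    hmax (v i) 0 (by rw [Metric.closedBall_zero]; exact Set.singleton_subset_iff.mpr (hmemT i))
  have hnm : 0 < ‖m‖ := norm_pos_iff.mpr hm
  -- 2 r ≤ ‖m‖
  have h2r : 2 * r ≤ ‖m‖ := by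
    have hplus : z + (r / ‖m‖) • m ∈ T := by
      apply hball
      rw [Metric.mem_closedBall, dist_eq_norm]
      have h' : z + (r / ‖m‖) • m - z = (r / ‖m‖) • m := by abel
      rw [h', norm_smul, Real.norm_eq_abs, abs_of_nonneg (by positivity),
        div_mul_cancel₀ _ (ne_of_gt hnm)]
    have hminus : z - (r / ‖m‖) • m ∈ T := by
      apply hball
      rw [Metric.mem_closedBall, dist_eq_norm]
      have h' : z - (r / ‖m‖) • m - z = -((r / ‖m‖) • m) := by abel
      rw [h', norm_neg, norm_smul, Real.norm_eq_abs, abs_of_nonneg (by positivity),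
        div_mul_cancel₀ _ (ne_of_gt hnm)]
    have e1 := (hslab _ hplus).2
    have e2 := (hslab _ hminus).1
    have hmm : ⟪m, m⟫ = ‖m‖ ^ 2 := real_inner_self_eq_norm_sq m
    have q1 : ⟪z + (r / ‖m‖) • m - v i, m⟫
        = ⟪z - v i, m⟫ + (r / ‖m‖) * ⟪m, m⟫ := by
      have h' : z + (r / ‖m‖) • m - v i = (z - v i) + (r / ‖m‖) • m := by abel
      rw [h', inner_add_left, real_inner_smul_left]
    have q2 : ⟪z - (r / ‖m‖) • m - v i, m⟫
        = ⟪z - v i, m⟫ - (r / ‖m‖) * ⟪m, m⟫ := by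
      have h' : z - (r / ‖m‖) • m - v i = (z - v i) - (r / ‖m‖) • m := by abel
      rw [h', inner_sub_left, real_inner_smul_left]
    rw [q1, hmm] at e1
    rw [q2, hmm] at e2
    have hrm : (r / ‖m‖) * ‖m‖ ^ 2 = r * ‖m‖ := by
      field_simp
    rw [hrm] at e1 e2
    have e3 : 2 * r * ‖m‖ ≤ ‖m‖ * ‖m‖ := by rw [← sq]; linarith
    exact le_of_mul_le_mul_right e3 hnm
  -- sin of the angle
  have hα : Real.sin (dihedralAngle (v i) (v j) (v k) (v l)) * ‖w2‖ = ‖m‖ := by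
    have hdef : dihedralAngle (v i) (v j) (v k) (v l) = InnerProductGeometry.angle w1 w2 := by
      unfold dihedralAngle
      rw [← hu_def, ← hek_def, ← hel_def, ← hw1_def, ← hw2_def]
    have hw2m : ⟪w2, m⟫ = ⟪w2, w2⟫ - (⟪w2, w1⟫ / ⟪w1, w1⟫) * ⟪w2, w1⟫ := by
      rw [hm_def]; exact expandR w2 w2 w1 _
    have hmmval : ⟪m, m⟫ = ⟪w2, w2⟫ - (⟪w2, w1⟫ / ⟪w1, w1⟫) * ⟪w2, w1⟫ := by
      rw [← hw2m, real_inner_comm m w2, hmw2]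
    have key2 : ∀ A B C : ℝ, C ≠ 0 → (A - B / C * B) * C = C * A - B * B := by
      intro A B C hC; field_simp
    have hBB : ⟪w1, w2⟫ = ⟪w2, w1⟫ := real_inner_comm _ _
    have hmm2 : ⟪m, m⟫ * ⟪w1, w1⟫ = ⟪w1, w1⟫ * ⟪w2, w2⟫ - ⟪w1, w2⟫ * ⟪w1, w2⟫ := by
      rw [hmmval, hBB]
      exact key2 ⟪w2, w2⟫ ⟪w2, w1⟫ ⟪w1, w1⟫ hw1w1
    have hsqrt : Real.sqrt (⟪w1, w1⟫ * ⟪w2, w2⟫ - ⟪w1, w2⟫ * ⟪w1, w2⟫) = ‖w1‖ * ‖m‖ := by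
      rw [← hmm2, real_inner_self_eq_norm_sq, real_inner_self_eq_norm_sq,
        show ‖m‖ ^ 2 * ‖w1‖ ^ 2 = (‖w1‖ * ‖m‖) ^ 2 by ring]
      exact Real.sqrt_sq (by positivity)
    have hsin := InnerProductGeometry.sin_angle_mul_norm_mul_norm w1 w2
    rw [hsqrt] at hsin
    have hnw1 : (0:ℝ) < ‖w1‖ := norm_pos_iff.mpr hw1
    rw [hdef]
    refine mul_left_cancel₀ (ne_of_gt hnw1) ?_
    rw [← hsin]; ring
  -- boundedness and final chain
  have hbdd : Bornology.IsBounded T := by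
    rw [hT]
    exact isBounded_convexHull.mpr (Set.finite_range v).isBounded
  have hw2el : ‖w2‖ ≤ ‖el‖ := by
    have h1 : ⟪el, el⟫ = ⟪w2, w2⟫ + (⟪el, u⟫ / ⟪u, u⟫) ^ 2 * ⟪u, u⟫ := by
      calc ⟪el, el⟫
          = ⟪w2 + (⟪el, u⟫ / ⟪u, u⟫) • u, w2 + (⟪el, u⟫ / ⟪u, u⟫) • u⟫ := by rw [← hel2]
        _ = ⟪w2, w2⟫ + (⟪el, u⟫ / ⟪u, u⟫) ^ 2 * ⟪u, u⟫ := normsq_add_smul w2 u _ F2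
    have h2 : ‖w2‖ ^ 2 ≤ ‖el‖ ^ 2 := by
      rw [← real_inner_self_eq_norm_sq, ← real_inner_self_eq_norm_sq, h1]
      have h3 : (0:ℝ) ≤ ⟪u, u⟫ := real_inner_self_nonneg
      have h4 : (0:ℝ) ≤ (⟪el, u⟫ / ⟪u, u⟫) ^ 2 * ⟪u, u⟫ := mul_nonneg (sq_nonneg _) h3
      linarith
    calc ‖w2‖ = Real.sqrt (‖w2‖ ^ 2) := (Real.sqrt_sq (norm_nonneg _)).symm
      _ ≤ Real.sqrt (‖el‖ ^ 2) := Real.sqrt_le_sqrt h2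
      _ = ‖el‖ := Real.sqrt_sq (norm_nonneg _)
  have heldiam : ‖el‖ ≤ Metric.diam T := by
    have h' : ‖el‖ = dist (v l) (v i) := by rw [hel_def, dist_eq_norm]
    rw [h']
    exact Metric.dist_le_diam_of_mem hbdd (hmemT l) (hmemT i)
  have hsin_nonneg : 0 ≤ Real.sin (dihedralAngle (v i) (v j) (v k) (v l)) :=
    Real.sin_nonneg_of_nonneg_of_le_pi (InnerProductGeometry.angle_nonneg _ _)
      (InnerProductGeometry.angle_le_pi _ _)
  have hdiam_pos : 0 < Metric.diam T := by
    have h1 : 0 < dist (v i) (v j) := dist_pos.mpr (hv.injective.ne hij)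
    exact lt_of_lt_of_le h1 (Metric.dist_le_diam_of_mem hbdd (hmemT i) (hmemT j))
  rw [div_le_iff₀ hdiam_pos]
  calc 2 * r ≤ ‖m‖ := h2r
    _ = Real.sin (dihedralAngle (v i) (v j) (v k) (v l)) * ‖w2‖ := hα.symm
    _ ≤ Real.sin (dihedralAngle (v i) (v j) (v k) (v l)) * Metric.diam T :=
        mul_le_mul_of_nonneg_left (le_trans hw2el heldiam) hsin_nonneg
end

section
/- Let T be a nondegenerate tetrahedron in ℝ³ with diameter h_T and insphere diameter ρ_T, and suppose h_T/ρ_T ≤ c₀ for a constant c₀ ≥ 1. Then for every edge e of T, the dihedral angle α_e of T at e satisfies |cos(α_e)| ≤ √(1 − c₀⁻²). -/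
open scoped RealInnerProductSpace

set_option maxHeartbeats 1000000 in
/-- Let `T` be a nondegenerate tetrahedron in `ℝ³` with diameter `h_T` and
insphere diameter `ρ_T = 2 * r`, and suppose `h_T / ρ_T ≤ c₀` for a constant `c₀ ≥ 1`.  Then
for every edge `e = [v i, v j]` of `T` (shared by the two faces through the remaining vertices
`v k`, `v l`), the dihedral angle `α_e` of `T` at `e` satisfies
`|cos α_e| ≤ √(1 − c₀⁻²)`. -/
theorem abs_cos_dihedral_angle_le
    (c₀ : ℝ) (hc₀ : 1 ≤ c₀)
    (v : Fin 4 → EuclideanSpace ℝ (Fin 3))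
    (hv : AffineIndependent ℝ v)
    (T : Set (EuclideanSpace ℝ (Fin 3)))
    (hT : T = convexHull ℝ (Set.range v))
    (z : EuclideanSpace ℝ (Fin 3)) (r : ℝ)
    (hball : Metric.closedBall z r ⊆ T)
    (hmax : ∀ (z' : EuclideanSpace ℝ (Fin 3)) (r' : ℝ),
      Metric.closedBall z' r' ⊆ T → r' ≤ r)
    (hreg : Metric.diam T / (2 * r) ≤ c₀)
    (i j k l : Fin 4) (hijkl : ({i, j, k, l} : Finset (Fin 4)) = Finset.univ) :
    |Real.cos (dihedralAngle (v i) (v j) (v k) (v l))| ≤ Real.sqrt (1 - (c₀ ^ 2)⁻¹) := by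
  have hdist : i ≠ j ∧ i ≠ k ∧ i ≠ l ∧ j ≠ k ∧ j ≠ l ∧ k ≠ l := by
    revert hijkl; revert i j k l; decide
  obtain ⟨hij, hik, hil, hjk, hjl, hkl⟩ := hdist
  set a := v i with ha
  set b := v j with hb
  set p := v k with hp
  set q := v l with hq
  -- the key linear independence helper
  have key : ∀ c₁ c₂ c₃ : ℝ, c₁ • (b - a) + c₂ • (p - a) + c₃ • (q - a) = 0 →
      c₁ = 0 ∧ c₂ = 0 ∧ c₃ = 0 := by
    intro c₁ c₂ c₃ hcc
    set w : Fin 4 → ℝ := fun m => if m = i then -(c₁ + c₂ + c₃) else if m = j then c₁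
      else if m = k then c₂ else c₃ with hw
    have hmem1 : i ∉ ({j, k, l} : Finset (Fin 4)) := by simp [hij, hik, hil]
    have hmem2 : j ∉ ({k, l} : Finset (Fin 4)) := by simp [hjk, hjl]
    have hmem3 : k ∉ ({l} : Finset (Fin 4)) := by simp [hkl]
    have e1 : w i = -(c₁ + c₂ + c₃) := if_pos rfl
    have e2 : w j = c₁ := by simp [hw, hij.symm]
    have e3 : w k = c₂ := by simp [hw, hik.symm, hjk.symm]
    have e4 : w l = c₃ := by simp [hw, hil.symm, hjl.symm, hkl.symm]
    have hsum : ∑ m, w m = 0 := by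
      rw [← hijkl, Finset.sum_insert hmem1, Finset.sum_insert hmem2,
        Finset.sum_insert hmem3, Finset.sum_singleton, e1, e2, e3, e4]
      ring
    have hsum2 : ∑ m, w m • v m = 0 := by
      rw [← hijkl, Finset.sum_insert hmem1, Finset.sum_insert hmem2,
        Finset.sum_insert hmem3, Finset.sum_singleton, e1, e2, e3, e4,
        ← ha, ← hb, ← hp, ← hq, ← hcc]
      module
    have h0 := affineIndependent_iff.1 hv Finset.univ w hsum hsum2
    exact ⟨e2 ▸ h0 j (Finset.mem_univ j), e3 ▸ h0 k (Finset.mem_univ k),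
      e4 ▸ h0 l (Finset.mem_univ l)⟩
  -- basic vectors
  set u : EuclideanSpace ℝ (Fin 3) := b - a with hu
  have hu0 : u ≠ 0 := by
    intro h
    have := (key 1 0 0 (by
      calc (1:ℝ) • u + (0:ℝ) • (p - a) + (0:ℝ) • (q - a) = u := by module
        _ = 0 := h)).1
    norm_num at this
  set su : ℝ := ⟪p - a, u⟫ / ⟪u, u⟫ with hsu
  set tu : ℝ := ⟪q - a, u⟫ / ⟪u, u⟫ with htu
  set x : EuclideanSpace ℝ (Fin 3) := (p - a) - su • u with hx
  set w2 : EuclideanSpace ℝ (Fin 3) := (q - a) - tu • u with hw2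
  have hx0 : x ≠ 0 := by
    intro h
    have := (key (-su) 1 0 (by
      calc (-su) • u + (1:ℝ) • (p - a) + (0:ℝ) • (q - a) = x := by rw [hx]; module
        _ = 0 := h)).2.1
    norm_num at this
  have hw20 : w2 ≠ 0 := by
    intro h
    have := (key (-tu) 0 1 (by
      calc (-tu) • u + (0:ℝ) • (p - a) + (1:ℝ) • (q - a) = w2 := by rw [hw2]; module
        _ = 0 := h)).2.2
    norm_num at this
  have huu : ⟪u, u⟫ ≠ 0 := inner_self_ne_zero.2 hu0
  set c : ℝ := ⟪w2, x⟫ / ⟪x, x⟫ with hc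
  set n : EuclideanSpace ℝ (Fin 3) := w2 - c • x with hn
  have hxx : ⟪x, x⟫ ≠ 0 := inner_self_ne_zero.2 hx0
  have hn0 : n ≠ 0 := by
    intro h
    have := (key (c * su - tu) (-c) 1 (by
      calc (c * su - tu) • u + (-c) • (p - a) + (1:ℝ) • (q - a) = n := by
            rw [hn, hw2, hx]; module
        _ = 0 := h)).2.2
    norm_num at this
  -- orthogonality facts
  have hxu : ⟪x, u⟫ = 0 := by
    rw [hx, inner_sub_left, real_inner_smul_left, hsu, div_mul_cancel₀ _ huu, sub_self]
  have hwu : ⟪w2, u⟫ = 0 := by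
    rw [hw2, inner_sub_left, real_inner_smul_left, htu, div_mul_cancel₀ _ huu, sub_self]
  have hnx : ⟪n, x⟫ = 0 := by
    rw [hn, inner_sub_left, real_inner_smul_left, hc, div_mul_cancel₀ _ hxx, sub_self]
  have hnu : ⟪n, u⟫ = 0 := by
    rw [hn, inner_sub_left, real_inner_smul_left, hxu, hwu]
    ring
  have hxn : ⟪x, n⟫ = 0 := (real_inner_comm n x).trans hnx
  have hun : ⟪u, n⟫ = 0 := (real_inner_comm n u).trans hnu
  have hnw : ⟪n, w2⟫ = ‖n‖ ^ 2 := by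
    have : w2 = n + c • x := by rw [hn]; module
    rw [this, inner_add_right, real_inner_smul_right, hnx, real_inner_self_eq_norm_sq]
    ring
  have hnp : ⟪n, p - a⟫ = 0 := by
    have : p - a = x + su • u := by rw [hx]; module
    rw [this, inner_add_right, real_inner_smul_right, hnx, hnu]
    ring
  have hnq : ⟪n, q - a⟫ = ‖n‖ ^ 2 := by
    have : q - a = w2 + tu • u := by rw [hw2]; module
    rw [this, inner_add_right, real_inner_smul_right, hnu, hnw]
    ring
  -- the slab
  set S : Set (EuclideanSpace ℝ (Fin 3)) :=
    {y | ⟪a, n⟫ ≤ ⟪y, n⟫ ∧ ⟪y, n⟫ ≤ ⟪a, n⟫ + ‖n‖ ^ 2} with hS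
  have hlin : IsLinearMap ℝ (fun y : EuclideanSpace ℝ (Fin 3) => ⟪y, n⟫) :=
    ⟨fun y₁ y₂ => inner_add_left y₁ y₂ n, fun c y => real_inner_smul_left y n c⟩
  have hSconv : Convex ℝ S := by
    rw [hS]
    exact (convex_halfSpace_ge hlin (⟪a, n⟫)).inter (convex_halfSpace_le hlin _)
  have hTS : T ⊆ S := by
    rw [hT]
    refine convexHull_min ?_ hSconv
    rintro _ ⟨m, rfl⟩
    have hm : m = i ∨ m = j ∨ m = k ∨ m = l := by
      have := hijkl ▸ Finset.mem_univ m
      simpa using this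
    have hb' : ⟪b, n⟫ = ⟪a, n⟫ := by
      have : b = a + u := by rw [hu]; module
      rw [this, inner_add_left, hun, add_zero]
    have hp' : ⟪p, n⟫ = ⟪a, n⟫ := by
      have : p = a + (p - a) := by module
      nth_rewrite 1 [this]
      rw [inner_add_left, (real_inner_comm n (p - a)).trans hnp, add_zero]
    have hq' : ⟪q, n⟫ = ⟪a, n⟫ + ‖n‖ ^ 2 := by
      have : q = a + (q - a) := by module
      nth_rewrite 1 [this]
      rw [inner_add_left, (real_inner_comm n (q - a)).trans hnq]
    have h2 : (0:ℝ) ≤ ‖n‖ ^ 2 := sq_nonneg _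
    rcases hm with rfl | rfl | rfl | rfl
    · exact ⟨le_refl _, by linarith⟩
    · exact ⟨le_of_eq hb'.symm, by rw [hb']; linarith⟩
    · exact ⟨le_of_eq hp'.symm, by rw [hp']; linarith⟩
    · exact ⟨le_trans (le_add_of_nonneg_right h2) (le_of_eq hq'.symm), le_of_eq hq'⟩
  -- positivity of r
  have hr : 0 < r := by
    have hconv : Convex ℝ T := hT ▸ convex_convexHull ℝ _
    have hspan : affineSpan ℝ T = ⊤ := by
      rw [hT, affineSpan_convexHull]
      exact hv.affineSpan_eq_top_iff_card_eq_finrank_add_one.2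
        (by simp [finrank_euclideanSpace_fin])
    obtain ⟨x₀, hx₀⟩ := hconv.interior_nonempty_iff_affineSpan_eq_top.2 hspan
    obtain ⟨ε, hε, hball'⟩ := Metric.isOpen_iff.1 isOpen_interior x₀ hx₀
    have hsub : Metric.closedBall x₀ (ε / 2) ⊆ T :=
      (Metric.closedBall_subset_ball (by linarith)).trans (hball'.trans interior_subset)
    have := hmax x₀ (ε / 2) hsub
    linarith
  -- ball in slab gives 2r ≤ ‖n‖
  have hnpos : 0 < ‖n‖ := norm_pos_iff.2 hn0
  have h2r : 2 * r ≤ ‖n‖ := by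
    set ν : EuclideanSpace ℝ (Fin 3) := ‖n‖⁻¹ • n with hν
    have hνn : ⟪ν, n⟫ = ‖n‖ := by
      rw [hν, real_inner_smul_left, real_inner_self_eq_norm_sq]
      field_simp
    have hνnorm : ‖r • ν‖ = r := by
      rw [norm_smul, hν, norm_smul, norm_inv, norm_norm]
      rw [Real.norm_eq_abs, abs_of_pos hr]
      field_simp
    have hp1 : z + r • ν ∈ S := hTS (hball (by
      rw [Metric.mem_closedBall, dist_eq_norm]
      simp [hνnorm]))
    have hp2 : z - r • ν ∈ S := hTS (hball (by
      rw [Metric.mem_closedBall, dist_eq_norm]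
      simp [hνnorm]))
    have e1 : ⟪z + r • ν, n⟫ = ⟪z, n⟫ + r * ‖n‖ := by
      rw [inner_add_left, real_inner_smul_left, hνn]
    have e2 : ⟪z - r • ν, n⟫ = ⟪z, n⟫ - r * ‖n‖ := by
      rw [inner_sub_left, real_inner_smul_left, hνn]
    rw [hS] at hp1 hp2
    obtain ⟨-, h1⟩ := hp1
    obtain ⟨h2, -⟩ := hp2
    rw [e1] at h1
    rw [e2] at h2
    have hmul : (2 * r) * ‖n‖ ≤ ‖n‖ * ‖n‖ := by rw [← pow_two]; linarith
    exact le_of_mul_le_mul_right hmul hnpos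
  -- ‖w2‖ ≤ diam T
  have hwnorm : ‖w2‖ ≤ Metric.diam T := by
    have h1 : ‖w2‖ ≤ ‖q - a‖ := by
      have hqa : q - a = w2 + tu • u := by rw [hw2]; module
      have horth : ⟪w2, tu • u⟫ = 0 := by
        rw [real_inner_smul_right, hwu]; ring
      have hns : ‖q - a‖ ^ 2 = ‖w2‖ ^ 2 + ‖tu • u‖ ^ 2 := by
        rw [hqa, norm_add_sq_real, horth]; ring
      exact le_of_pow_le_pow_left₀ two_ne_zero (norm_nonneg _)
        (by nlinarith [sq_nonneg ‖tu • u‖])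
    have h2 : ‖q - a‖ ≤ Metric.diam T := by
      have hbdd : Bornology.IsBounded T := by
        rw [hT]
        exact ((Set.finite_range v).isCompact_convexHull ℝ).isBounded
      have hqT : q ∈ T := hT ▸ subset_convexHull ℝ _ ⟨l, rfl⟩
      have haT : a ∈ T := hT ▸ subset_convexHull ℝ _ ⟨i, rfl⟩
      have := Metric.dist_le_diam_of_mem hbdd hqT haT
      rwa [dist_eq_norm] at this
    linarith
  -- the angle
  set α : ℝ := InnerProductGeometry.angle x w2 with hα
  have hgoal : dihedralAngle (v i) (v j) (v k) (v l) = α := rfl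
  have hsin_nonneg : 0 ≤ Real.sin α :=
    Real.sin_nonneg_of_nonneg_of_le_pi (InnerProductGeometry.angle_nonneg x w2)
      (InnerProductGeometry.angle_le_pi x w2)
  have hcos : Real.cos α = ⟪x, w2⟫ / (‖x‖ * ‖w2‖) := InnerProductGeometry.cos_angle x w2
  -- ‖n‖ = ‖w2‖ * sin α
  have hkey : ‖n‖ = ‖w2‖ * Real.sin α := by
    have hxpos : 0 < ‖x‖ := norm_pos_iff.2 hx0
    have hwpos : 0 < ‖w2‖ := norm_pos_iff.2 hw20
    have hsq : ‖n‖ ^ 2 = (‖w2‖ * Real.sin α) ^ 2 := by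
      have hxx2 : (⟪x, x⟫ : ℝ) = ‖x‖ ^ 2 := real_inner_self_eq_norm_sq x
      have hwx : (⟪x, w2⟫ : ℝ) = ⟪w2, x⟫ := real_inner_comm w2 x
      obtain ⟨I, hI⟩ : ∃ I : ℝ, ⟪w2, x⟫ = I := ⟨_, rfl⟩
      have hcval : c = I / ‖x‖ ^ 2 := by rw [hc, hI, hxx2]
      have e : ‖n‖ ^ 2 = ‖w2‖ ^ 2 - I ^ 2 / ‖x‖ ^ 2 := by
        rw [hn, norm_sub_sq_real, real_inner_smul_right, norm_smul, Real.norm_eq_abs,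
          mul_pow, sq_abs, hI, hcval]
        field_simp
        ring
      rw [mul_pow, Real.sin_sq, hcos, hwx, hI, e]
      field_simp
    have h1 : 0 ≤ ‖n‖ := norm_nonneg n
    have h2 : 0 ≤ ‖w2‖ * Real.sin α := mul_nonneg (norm_nonneg _) hsin_nonneg
    nlinarith
  -- conclude
  have hc₀pos : (0:ℝ) < c₀ := lt_of_lt_of_le one_pos hc₀
  have hdiam : Metric.diam T ≤ 2 * r * c₀ := by
    rw [div_le_iff₀ (by linarith)] at hreg
    linarith [hreg]
  have hsin : 1 / c₀ ≤ Real.sin α := by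
    have chain : 2 * r ≤ 2 * r * c₀ * Real.sin α := by
      calc 2 * r ≤ ‖n‖ := h2r
        _ = ‖w2‖ * Real.sin α := hkey
        _ ≤ Metric.diam T * Real.sin α :=
            mul_le_mul_of_nonneg_right hwnorm hsin_nonneg
        _ ≤ 2 * r * c₀ * Real.sin α :=
            mul_le_mul_of_nonneg_right hdiam hsin_nonneg
    rw [div_le_iff₀ hc₀pos]
    nlinarith [chain, hr]
  have hcos2 : Real.cos α ^ 2 ≤ 1 - (c₀ ^ 2)⁻¹ := by
    have h1 : Real.sin α ^ 2 ≥ (1 / c₀) ^ 2 := by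
      apply sq_le_sq'
      · have : 0 < 1 / c₀ := by positivity
        nlinarith
      · exact hsin
    have := Real.sin_sq_add_cos_sq α
    have : Real.cos α ^ 2 = 1 - Real.sin α ^ 2 := by linarith
    rw [this]
    have : (1 / c₀) ^ 2 = (c₀ ^ 2)⁻¹ := by field_simp
    linarith
  rw [hgoal, ← Real.sqrt_sq_eq_abs]
  exact Real.sqrt_le_sqrt hcos2
end

section
/- Let T₁ = [x₁,x₂,x₃,x₄] and T₂ = [x₁,x₃,x₄,x₅] be two nondegenerate tetrahedra in ℝ³ sharing the common face F₀ = [x₁,x₃,x₄] and lying on opposite sides of the plane of F₀. Let z_i be the incenter of T_i and z_{i,0} the orthogonal projection of z_i onto the plane containing F₀, for i = 1,2. Then z_{1,0} and z_{2,0} lie in the relative interior of F₀, the segment [z₁, z₂] intersects F₀ in a single point m₀ which lies on the segment [z_{1,0}, z_{2,0}], and dist(m₀, ∂F₀) ≥ min( dist(z_{1,0}, ∂F₀), dist(z_{2,0}, ∂F₀) ). -/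
open scoped RealInnerProductSpace

set_option maxHeartbeats 1000000

local notation "E3" => EuclideanSpace ℝ (Fin 3)

/-- The zero set of an affine functional, as an affine subspace. -/
noncomputable def auxZeroSet9 (f : (EuclideanSpace ℝ (Fin 3)) →ᵃ[ℝ] ℝ) :
    AffineSubspace ℝ (EuclideanSpace ℝ (Fin 3)) where
  carrier := {p | f p = 0}
  smul_vsub_vadd_mem' c p₁ p₂ p₃ h₁ h₂ h₃ := by
    simp only [Set.mem_setOf_eq] at *
    have hlin : f.linear (p₁ -ᵥ p₂) = f p₁ - f p₂ := f.linearMap_vsub p₁ p₂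
    have hv := f.map_vadd p₃ (c • (p₁ -ᵥ p₂))
    rw [map_smul, hlin, h₁, h₂, h₃] at hv
    simpa using hv

lemma aux_mem_zeroSet9 (f : (EuclideanSpace ℝ (Fin 3)) →ᵃ[ℝ] ℝ) (p : E3) :
    p ∈ auxZeroSet9 f ↔ f p = 0 := Iff.rfl

lemma aux_mem_intrinsicInterior9 {s : Set E3} {p : E3} (hp : p ∈ affineSpan ℝ s)
    {ε : ℝ} (hε : 0 < ε) (h : ∀ q ∈ affineSpan ℝ s, dist q p < ε → q ∈ s) :
    p ∈ intrinsicInterior ℝ s := by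
  refine mem_intrinsicInterior.2 ⟨⟨p, hp⟩, ?_, rfl⟩
  rw [mem_interior_iff_mem_nhds, Metric.mem_nhds_iff]
  refine ⟨ε, hε, fun q hq => ?_⟩
  rw [Metric.mem_ball, Subtype.dist_eq] at hq
  exact h _ q.2 hq

lemma aux_frontier_inter_interior9 {s : Set E3} {p : E3}
    (h₁ : p ∈ intrinsicFrontier ℝ s) (h₂ : p ∈ intrinsicInterior ℝ s) : False := by
  obtain ⟨y, hy, rfl⟩ := mem_intrinsicFrontier.1 h₁
  obtain ⟨y', hy', hyy⟩ := mem_intrinsicInterior.1 h₂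
  have hyy' : y' = y := Subtype.coe_injective hyy
  subst hyy'
  exact hy.2 hy'

lemma aux_mem_zeroSet9' (f : (EuclideanSpace ℝ (Fin 3)) →ᵃ[ℝ] ℝ) (p : E3) :
    p ∈ (auxZeroSet9 f : Set E3) ↔ f p = 0 := Iff.rfl

lemma aux_lineMap_mem9 (S : AffineSubspace ℝ E3) {p q : E3} (hp : p ∈ S) (hq : q ∈ S) (u : ℝ) :
    AffineMap.lineMap p q u ∈ S := by
  rw [AffineMap.lineMap_apply]; exact S.smul_vsub_vadd_mem u hq hp hp

lemma aux_reach9 {C : Set E3} (hclosed : IsClosed C)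
    {p q : E3} (hp : p ∈ C) (hq : q ∈ affineSpan ℝ C)
    (h : dist p q < Metric.infDist p (intrinsicFrontier ℝ C)) : q ∈ C := by
  by_contra hqC
  have hpq : p ≠ q := fun h' => hqC (h' ▸ hp)
  have hd : (0:ℝ) < dist p q := dist_pos.2 hpq
  set S : Set ℝ := Set.Icc (0:ℝ) 1 ∩ (fun u => AffineMap.lineMap p q u) ⁻¹' C with hS
  have hSc : IsClosed S := isClosed_Icc.inter (hclosed.preimage (AffineMap.lineMap_continuous))
  have h0S : (0:ℝ) ∈ S := ⟨⟨le_refl 0, zero_le_one⟩, by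
    simp only [Set.mem_preimage, AffineMap.lineMap_apply_zero]; exact hp⟩
  have hSne : S.Nonempty := ⟨0, h0S⟩
  have hSbdd : BddAbove S := ⟨1, fun u hu => hu.1.2⟩
  set u₀ := sSup S with hu₀
  have hu₀S : u₀ ∈ S := hSc.csSup_mem hSne hSbdd
  have hu₀1 : u₀ < 1 := by
    rcases lt_or_eq_of_le hu₀S.1.2 with h' | h'
    · exact h'
    · exfalso; apply hqC
      have := hu₀S.2
      rw [h'] at this
      simpa only [Set.mem_preimage, AffineMap.lineMap_apply_one] using this
  set w : E3 := AffineMap.lineMap p q u₀ with hw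
  have hwC : w ∈ C := hu₀S.2
  have hp' : p ∈ affineSpan ℝ C := subset_affineSpan ℝ C hp
  have hwspan : w ∈ affineSpan ℝ C := aux_lineMap_mem9 _ hp' hq u₀
  have hwf : w ∈ intrinsicFrontier ℝ C := by
    refine mem_intrinsicFrontier.2 ⟨⟨w, hwspan⟩, ⟨subset_closure hwC, ?_⟩, rfl⟩
    intro hint
    rw [mem_interior_iff_mem_nhds, Metric.mem_nhds_iff] at hint
    obtain ⟨ε, hε, hball⟩ := hint
    set δ := min ((1 - u₀)/2) (ε / (2 * dist p q)) with hδ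
    have hδ0 : 0 < δ := lt_min (by linarith) (by positivity)
    have hδ1 : u₀ + δ ≤ 1 := by
      have := min_le_left ((1 - u₀)/2) (ε / (2 * dist p q))
      have : δ ≤ (1 - u₀)/2 := this
      linarith
    have hmem : AffineMap.lineMap p q (u₀ + δ) ∈ affineSpan ℝ C := aux_lineMap_mem9 _ hp' hq _
    have hdd : dist (AffineMap.lineMap p q (u₀ + δ)) w = δ * dist p q := by
      rw [hw, dist_lineMap_lineMap]
      congr 1
      rw [Real.dist_eq, show u₀ + δ - u₀ = δ by ring]
      exact abs_of_pos hδ0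
    have hdlt : dist (⟨AffineMap.lineMap p q (u₀ + δ), hmem⟩ : affineSpan ℝ C) ⟨w, hwspan⟩ < ε := by
      rw [Subtype.dist_eq, hdd]
      have hδ2 : δ ≤ ε / (2 * dist p q) := min_le_right _ _
      have h2d : δ * (2 * dist p q) ≤ ε := (le_div_iff₀ (by positivity)).mp hδ2
      nlinarith
    have hmemC := hball (Metric.mem_ball.2 hdlt)
    have hin : u₀ + δ ∈ S := ⟨⟨by linarith [hu₀S.1.1], hδ1⟩, hmemC⟩
    have := le_csSup hSbdd hin
    linarith
  have h1 : Metric.infDist p (intrinsicFrontier ℝ C) ≤ dist p w :=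
    Metric.infDist_le_dist_of_mem hwf
  have h2 : dist p w ≤ dist p q := by
    have hpw : dist p w = dist (0:ℝ) u₀ * dist p q := by
      conv_lhs => rw [show p = AffineMap.lineMap p q (0:ℝ) from (AffineMap.lineMap_apply_zero p q).symm]
      rw [hw, dist_lineMap_lineMap]
    rw [hpw, Real.dist_eq, show |(0:ℝ) - u₀| = |u₀| by rw [abs_sub_comm]; simp,
      abs_of_nonneg hu₀S.1.1]
    nlinarith [hu₀S.1.2, hd]
  linarith

lemma aux_dist9 {C : Set E3} (hconv : Convex ℝ C) (hclosed : IsClosed C)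
    {p₁ p₂ m : E3} (hp₁ : p₁ ∈ C) (hp₂ : p₂ ∈ C) {t : ℝ} (ht0 : 0 ≤ t) (ht1 : t ≤ 1)
    (hm : m = AffineMap.lineMap p₁ p₂ t) :
    min (Metric.infDist p₁ (intrinsicFrontier ℝ C)) (Metric.infDist p₂ (intrinsicFrontier ℝ C))
      ≤ Metric.infDist m (intrinsicFrontier ℝ C) := by
  rcases Set.eq_empty_or_nonempty (intrinsicFrontier ℝ C) with hne | hne
  · simp [hne]
  set s := min (Metric.infDist p₁ (intrinsicFrontier ℝ C))
    (Metric.infDist p₂ (intrinsicFrontier ℝ C)) with hs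
  by_contra hcon
  push_neg at hcon
  obtain ⟨y, hy, hyd⟩ := (Metric.infDist_lt_iff hne).1 hcon
  -- membership facts
  have hp₁s : p₁ ∈ affineSpan ℝ C := subset_affineSpan ℝ C hp₁
  have hp₂s : p₂ ∈ affineSpan ℝ C := subset_affineSpan ℝ C hp₂
  have hms : m ∈ affineSpan ℝ C := hm ▸ aux_lineMap_mem9 _ hp₁s hp₂s t
  have hys : y ∈ affineSpan ℝ C := by
    obtain ⟨y', _, rfl⟩ := mem_intrinsicFrontier.1 hy
    exact y'.2
  -- every point of the affine span within s of m lies in C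
  have hkey : ∀ w ∈ affineSpan ℝ C, dist w m < s → w ∈ C := by
    intro w hw hwm
    set v : E3 := w - m with hv
    have hvdir : v ∈ (affineSpan ℝ C).direction := by
      have := AffineSubspace.vsub_mem_direction hw hms
      simpa [hv] using this
    have h₁' : p₁ + v ∈ affineSpan ℝ C := by
      have := AffineSubspace.vadd_mem_of_mem_direction hvdir hp₁s
      simpa [add_comm] using this
    have h₂' : p₂ + v ∈ affineSpan ℝ C := by
      have := AffineSubspace.vadd_mem_of_mem_direction hvdir hp₂s
      simpa [add_comm] using this
    have hd₁ : dist p₁ (p₁ + v) < s := by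
      rw [dist_eq_norm]
      have : ‖p₁ - (p₁ + v)‖ = ‖v‖ := by
        rw [show p₁ - (p₁ + v) = -v by abel]; simp
      rw [this]
      have : ‖v‖ = dist w m := by rw [dist_eq_norm, hv]
      rw [this]; exact hwm
    have hd₂ : dist p₂ (p₂ + v) < s := by
      rw [dist_eq_norm]
      have : ‖p₂ - (p₂ + v)‖ = ‖v‖ := by
        rw [show p₂ - (p₂ + v) = -v by abel]; simp
      rw [this]
      have : ‖v‖ = dist w m := by rw [dist_eq_norm, hv]
      rw [this]; exact hwm
    have hc₁ : p₁ + v ∈ C := aux_reach9 hclosed hp₁ h₁'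
      (lt_of_lt_of_le hd₁ (min_le_left _ _))
    have hc₂ : p₂ + v ∈ C := aux_reach9 hclosed hp₂ h₂'
      (lt_of_lt_of_le hd₂ (min_le_right _ _))
    have : w = (1 - t) • (p₁ + v) + t • (p₂ + v) := by
      have hmv : w = m + v := by rw [hv]; abel
      rw [hmv, hm, AffineMap.lineMap_apply]
      simp only [vsub_eq_sub, vadd_eq_add]
      module
    rw [this]
    exact hconv hc₁ hc₂ (by linarith) ht0 (by ring)
  -- y is in the intrinsic interior: contradiction
  have hyint : y ∈ intrinsicInterior ℝ C := by
    refine aux_mem_intrinsicInterior9 hys (ε := s - dist m y) (by linarith) ?_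
    intro q hq hqy
    refine hkey q hq ?_
    calc dist q m ≤ dist q y + dist y m := dist_triangle _ _ _
      _ < (s - dist m y) + dist y m := by linarith
      _ = s := by rw [dist_comm y m]; ring
  exact aux_frontier_inter_interior9 hy hyint

section basis
variable (b : AffineBasis (Fin 4) ℝ (EuclideanSpace ℝ (Fin 3))) (g : Fin 4 → E3)

lemma aux_coord_add9 (hg : ∀ i v, ⟪g i, v⟫ = (b.coord i).linear v) (i : Fin 4) (p v : E3) :
    b.coord i (p + v) = b.coord i p + ⟪g i, v⟫ := by
  have h := (b.coord i).map_vadd p v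
  rw [hg]
  simp only [vadd_eq_add] at h
  rw [add_comm p v, h, add_comm]

lemma aux_gnz9 (hg : ∀ i v, ⟪g i, v⟫ = (b.coord i).linear v) (i : Fin 4) : g i ≠ 0 := by
  intro h0
  obtain ⟨j, hj⟩ : ∃ j : Fin 4, j ≠ i := by
    refine ⟨if i = 0 then 1 else 0, ?_⟩
    split_ifs with h
    · subst h; decide
    · exact fun he => h he.symm
  have h1 : ⟪g i, b i - b j⟫ = 1 := by
    rw [hg]
    have h2 := (b.coord i).linearMap_vsub (b i) (b j)
    simp only [vsub_eq_sub] at h2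
    rw [h2, b.coord_apply_eq, b.coord_apply_ne hj.symm]
    ring
  rw [h0, inner_zero_left] at h1
  norm_num at h1

lemma aux_ball_iff9 (hg : ∀ i v, ⟪g i, v⟫ = (b.coord i).linear v) {z : E3} {r : ℝ} (hr : 0 ≤ r) :
    Metric.closedBall z r ⊆ convexHull ℝ (Set.range ⇑b) ↔ ∀ i, r * ‖g i‖ ≤ b.coord i z := by
  rw [b.convexHull_eq_nonneg_coord]
  constructor
  · intro h i
    have hgi : 0 < ‖g i‖ := norm_pos_iff.2 (aux_gnz9 b g hg i)
    have hmem : z + (-(r / ‖g i‖)) • g i ∈ Metric.closedBall z r := by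
      rw [Metric.mem_closedBall, dist_eq_norm,
        show z + (-(r / ‖g i‖)) • g i - z = (-(r / ‖g i‖)) • g i by module,
        norm_smul, Real.norm_eq_abs, abs_neg, abs_of_nonneg (by positivity),
        div_mul_cancel₀ _ hgi.ne']
    have h2 := h hmem i
    rw [aux_coord_add9 b g hg, real_inner_smul_right, hg, ← hg] at h2
    have h3 : ⟪g i, g i⟫ = ‖g i‖ ^ 2 := real_inner_self_eq_norm_sq _
    rw [h3] at h2
    have h4 : -(r / ‖g i‖) * ‖g i‖ ^ 2 = -(r * ‖g i‖) := by field_simp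
    rw [h4] at h2
    linarith
  · intro h p hp i
    have h2 : b.coord i p = b.coord i z + ⟪g i, p - z⟫ := by
      have := aux_coord_add9 b g hg i z (p - z)
      rwa [show z + (p - z) = p by abel] at this
    have h3 : |⟪g i, p - z⟫| ≤ ‖g i‖ * ‖p - z‖ := abs_real_inner_le_norm _ _
    have h4 : ‖p - z‖ ≤ r := by
      rw [← dist_eq_norm]; exact Metric.mem_closedBall.1 hp
    have h5 := h i
    have h6 := abs_le.1 h3
    have hn : 0 ≤ ‖g i‖ := norm_nonneg _
    show (0:ℝ) ≤ b.coord i p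
    nlinarith [h6.1]

lemma aux_incenter9 (hg : ∀ i v, ⟪g i, v⟫ = (b.coord i).linear v) {z : E3} {r : ℝ}
    (hball : Metric.closedBall z r ⊆ convexHull ℝ (Set.range ⇑b))
    (hmax : ∀ z' r', Metric.closedBall z' r' ⊆ convexHull ℝ (Set.range ⇑b) → r' ≤ r) :
    0 < r ∧ ∀ i, b.coord i z = r * ‖g i‖ := by
  classical
  set c := Finset.univ.centroid ℝ ⇑b with hc
  have hcoordc : ∀ i, b.coord i c = 1/4 := by
    intro i
    rw [hc, b.coord_apply_centroid (Finset.mem_univ i)]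
    norm_num
  set ρ : ℝ := Finset.univ.inf' (⟨0, Finset.mem_univ 0⟩ : (Finset.univ : Finset (Fin 4)).Nonempty) (fun i => (1/4) / (‖g i‖ + 1)) with hρ
  have hρpos : 0 < ρ := by
    rw [hρ]; apply (Finset.lt_inf'_iff ..).2
    intro i _
    positivity
  have hρball : Metric.closedBall c ρ ⊆ convexHull ℝ (Set.range ⇑b) := by
    rw [aux_ball_iff9 b g hg hρpos.le]
    intro i
    have h1 : ρ ≤ (1/4) / (‖g i‖ + 1) := by
      rw [hρ]; exact Finset.inf'_le _ (Finset.mem_univ i)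
    rw [hcoordc i]
    have hn : 0 ≤ ‖g i‖ := norm_nonneg _
    have h2 : ρ * (‖g i‖ + 1) ≤ 1/4 := by
      rw [← le_div_iff₀ (by positivity)]; exact h1
    nlinarith [hρpos]
  have hrρ : ρ ≤ r := hmax c ρ hρball
  have hr : 0 < r := lt_of_lt_of_le hρpos hrρ
  refine ⟨hr, fun i => ?_⟩
  have hge : ∀ j, r * ‖g j‖ ≤ b.coord j z := (aux_ball_iff9 b g hg hr.le).1 hball
  by_contra hne
  have hgt : r * ‖g i‖ < b.coord i z := lt_of_le_of_ne (hge i) (fun h => hne h.symm)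
  set Δ := b.coord i z - r * ‖g i‖ with hΔ
  have hΔpos : 0 < Δ := by rw [hΔ]; linarith
  set t := min Δ 1 with ht
  have ht0 : 0 < t := lt_min hΔpos one_pos
  have ht1 : t ≤ Δ := min_le_left _ _
  set z' := z + t • (z - b i) with hz'
  have hball' : Metric.closedBall z' ((1+t)*r) ⊆ convexHull ℝ (Set.range ⇑b) := by
    rw [aux_ball_iff9 b g hg (by positivity)]
    intro j
    have hcoordz' : b.coord j z' = b.coord j z + t * (b.coord j z - b.coord j (b i)) := by
      rw [hz', aux_coord_add9 b g hg, real_inner_smul_right, hg]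
      have h2 := (b.coord j).linearMap_vsub z (b i)
      simp only [vsub_eq_sub] at h2
      rw [h2]
    by_cases hji : j = i
    · subst hji
      rw [hcoordz', b.coord_apply_eq]
      have hcz : b.coord j z = r * ‖g j‖ + Δ := by rw [hΔ]; ring
      rw [hcz]
      nlinarith [hΔpos, ht0, ht1, hr, norm_nonneg (g j)]
    · rw [hcoordz', b.coord_apply_ne hji]
      nlinarith [hge j, ht0]
  have := hmax z' ((1+t)*r) hball'
  nlinarith [ht0, hr]

lemma aux_foot9 (hg : ∀ i v, ⟪g i, v⟫ = (b.coord i).linear v) (i₀ : Fin 4) {z z₀ : E3} {r : ℝ} (hr : 0 < r)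
    (htight : ∀ i, b.coord i z = r * ‖g i‖)
    (h0 : b.coord i₀ z₀ = 0)
    (hperp : ∀ u : E3, ⟪g i₀, u⟫ = 0 → ⟪z - z₀, u⟫ = 0) :
    ∀ j, j ≠ i₀ → 0 < b.coord j z₀ := by
  have hn : 0 < ‖g i₀‖ := norm_pos_iff.2 (aux_gnz9 b g hg i₀)
  set c : ℝ := ⟪z - z₀, g i₀⟫ / (‖g i₀‖^2) with hc
  have hw : z - z₀ = c • g i₀ := by
    set w := z - z₀ - c • g i₀ with hwdef
    have hwperp : ⟪g i₀, w⟫ = 0 := by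
      rw [hwdef, inner_sub_right, real_inner_smul_right, real_inner_self_eq_norm_sq,
        real_inner_comm, hc]
      field_simp
      ring
    have h1 : ⟪z - z₀, w⟫ = 0 := hperp w hwperp
    have h2 : ⟪c • g i₀, w⟫ = (0:ℝ) := by
      rw [real_inner_smul_left, real_inner_comm] at *
      rw [hwperp]; ring
    have h3 : ⟪w, w⟫ = (0:ℝ) := by
      have h4 : (⟪z - z₀, w⟫ - ⟪c • g i₀, w⟫ : ℝ) = ⟪w, w⟫ := by
        rw [← inner_sub_left, hwdef]
      rw [← h4, h1, h2]; ring
    have h5 : w = 0 := inner_self_eq_zero.1 h3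
    rw [hwdef, sub_eq_zero] at h5
    exact h5
  have hcval : c = r / ‖g i₀‖ := by
    have h1 : b.coord i₀ z = b.coord i₀ z₀ + ⟪g i₀, z - z₀⟫ := by
      have := aux_coord_add9 b g hg i₀ z₀ (z - z₀)
      rwa [show z₀ + (z - z₀) = z by abel] at this
    rw [h0, htight i₀, hw, real_inner_smul_right, real_inner_self_eq_norm_sq] at h1
    have h2 : r * ‖g i₀‖ = c * ‖g i₀‖ ^ 2 := by linarith
    field_simp
    nlinarith [h2]
  intro j hj
  have hnj : 0 < ‖g j‖ := norm_pos_iff.2 (aux_gnz9 b g hg j)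
  have h1 : b.coord j z = b.coord j z₀ + ⟪g j, z - z₀⟫ := by
    have := aux_coord_add9 b g hg j z₀ (z - z₀)
    rwa [show z₀ + (z - z₀) = z by abel] at this
  have hcs : ⟪g j, g i₀⟫ < ‖g j‖ * ‖g i₀‖ := by
    rw [inner_lt_norm_mul_iff_real]
    intro heq
    have e1 : ⟪g j, b j - b i₀⟫ = 1 := by
      rw [hg]
      have h2 := (b.coord j).linearMap_vsub (b j) (b i₀)
      simp only [vsub_eq_sub] at h2
      rw [h2, b.coord_apply_eq, b.coord_apply_ne hj]
      ring
    have e2 : ⟪g i₀, b j - b i₀⟫ = -1 := by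
      rw [hg]
      have h2 := (b.coord i₀).linearMap_vsub (b j) (b i₀)
      simp only [vsub_eq_sub] at h2
      rw [h2, b.coord_apply_eq, b.coord_apply_ne (Ne.symm hj)]
      ring
    have h3 := congrArg (fun v : E3 => (⟪v, b j - b i₀⟫ : ℝ)) heq
    simp only [real_inner_smul_left] at h3
    rw [e1, e2] at h3
    nlinarith [hn, hnj]
  rw [htight j, hw, real_inner_smul_right] at h1
  have h2 : b.coord j z₀ = r * ‖g j‖ - c * ⟪g j, g i₀⟫ := by linarith
  rw [h2, hcval]
  have h3 : r / ‖g i₀‖ * ⟪g j, g i₀⟫ < r / ‖g i₀‖ * (‖g j‖ * ‖g i₀‖) :=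
    mul_lt_mul_of_pos_left hcs (by positivity)
  have h4 : r / ‖g i₀‖ * (‖g j‖ * ‖g i₀‖) = r * ‖g j‖ := by field_simp
  linarith

lemma aux_mem_hull9 (i₀ : Fin 4) {s : Set E3} (hbs : ∀ j, j ≠ i₀ → b j ∈ s)
    {q : E3} (hq0 : b.coord i₀ q = 0) (hqpos : ∀ j, 0 ≤ b.coord j q) :
    q ∈ convexHull ℝ s := by
  classical
  set w : Fin 4 → ℝ := fun i => b.coord i q with hwdef
  have hsum : ∑ i, w i = 1 := b.sum_coord_apply_eq_one q
  have hcomb : Finset.univ.affineCombination ℝ ⇑b w = q := b.affineCombination_coord_eq_self q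
  have hind : Set.indicator ↑(Finset.univ.erase i₀) w = w := by
    funext i
    by_cases hi : i = i₀
    · subst hi
      rw [Set.indicator_of_notMem (by simp)]
      exact hq0.symm
    · rw [Set.indicator_of_mem (by simp [hi])]
  have herase : (Finset.univ.erase i₀).affineCombination ℝ ⇑b w = q := by
    rw [Finset.affineCombination_indicator_subset w ⇑b (Finset.subset_univ _), hind, hcomb]
  have hsum' : ∑ i ∈ Finset.univ.erase i₀, w i = 1 := by
    have hw0 : w i₀ = 0 := hq0
    rw [Finset.sum_erase Finset.univ hw0]
    exact hsum
  rw [← herase, affineCombination_eq_centerMass hsum']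
  exact Finset.centerMass_mem_convexHull _ (fun i _ => hqpos i) (by rw [hsum']; norm_num)
    (fun i hi => hbs i (Finset.ne_of_mem_erase hi))

lemma aux_interior9 (hg : ∀ i v, ⟪g i, v⟫ = (b.coord i).linear v) (i₀ : Fin 4) {s : Set E3}
    (hbs : ∀ j, j ≠ i₀ → b j ∈ s)
    (hspan0 : ∀ p ∈ affineSpan ℝ s, b.coord i₀ p = 0)
    {q : E3} (hq : q ∈ affineSpan ℝ s) (hqpos : ∀ j, j ≠ i₀ → 0 < b.coord j q) :
    q ∈ intrinsicInterior ℝ (convexHull ℝ s) := by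
  classical
  have hspan : affineSpan ℝ (convexHull ℝ s) = affineSpan ℝ s := affineSpan_convexHull s
  set ε : ℝ := Finset.univ.inf' (⟨0, Finset.mem_univ 0⟩ : (Finset.univ : Finset (Fin 4)).Nonempty)
    (fun j => if j = i₀ then 1 else b.coord j q / (‖g j‖ + 1)) with hε
  have hεpos : 0 < ε := by
    rw [hε]; apply (Finset.lt_inf'_iff ..).2
    intro j _
    split_ifs with h
    · exact one_pos
    · exact div_pos (hqpos j h) (by positivity)
  apply aux_mem_intrinsicInterior9 (by rw [hspan]; exact hq) hεpos
  intro q' hq' hd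
  rw [hspan] at hq'
  have h0' : b.coord i₀ q' = 0 := hspan0 q' hq'
  apply aux_mem_hull9 b i₀ hbs h0'
  intro j
  by_cases hj : j = i₀
  · rw [hj, h0']
  · have hle : ε ≤ b.coord j q / (‖g j‖ + 1) := by
      have h1 := Finset.inf'_le (fun j => if j = i₀ then (1:ℝ) else b.coord j q / (‖g j‖ + 1))
        (Finset.mem_univ j)
      rw [if_neg hj] at h1
      exact h1
    have hcd : b.coord j q' = b.coord j q + ⟪g j, q' - q⟫ := by
      have := aux_coord_add9 b g hg j q (q' - q)
      rwa [show q + (q' - q) = q' by abel] at this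
    have habs : |⟪g j, q' - q⟫| ≤ ‖g j‖ * ‖q' - q‖ := abs_real_inner_le_norm _ _
    have hnq : ‖q' - q‖ < b.coord j q / (‖g j‖ + 1) := by
      rw [← dist_eq_norm]
      exact lt_of_lt_of_le hd hle
    have h6 := abs_le.1 habs
    have hn : 0 ≤ ‖g j‖ := norm_nonneg _
    have hpos := hqpos j hj
    have hD : b.coord j q / (‖g j‖ + 1) * (‖g j‖ + 1) = b.coord j q :=
      div_mul_cancel₀ _ (by positivity)
    rw [hcd]
    nlinarith [h6.1, hnq, hn, hpos, hD, norm_nonneg (q' - q)]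
end basis

/-- Let `T₁ = [x₁,x₂,x₃,x₄]` and `T₂ = [x₁,x₃,x₄,x₅]` be two nondegenerate
tetrahedra in `ℝ³` sharing the common face `F₀ = [x₁,x₃,x₄]` and lying on opposite sides of
the plane of `F₀`.  Let `z_i` be the incenter of `T_i` (center of the largest closed ball
contained in `T_i`) and `z_{i,0}` the orthogonal projection of `z_i` onto the plane containing
`F₀`, for `i = 1,2`.  Then `z_{1,0}` and `z_{2,0}` lie in the relative interior of `F₀`, the
segment `[z₁, z₂]` intersects `F₀` in a single point `m₀` which lies on the segment
`[z_{1,0}, z_{2,0}]`, and `dist(m₀, ∂F₀) ≥ min(dist(z_{1,0}, ∂F₀), dist(z_{2,0}, ∂F₀))`. -/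
theorem split_point_dist_boundary_ge_min
    (x₁ x₂ x₃ x₄ x₅ : EuclideanSpace ℝ (Fin 3))
    (h₁ : AffineIndependent ℝ ![x₁, x₂, x₃, x₄])
    (h₂ : AffineIndependent ℝ ![x₁, x₃, x₄, x₅])
    (T₁ T₂ F₀ : Set (EuclideanSpace ℝ (Fin 3)))
    (hT₁ : T₁ = convexHull ℝ {x₁, x₂, x₃, x₄})
    (hT₂ : T₂ = convexHull ℝ {x₁, x₃, x₄, x₅})
    (hF₀ : F₀ = convexHull ℝ {x₁, x₃, x₄})
    (hopp : (affineSpan ℝ ({x₁, x₃, x₄} : Set (EuclideanSpace ℝ (Fin 3)))).SOppSide x₂ x₅)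
    (z₁ z₂ : EuclideanSpace ℝ (Fin 3)) (r₁ r₂ : ℝ)
    (hball₁ : Metric.closedBall z₁ r₁ ⊆ T₁)
    (hmax₁ : ∀ (z' : EuclideanSpace ℝ (Fin 3)) (r' : ℝ),
      Metric.closedBall z' r' ⊆ T₁ → r' ≤ r₁)
    (hball₂ : Metric.closedBall z₂ r₂ ⊆ T₂)
    (hmax₂ : ∀ (z' : EuclideanSpace ℝ (Fin 3)) (r' : ℝ),
      Metric.closedBall z' r' ⊆ T₂ → r' ≤ r₂)
    (z₁₀ z₂₀ : EuclideanSpace ℝ (Fin 3))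
    (hz₁₀mem : z₁₀ ∈ affineSpan ℝ ({x₁, x₃, x₄} : Set (EuclideanSpace ℝ (Fin 3))))
    (hz₁₀perp : ∀ p ∈ affineSpan ℝ ({x₁, x₃, x₄} : Set (EuclideanSpace ℝ (Fin 3))),
      ⟪z₁ - z₁₀, p - z₁₀⟫ = 0)
    (hz₂₀mem : z₂₀ ∈ affineSpan ℝ ({x₁, x₃, x₄} : Set (EuclideanSpace ℝ (Fin 3))))
    (hz₂₀perp : ∀ p ∈ affineSpan ℝ ({x₁, x₃, x₄} : Set (EuclideanSpace ℝ (Fin 3))),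
      ⟪z₂ - z₂₀, p - z₂₀⟫ = 0) :
    z₁₀ ∈ intrinsicInterior ℝ F₀ ∧ z₂₀ ∈ intrinsicInterior ℝ F₀ ∧
    ∃ m₀ : EuclideanSpace ℝ (Fin 3),
      segment ℝ z₁ z₂ ∩ F₀ = {m₀} ∧
      m₀ ∈ segment ℝ z₁₀ z₂₀ ∧
      min (Metric.infDist z₁₀ (intrinsicFrontier ℝ F₀))
          (Metric.infDist z₂₀ (intrinsicFrontier ℝ F₀)) ≤
        Metric.infDist m₀ (intrinsicFrontier ℝ F₀) := by
  classical
  have hfr : Module.finrank ℝ (EuclideanSpace ℝ (Fin 3)) = 3 := finrank_euclideanSpace_fin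
  have hset₁ : Set.range ![x₁, x₂, x₃, x₄] = {x₁, x₂, x₃, x₄} := by
    simp only [Matrix.range_cons, Matrix.range_empty, Set.union_empty, Set.union_singleton]
    ext y; simp; tauto
  have hset₂ : Set.range ![x₁, x₃, x₄, x₅] = {x₁, x₃, x₄, x₅} := by
    simp only [Matrix.range_cons, Matrix.range_empty, Set.union_empty, Set.union_singleton]
    ext y; simp; tauto
  have hsetS : Set.range ![x₁, x₃, x₄] = {x₁, x₃, x₄} := by
    simp only [Matrix.range_cons, Matrix.range_empty, Set.union_empty, Set.union_singleton]
    ext y; simp; tauto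
  -- the two affine bases
  set b₁ : AffineBasis (Fin 4) ℝ (EuclideanSpace ℝ (Fin 3)) :=
    ⟨![x₁, x₂, x₃, x₄], h₁, by
      rw [h₁.affineSpan_eq_top_iff_card_eq_finrank_add_one]; simp [hfr]⟩ with hb₁def
  set b₂ : AffineBasis (Fin 4) ℝ (EuclideanSpace ℝ (Fin 3)) :=
    ⟨![x₁, x₃, x₄, x₅], h₂, by
      rw [h₂.affineSpan_eq_top_iff_card_eq_finrank_add_one]; simp [hfr]⟩ with hb₂def
  have hb₁fun : ⇑b₁ = ![x₁, x₂, x₃, x₄] := rfl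
  have hb₂fun : ⇑b₂ = ![x₁, x₃, x₄, x₅] := rfl
  -- gradient vectors
  set g₁ : Fin 4 → EuclideanSpace ℝ (Fin 3) := fun i =>
    (InnerProductSpace.toDual ℝ _).symm ((b₁.coord i).linear.toContinuousLinearMap) with hg₁def
  set g₂ : Fin 4 → EuclideanSpace ℝ (Fin 3) := fun i =>
    (InnerProductSpace.toDual ℝ _).symm ((b₂.coord i).linear.toContinuousLinearMap) with hg₂def
  have hg₁ : ∀ i v, ⟪g₁ i, v⟫ = (b₁.coord i).linear v := fun i v =>
    InnerProductSpace.toDual_symm_apply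
  have hg₂ : ∀ i v, ⟪g₂ i, v⟫ = (b₂.coord i).linear v := fun i v =>
    InnerProductSpace.toDual_symm_apply
  -- hull descriptions
  have hT₁' : T₁ = convexHull ℝ (Set.range ⇑b₁) := by rw [hT₁, hb₁fun, hset₁]
  have hT₂' : T₂ = convexHull ℝ (Set.range ⇑b₂) := by rw [hT₂, hb₂fun, hset₂]
  obtain ⟨hr₁pos, htight₁⟩ := aux_incenter9 b₁ g₁ hg₁ (z := z₁) (r := r₁)
    (by rw [← hT₁']; exact hball₁) (fun z' r' h => hmax₁ z' r' (by rwa [hT₁']))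
  obtain ⟨hr₂pos, htight₂⟩ := aux_incenter9 b₂ g₂ hg₂ (z := z₂) (r := r₂)
    (by rw [← hT₂']; exact hball₂) (fun z' r' h => hmax₂ z' r' (by rwa [hT₂']))
  -- the common plane
  set S := affineSpan ℝ ({x₁, x₃, x₄} : Set (EuclideanSpace ℝ (Fin 3))) with hSdef
  -- coordinate values on generators
  have e11 : b₁.coord 1 x₁ = 0 := by
    have h : x₁ = b₁ 0 := rfl
    rw [h, b₁.coord_apply_ne (by decide)]
  have e13 : b₁.coord 1 x₃ = 0 := by
    have h : x₃ = b₁ 2 := rfl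
    rw [h, b₁.coord_apply_ne (by decide)]
  have e14 : b₁.coord 1 x₄ = 0 := by
    have h : x₄ = b₁ 3 := rfl
    rw [h, b₁.coord_apply_ne (by decide)]
  have e12 : b₁.coord 1 x₂ = 1 := by
    have h : x₂ = b₁ 1 := rfl
    rw [h, b₁.coord_apply_eq]
  have e21 : b₂.coord 3 x₁ = 0 := by
    have h : x₁ = b₂ 0 := rfl
    rw [h, b₂.coord_apply_ne (by decide)]
  have e23 : b₂.coord 3 x₃ = 0 := by
    have h : x₃ = b₂ 1 := rfl
    rw [h, b₂.coord_apply_ne (by decide)]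
  have e24 : b₂.coord 3 x₄ = 0 := by
    have h : x₄ = b₂ 2 := rfl
    rw [h, b₂.coord_apply_ne (by decide)]
  have e25 : b₂.coord 3 x₅ = 1 := by
    have h : x₅ = b₂ 3 := rfl
    rw [h, b₂.coord_apply_eq]
  -- the two coordinates vanish on S
  have hspan0₁ : ∀ p ∈ S, b₁.coord 1 p = 0 := by
    intro p hp
    have hle : S ≤ auxZeroSet9 (b₁.coord 1) := by
      apply affineSpan_le.2
      rintro p hp
      simp only [Set.mem_insert_iff, Set.mem_singleton_iff] at hp
      rcases hp with rfl | rfl | rfl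
      · exact (aux_mem_zeroSet9' _ _).2 e11
      · exact (aux_mem_zeroSet9' _ _).2 e13
      · exact (aux_mem_zeroSet9' _ _).2 e14
    exact (aux_mem_zeroSet9 _ _).1 (hle hp)
  have hspan0₂ : ∀ p ∈ S, b₂.coord 3 p = 0 := by
    intro p hp
    have hle : S ≤ auxZeroSet9 (b₂.coord 3) := by
      apply affineSpan_le.2
      rintro p hp
      simp only [Set.mem_insert_iff, Set.mem_singleton_iff] at hp
      rcases hp with rfl | rfl | rfl
      · exact (aux_mem_zeroSet9' _ _).2 e21
      · exact (aux_mem_zeroSet9' _ _).2 e23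
      · exact (aux_mem_zeroSet9' _ _).2 e24
    exact (aux_mem_zeroSet9 _ _).1 (hle hp)
  -- dimension of the direction of S
  have h₃ind : AffineIndependent ℝ ![x₁, x₃, x₄] := by
    have h := h₂.comp_embedding (⟨![0, 1, 2], by decide⟩ : Fin 3 ↪ Fin 4)
    convert h using 1
    funext i
    fin_cases i <;> rfl
  have hdim2 : Module.finrank ℝ S.direction = 2 := by
    rw [hSdef, direction_affineSpan, ← hsetS]
    exact h₃ind.finrank_vectorSpan (by simp)
  -- kernels
  have hker : ∀ (f : (EuclideanSpace ℝ (Fin 3)) →ᵃ[ℝ] ℝ),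
      (∀ p ∈ S, f p = 0) → (∃ v, f.linear v = 1) →
      S.direction = LinearMap.ker f.linear := by
    intro f hf ⟨v, hv⟩
    have hle : S.direction ≤ LinearMap.ker f.linear := by
      rw [hSdef, direction_affineSpan, vectorSpan_def]
      apply Submodule.span_le.2
      rintro u ⟨p, hp, q, hq, rfl⟩
      simp only [SetLike.mem_coe, LinearMap.mem_ker, vsub_eq_sub]
      have h2 := f.linearMap_vsub p q
      simp only [vsub_eq_sub] at h2
      rw [h2, hf p (subset_affineSpan _ _ hp), hf q (subset_affineSpan _ _ hq)]
      simp
    have hrange : LinearMap.range f.linear = ⊤ :=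
      LinearMap.range_eq_top.2 (fun a => ⟨a • v, by rw [map_smul, hv, smul_eq_mul, mul_one]⟩)
    have hkerdim : Module.finrank ℝ (LinearMap.ker f.linear) = 2 := by
      have hh := f.linear.finrank_range_add_finrank_ker
      rw [hrange, finrank_top, hfr] at hh
      simp only [Module.finrank_self] at hh
      omega
    exact Submodule.eq_of_le_of_finrank_eq hle (by rw [hdim2, hkerdim])
  have hker₁ : S.direction = LinearMap.ker (b₁.coord 1).linear := by
    apply hker _ hspan0₁
    refine ⟨x₂ - x₁, ?_⟩
    have h2 := (b₁.coord 1).linearMap_vsub x₂ x₁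
    simp only [vsub_eq_sub] at h2
    rw [h2, e12, e11]; ring
  have hker₂ : S.direction = LinearMap.ker (b₂.coord 3).linear := by
    apply hker _ hspan0₂
    refine ⟨x₅ - x₁, ?_⟩
    have h2 := (b₂.coord 3).linearMap_vsub x₅ x₁
    simp only [vsub_eq_sub] at h2
    rw [h2, e25, e21]; ring
  -- perpendicularity of z_i - z_{i0} to the direction of S
  have hperpdir₁ : ∀ u ∈ S.direction, ⟪z₁ - z₁₀, u⟫ = 0 := by
    intro u hu
    have humem : u +ᵥ z₁₀ ∈ S := AffineSubspace.vadd_mem_of_mem_direction hu hz₁₀mem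
    have h3 := hz₁₀perp _ humem
    rwa [show (u +ᵥ z₁₀) - z₁₀ = u by simp [vadd_eq_add]] at h3
  have hperpdir₂ : ∀ u ∈ S.direction, ⟪z₂ - z₂₀, u⟫ = 0 := by
    intro u hu
    have humem : u +ᵥ z₂₀ ∈ S := AffineSubspace.vadd_mem_of_mem_direction hu hz₂₀mem
    have h3 := hz₂₀perp _ humem
    rwa [show (u +ᵥ z₂₀) - z₂₀ = u by simp [vadd_eq_add]] at h3
  -- the feet have positive coordinates
  have hfoot₁ : ∀ j, j ≠ 1 → 0 < b₁.coord j z₁₀ := by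
    apply aux_foot9 b₁ g₁ hg₁ 1 hr₁pos htight₁ (hspan0₁ _ hz₁₀mem)
    intro u hu
    apply hperpdir₁
    rw [hker₁, LinearMap.mem_ker, ← hg₁]
    exact hu
  have hfoot₂ : ∀ j, j ≠ 3 → 0 < b₂.coord j z₂₀ := by
    apply aux_foot9 b₂ g₂ hg₂ 3 hr₂pos htight₂ (hspan0₂ _ hz₂₀mem)
    intro u hu
    apply hperpdir₂
    rw [hker₂, LinearMap.mem_ker, ← hg₂]
    exact hu
  -- feet lie in the intrinsic interior of F₀
  have hz₁₀int : z₁₀ ∈ intrinsicInterior ℝ F₀ := by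
    rw [hF₀]
    refine aux_interior9 b₁ g₁ hg₁ 1 ?_ hspan0₁ hz₁₀mem hfoot₁
    intro j hj
    fin_cases j
    · show x₁ ∈ _; simp
    · exact absurd rfl hj
    · show x₃ ∈ _; simp
    · show x₄ ∈ _; simp
  have hz₂₀int : z₂₀ ∈ intrinsicInterior ℝ F₀ := by
    rw [hF₀]
    refine aux_interior9 b₂ g₂ hg₂ 3 ?_ hspan0₂ hz₂₀mem hfoot₂
    intro j hj
    fin_cases j
    · show x₁ ∈ _; simp
    · show x₃ ∈ _; simp
    · show x₄ ∈ _; simp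
    · exact absurd rfl hj
  -- signed values of the coordinate functional b₁.coord 1 at z₁ and z₂
  have hl₁pos : 0 < b₁.coord 1 z₁ := by
    rw [htight₁ 1]
    exact mul_pos hr₁pos (norm_pos_iff.2 (aux_gnz9 b₁ g₁ hg₁ 1))
  have hx₅neg : b₁.coord 1 x₅ < 0 := by
    obtain ⟨⟨p₁', hp₁', p₂', hp₂', hray⟩, hx₂S, hx₅S⟩ := hopp
    rcases hray with h | h | ⟨a, c, ha, hc, heq⟩
    · exfalso; apply hx₂S; rw [vsub_eq_zero_iff_eq] at h; rw [h]; exact hp₁'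
    · exfalso; apply hx₅S; rw [vsub_eq_zero_iff_eq] at h; rw [← h]; exact hp₂'
    · have happ := congrArg (b₁.coord 1).linear heq
      rw [map_smul, map_smul, (b₁.coord 1).linearMap_vsub, (b₁.coord 1).linearMap_vsub] at happ
      rw [show ((b₁.coord 1) x₂ -ᵥ (b₁.coord 1) p₁') = (b₁.coord 1) x₂ - (b₁.coord 1) p₁'
        from rfl] at happ
      rw [show ((b₁.coord 1) p₂' -ᵥ (b₁.coord 1) x₅) = (b₁.coord 1) p₂' - (b₁.coord 1) x₅
        from rfl] at happ
      rw [e12, hspan0₁ p₁' hp₁', hspan0₁ p₂' hp₂'] at happ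
      simp only [smul_eq_mul] at happ
      by_contra hw
      push_neg at hw
      nlinarith [mul_nonneg hc.le hw]
  have hl₂neg : b₁.coord 1 z₂ < 0 := by
    have hsum : ∑ i, b₂.coord i z₂ = 1 := b₂.sum_coord_apply_eq_one z₂
    have hcomb := b₂.affineCombination_coord_eq_self z₂
    have hmap := Finset.univ.map_affineCombination ⇑b₂ (fun i => b₂.coord i z₂) hsum (b₁.coord 1)
    rw [hcomb, Finset.univ.affineCombination_eq_linear_combination _ _ hsum,
      Fin.sum_univ_four] at hmap
    have c0 : ((⇑(b₁.coord 1)) ∘ ⇑b₂) 0 = 0 := e11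
    have c1 : ((⇑(b₁.coord 1)) ∘ ⇑b₂) 1 = 0 := e13
    have c2 : ((⇑(b₁.coord 1)) ∘ ⇑b₂) 2 = 0 := e14
    have c3 : ((⇑(b₁.coord 1)) ∘ ⇑b₂) 3 = b₁.coord 1 x₅ := rfl
    rw [c0, c1, c2, c3] at hmap
    simp only [smul_eq_mul, mul_zero, zero_add, add_zero] at hmap
    rw [hmap, htight₂ 3]
    exact mul_neg_of_pos_of_neg
      (mul_pos hr₂pos (norm_pos_iff.2 (aux_gnz9 b₂ g₂ hg₂ 3))) hx₅neg
  -- the crossing point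
  have hden : 0 < b₁.coord 1 z₁ - b₁.coord 1 z₂ := by linarith
  set t : ℝ := b₁.coord 1 z₁ / (b₁.coord 1 z₁ - b₁.coord 1 z₂) with htdef
  have ht0 : 0 < t := div_pos hl₁pos hden
  have ht1 : t < 1 := (div_lt_one hden).2 (by linarith)
  set m₀ : EuclideanSpace ℝ (Fin 3) := z₁ + t • (z₂ - z₁) with hm₀def
  have hlval : ∀ u : ℝ, b₁.coord 1 (z₁ + u • (z₂ - z₁)) =
      b₁.coord 1 z₁ + u * (b₁.coord 1 z₂ - b₁.coord 1 z₁) := by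
    intro u
    rw [aux_coord_add9 b₁ g₁ hg₁, real_inner_smul_right, hg₁]
    have h2 := (b₁.coord 1).linearMap_vsub z₂ z₁
    simp only [vsub_eq_sub] at h2
    rw [h2]
  have hts : b₁.coord 1 z₁ + t * (b₁.coord 1 z₂ - b₁.coord 1 z₁) = 0 := by
    rw [htdef]
    field_simp
    ring
  have hlm₀ : b₁.coord 1 m₀ = 0 := by rw [hm₀def, hlval]; exact hts
  set m' : EuclideanSpace ℝ (Fin 3) := z₁₀ + t • (z₂₀ - z₁₀) with hm'def
  have hm'S : m' ∈ S := by
    have h3 := S.smul_vsub_vadd_mem t hz₂₀mem hz₁₀mem hz₁₀mem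
    rwa [show t • (z₂₀ -ᵥ z₁₀) +ᵥ z₁₀ = m' by
      rw [hm'def]; simp only [vsub_eq_sub, vadd_eq_add]; abel] at h3
  have hlm' : b₁.coord 1 m' = 0 := hspan0₁ _ hm'S
  have hvker : (b₁.coord 1).linear (m₀ - m') = 0 := by
    have h2 := (b₁.coord 1).linearMap_vsub m₀ m'
    simp only [vsub_eq_sub] at h2
    rw [h2, hlm₀, hlm']
    ring
  have hvdir : m₀ - m' ∈ S.direction := by rw [hker₁]; exact LinearMap.mem_ker.2 hvker
  have hv : m₀ - m' = (1 - t) • (z₁ - z₁₀) + t • (z₂ - z₂₀) := by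
    rw [hm₀def, hm'def]; module
  have hvperp : ⟪m₀ - m', m₀ - m'⟫ = (0:ℝ) := by
    have hq1 : ⟪z₁ - z₁₀, m₀ - m'⟫ = (0:ℝ) := hperpdir₁ _ hvdir
    have hq2 : ⟪z₂ - z₂₀, m₀ - m'⟫ = (0:ℝ) := hperpdir₂ _ hvdir
    nth_rewrite 1 [hv]
    rw [inner_add_left, real_inner_smul_left, real_inner_smul_left, hq1, hq2]
    ring
  have hm₀m' : m₀ = m' := by
    have h0 : m₀ - m' = 0 := inner_self_eq_zero.1 hvperp
    have := sub_eq_zero.1 h0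
    exact this
  -- membership facts
  have hz₁₀F : z₁₀ ∈ F₀ := intrinsicInterior_subset hz₁₀int
  have hz₂₀F : z₂₀ ∈ F₀ := intrinsicInterior_subset hz₂₀int
  have hFconv : Convex ℝ F₀ := by rw [hF₀]; exact convex_convexHull ℝ _
  have hm₀seg2 : m₀ ∈ segment ℝ z₁₀ z₂₀ := by
    rw [segment_eq_image']
    refine ⟨t, ⟨ht0.le, ht1.le⟩, ?_⟩
    show z₁₀ + t • (z₂₀ - z₁₀) = m₀
    rw [← hm'def]
    exact hm₀m'.symm
  have hm₀F : m₀ ∈ F₀ := hFconv.segment_subset hz₁₀F hz₂₀F hm₀seg2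
  have hm₀seg1 : m₀ ∈ segment ℝ z₁ z₂ := by
    rw [segment_eq_image']
    refine ⟨t, ⟨ht0.le, ht1.le⟩, ?_⟩
    show z₁ + t • (z₂ - z₁) = m₀
    exact hm₀def.symm
  have hF₀sub : ∀ q ∈ F₀, b₁.coord 1 q = 0 := by
    intro q hq
    rw [hF₀] at hq
    exact hspan0₁ q (convexHull_subset_affineSpan _ hq)
  have hseg_eq : segment ℝ z₁ z₂ ∩ F₀ = {m₀} := by
    apply Set.eq_singleton_iff_unique_mem.2
    refine ⟨⟨hm₀seg1, hm₀F⟩, ?_⟩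
    rintro q ⟨hqseg, hqF⟩
    rw [segment_eq_image'] at hqseg
    obtain ⟨u, ⟨hu0, hu1⟩, rfl⟩ := hqseg
    have h0 : b₁.coord 1 (z₁ + u • (z₂ - z₁)) = 0 := hF₀sub _ hqF
    rw [hlval] at h0
    have hmul : (u - t) * (b₁.coord 1 z₂ - b₁.coord 1 z₁) = 0 := by
      linear_combination h0 - hts
    have hut : u = t := by
      rcases mul_eq_zero.1 hmul with h | h
      · linarith
      · exfalso; linarith
    rw [hut]
  have hFclosed : IsClosed F₀ := by
    rw [hF₀]
    exact ((Set.toFinite _).isCompact_convexHull ℝ).isClosed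
  refine ⟨hz₁₀int, hz₂₀int, m₀, hseg_eq, hm₀seg2, ?_⟩
  apply aux_dist9 hFconv hFclosed hz₁₀F hz₂₀F ht0.le ht1.le
  have hlm : AffineMap.lineMap z₁₀ z₂₀ t = m' := by
    rw [AffineMap.lineMap_apply, hm'def]
    simp only [vsub_eq_sub, vadd_eq_add]
    abel
  exact hm₀m'.trans hlm.symm
end

section
/- Let T be a nondegenerate tetrahedron in ℝ³ with diameter h_T and insphere diameter ρ_T satisfying h_T/ρ_T ≤ c₀ for a constant c₀ ≥ 1, let F be a face of T, and let m_F be the barycenter (centroid) of F. Then dist(m_F, ∂F) ≥ ρ_T/3 ≥ h_T/(3c₀). -/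
open Finset Metric

local notation "E3" => EuclideanSpace ℝ (Fin 3)

private lemma span_top' (v : Fin 4 → EuclideanSpace ℝ (Fin 3)) (hv : AffineIndependent ℝ v) :
    affineSpan ℝ (Set.range v) = ⊤ := by
  rw [hv.affineSpan_eq_top_iff_card_eq_finrank_add_one]
  simp

/-- Separating functional for vertex `j` of a tetrahedron containing a ball of radius `r`. -/
private lemma sep_functional
    (v : Fin 4 → EuclideanSpace ℝ (Fin 3))
    (hv : AffineIndependent ℝ v)
    (T : Set (EuclideanSpace ℝ (Fin 3)))
    (hT : T = convexHull ℝ (Set.range v))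
    (z : EuclideanSpace ℝ (Fin 3)) (r : ℝ)
    (hball : Metric.closedBall z r ⊆ T) (hr : 0 ≤ r)
    (j : Fin 4) :
    ∃ (u : EuclideanSpace ℝ (Fin 3)) (c : ℝ), ‖u‖ = 1 ∧
      (∀ k, k ≠ j → (inner ℝ (v k) u : ℝ) = c) ∧ c + 2 * r ≤ (inner ℝ (v j) u : ℝ) := by
  classical
  set W : Submodule ℝ (EuclideanSpace ℝ (Fin 3)) :=
    vectorSpan ℝ (v '' ({j}ᶜ : Set (Fin 4))) with hW
  -- W ≠ ⊤
  have himg : v '' (Set.univ \ {j}) = v '' ({j}ᶜ : Set (Fin 4)) := by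
    rw [Set.compl_eq_univ_diff]
  have hvj : v j ∉ affineSpan ℝ (v '' ({j}ᶜ : Set (Fin 4))) := by
    rw [← himg]; exact hv.notMem_affineSpan_diff j Set.univ
  have hWne : W ≠ ⊤ := by
    intro h
    have hne : (v '' ({j}ᶜ : Set (Fin 4))).Nonempty := by
      refine ⟨v (if j = 0 then 1 else 0), Set.mem_image_of_mem _ ?_⟩
      simp only [Set.mem_compl_iff, Set.mem_singleton_iff]
      split_ifs with h0
      · rw [h0]; decide
      · exact fun h => h0 h.symm
    have hne' : ((affineSpan ℝ (v '' ({j}ᶜ : Set (Fin 4)))) : Set (EuclideanSpace ℝ (Fin 3))).Nonempty :=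
      hne.mono (subset_affineSpan ℝ _)
    have : affineSpan ℝ (v '' ({j}ᶜ : Set (Fin 4))) = ⊤ := by
      rw [← AffineSubspace.direction_eq_top_iff_of_nonempty hne', direction_affineSpan]
      exact h
    exact hvj (this ▸ AffineSubspace.mem_top ℝ _ _)
  -- pick nonzero u' orthogonal to W
  obtain ⟨u', hu'W, hu'ne⟩ : ∃ u' ∈ Wᗮ, u' ≠ 0 := by
    have : Wᗮ ≠ ⊥ := fun h => hWne (Submodule.orthogonal_eq_bot_iff.mp h)
    exact Submodule.exists_mem_ne_zero_of_ne_bot this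
  -- constant value on the other vertices
  set k₁ : Fin 4 := if j = 0 then 1 else 0 with hk₁
  have hk₁j : k₁ ≠ j := by
    rw [hk₁]; split_ifs with h0
    · rw [h0]; decide
    · exact fun h => h0 h.symm
  have hconst : ∀ k, k ≠ j → (inner ℝ (v k) u' : ℝ) = inner ℝ (v k₁) u' := by
    intro k hk
    have hmem : v k -ᵥ v k₁ ∈ W := by
      apply vsub_mem_vectorSpan <;> exact Set.mem_image_of_mem _ (by simpa using ‹_›)
    have := (Submodule.mem_orthogonal W u').mp hu'W _ hmem
    simp only [vsub_eq_sub, inner_sub_left] at this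
    linarith [this]
  -- the value at v j differs
  have hdiff : (inner ℝ (v j) u' : ℝ) ≠ inner ℝ (v k₁) u' := by
    intro heq
    have hall : ∀ k, (inner ℝ (v k) u' : ℝ) = inner ℝ (v k₁) u' := by
      intro k
      by_cases hk : k = j
      · rw [hk]; exact heq
      · exact hconst k hk
    have htop : vectorSpan ℝ (Set.range v) = ⊤ :=
      AffineSubspace.vectorSpan_eq_top_of_affineSpan_eq_top ℝ _ _ (span_top' v hv)
    have : u' ∈ (vectorSpan ℝ (Set.range v))ᗮ := by
      rw [vectorSpan_def]
      rw [Submodule.mem_orthogonal]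
      intro y hy
      refine Submodule.span_induction ?_ ?_ ?_ ?_ hy
      · rintro x ⟨a, ⟨k, rfl⟩, b, ⟨l, rfl⟩, rfl⟩
        simp only [vsub_eq_sub, inner_sub_left]
        rw [hall k, hall l]; ring
      · simp
      · intro a b _ _ ha hb; rw [inner_add_left, ha, hb]; ring
      · intro a x _ hx; rw [real_inner_smul_left, hx]; ring
    rw [htop, Submodule.top_orthogonal_eq_bot] at this
    exact hu'ne this
  -- normalize and fix sign
  set t : ℝ := inner ℝ (v j) u' - inner ℝ (v k₁) u' with ht
  have htne : t ≠ 0 := sub_ne_zero.mpr hdiff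
  set σ : ℝ := if 0 < t then 1 else -1 with hσ
  have hσt : 0 < σ * t := by
    rw [hσ]; split_ifs with h0
    · simpa using h0
    · have : t < 0 := lt_of_le_of_ne (not_lt.mp h0) htne
      nlinarith
  have hu'norm : (0:ℝ) < ‖u'‖ := norm_pos_iff.mpr hu'ne
  set u : EuclideanSpace ℝ (Fin 3) := (σ * ‖u'‖⁻¹) • u' with hu
  have hunorm : ‖u‖ = 1 := by
    rw [hu, norm_smul, Real.norm_eq_abs, abs_mul, abs_inv, abs_norm]
    have : |σ| = 1 := by rw [hσ]; split_ifs <;> simp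
    rw [this]
    field_simp
  set c : ℝ := (σ * ‖u'‖⁻¹) * inner ℝ (v k₁) u' with hc
  have hconstu : ∀ k, k ≠ j → (inner ℝ (v k) u : ℝ) = c := by
    intro k hk
    rw [hu, real_inner_smul_right, hconst k hk, hc]
  have hgap : 0 < (inner ℝ (v j) u : ℝ) - c := by
    rw [hu, real_inner_smul_right, hc]
    have : (σ * ‖u'‖⁻¹) * (inner ℝ (v j) u' : ℝ) - σ * ‖u'‖⁻¹ * inner ℝ (v k₁) u'
        = ‖u'‖⁻¹ * (σ * t) := by rw [ht]; ring
    rw [this]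
    positivity
  -- all of T lies in the slab
  set a : ℝ := inner ℝ (v j) u with ha
  have hslab : T ⊆ {x | (inner ℝ x u : ℝ) ∈ Set.Icc c a} := by
    rw [hT]
    apply convexHull_min
    · rintro x ⟨k, rfl⟩
      rw [Set.mem_setOf_eq, Set.mem_Icc]
      by_cases hk : k = j
      · subst hk; exact ⟨by linarith, le_refl _⟩
      · rw [hconstu k hk]; exact ⟨le_refl _, by linarith⟩
    · have hlin : IsLinearMap ℝ (fun x : EuclideanSpace ℝ (Fin 3) => (inner ℝ x u : ℝ)) :=
        ⟨fun x y => inner_add_left x y u, fun c x => real_inner_smul_left x u c⟩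
      exact ((convex_Icc c a).is_linear_preimage hlin)
  -- use the two ball points
  have h1 : z + r • u ∈ Metric.closedBall z r := by
    rw [Metric.mem_closedBall, dist_eq_norm, add_sub_cancel_left, norm_smul, hunorm]
    simp [abs_of_nonneg hr]
  have h2 : z - r • u ∈ Metric.closedBall z r := by
    rw [Metric.mem_closedBall, dist_eq_norm, sub_sub_cancel_left, norm_neg, norm_smul, hunorm]
    simp [abs_of_nonneg hr]
  have e1 := hslab (hball h1)
  have e2 := hslab (hball h2)
  simp only [Set.mem_setOf_eq, inner_add_left, inner_sub_left, real_inner_smul_left,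
    real_inner_self_eq_norm_mul_norm, hunorm, Set.mem_Icc] at e1 e2
  refine ⟨u, c, hunorm, hconstu, ?_⟩
  rw [← ha]
  nlinarith [e1.2, e2.1]

/-- Let `T` be a nondegenerate tetrahedron in `ℝ³` with diameter `h_T` and
insphere diameter `ρ_T = 2 * r` satisfying `h_T/ρ_T ≤ c₀` for a constant `c₀ ≥ 1`, let `F` be
the face of `T` opposite the vertex `v i`, and let `m_F` be the barycenter (centroid) of `F`.
Then `dist(m_F, ∂F) ≥ ρ_T/3 ≥ h_T/(3c₀)`. -/
theorem barycenter_dist_boundary_ge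
    (c₀ : ℝ) (hc₀ : 1 ≤ c₀)
    (v : Fin 4 → EuclideanSpace ℝ (Fin 3))
    (hv : AffineIndependent ℝ v)
    (T : Set (EuclideanSpace ℝ (Fin 3)))
    (hT : T = convexHull ℝ (Set.range v))
    (z : EuclideanSpace ℝ (Fin 3)) (r : ℝ)
    (hball : Metric.closedBall z r ⊆ T)
    (hmax : ∀ (z' : EuclideanSpace ℝ (Fin 3)) (r' : ℝ),
      Metric.closedBall z' r' ⊆ T → r' ≤ r)
    (hreg : Metric.diam T / (2 * r) ≤ c₀)
    (i : Fin 4)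
    (F : Set (EuclideanSpace ℝ (Fin 3)))
    (hF : F = convexHull ℝ (v '' ({i}ᶜ : Set (Fin 4))))
    (m : EuclideanSpace ℝ (Fin 3))
    (hm : m = (3 : ℝ)⁻¹ • ∑ j ∈ ({i}ᶜ : Finset (Fin 4)), v j) :
    2 * r / 3 ≤ Metric.infDist m (intrinsicFrontier ℝ F) ∧
      Metric.diam T / (3 * c₀) ≤ 2 * r / 3 := by
  classical
  -- r is positive
  have htop : affineSpan ℝ (Set.range v) = ⊤ := span_top' v hv
  have hrpos : 0 < r := by
    have hconvT : Convex ℝ T := hT ▸ convex_convexHull ℝ _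
    have hint : (interior T).Nonempty := by
      rw [hconvT.interior_nonempty_iff_affineSpan_eq_top, hT, affineSpan_convexHull]
      exact htop
    obtain ⟨x, hx⟩ := hint
    obtain ⟨ε, hε, hb⟩ := Metric.isOpen_iff.mp isOpen_interior x hx
    have hcb : Metric.closedBall x (ε / 2) ⊆ T :=
      (Metric.closedBall_subset_ball (by linarith)).trans (hb.trans interior_subset)
    have := hmax x (ε / 2) hcb
    linarith
  -- second inequality
  have hsecond : Metric.diam T / (3 * c₀) ≤ 2 * r / 3 := by
    rw [div_le_iff₀ (by positivity)] at hreg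
    rw [div_le_div_iff₀ (by positivity) (by norm_num)]
    nlinarith
  -- index subtype
  have hcard : Fintype.card {k : Fin 4 // k ≠ i} = 3 := by
    simp [Fintype.card_subtype_compl]
  have hsum3 : ∑ j ∈ ({i}ᶜ : Finset (Fin 4)), v j = ∑ k : {k : Fin 4 // k ≠ i}, v ↑k :=
    Finset.sum_subtype _ (by simp) v
  have himg : v '' ({i}ᶜ : Set (Fin 4)) = Set.range (fun k : {k : Fin 4 // k ≠ i} => v ↑k) := by
    ext y
    constructor
    · rintro ⟨k, hk, rfl⟩; exact ⟨⟨k, by simpa using hk⟩, rfl⟩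
    · rintro ⟨k, rfl⟩; exact ⟨↑k, by simpa using k.2, rfl⟩
  have hm' : m = ∑ k : {k : Fin 4 // k ≠ i}, (3:ℝ)⁻¹ • v ↑k := by
    rw [hm, hsum3, Finset.smul_sum]
  -- inner product of a linear combination
  have hinner_sum : ∀ (w : {k : Fin 4 // k ≠ i} → ℝ) (u : EuclideanSpace ℝ (Fin 3)) (c : ℝ)
      (k : {k : Fin 4 // k ≠ i}), (∀ k' : Fin 4, k' ≠ ↑k → (inner ℝ (v k') u : ℝ) = c) →
      (inner ℝ (∑ k' : {k : Fin 4 // k ≠ i}, w k' • v ↑k') u : ℝ)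
        = (∑ k' : {k : Fin 4 // k ≠ i}, w k') * c + w k * ((inner ℝ (v ↑k) u : ℝ) - c) := by
    intro w u c k hc
    rw [sum_inner]
    have : ∀ k' : {k : Fin 4 // k ≠ i}, (inner ℝ (w k' • v ↑k') u : ℝ)
        = w k' * c + (if k' = k then w k * ((inner ℝ (v ↑k) u : ℝ) - c) else 0) := by
      intro k'
      rw [real_inner_smul_left]
      by_cases hkk : k' = k
      · subst hkk; rw [if_pos rfl]; ring
      · rw [if_neg hkk, hc ↑k' (fun h => hkk (Subtype.ext h)), add_zero]
    rw [Finset.sum_congr rfl (fun k' _ => this k'), Finset.sum_add_distrib,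
      Finset.sum_ite_eq' Finset.univ k, if_pos (Finset.mem_univ k), ← Finset.sum_mul]
  have hsum_third : (∑ _k' : {k : Fin 4 // k ≠ i}, (3:ℝ)⁻¹) = 1 := by
    rw [Finset.sum_const, Finset.card_univ, hcard]
    norm_num
  -- membership in the face from span membership and distance to barycenter
  have hsubF : ∀ x : EuclideanSpace ℝ (Fin 3),
      x ∈ affineSpan ℝ (v '' ({i}ᶜ : Set (Fin 4))) → dist x m < 2 * r / 3 →
      x ∈ convexHull ℝ (v '' ({i}ᶜ : Set (Fin 4))) := by
    intro x hx hdist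
    rw [himg] at hx
    obtain ⟨w, hw1, hxw⟩ := eq_affineCombination_of_mem_affineSpan_of_fintype hx
    rw [Finset.affineCombination_eq_linear_combination _ _ _ hw1] at hxw
    have hwpos : ∀ k : {k : Fin 4 // k ≠ i}, 0 ≤ w k := by
      intro k
      obtain ⟨u, c, hunorm, hconst, hgap⟩ :=
        sep_functional v hv T hT z r hball hrpos.le ↑k
      have hxin : (inner ℝ x u : ℝ) = c + w k * ((inner ℝ (v ↑k) u : ℝ) - c) := by
        rw [hxw, hinner_sum w u c k hconst, hw1, one_mul]
      have hmin : (inner ℝ m u : ℝ) = c + (3:ℝ)⁻¹ * ((inner ℝ (v ↑k) u : ℝ) - c) := by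
        rw [hm', hinner_sum (fun _ => (3:ℝ)⁻¹) u c k hconst, hsum_third, one_mul]
      have hCS : |(inner ℝ x u : ℝ) - (inner ℝ m u : ℝ)| ≤ dist x m := by
        rw [← inner_sub_left]
        calc |(inner ℝ (x - m) u : ℝ)| ≤ ‖x - m‖ * ‖u‖ := abs_real_inner_le_norm _ _
          _ = dist x m := by rw [hunorm, mul_one, dist_eq_norm]
      set a : ℝ := inner ℝ (v ↑k) u
      have hgap' : 2 * r ≤ a - c := by linarith
      have h1 : |w k * (a - c) - (3:ℝ)⁻¹ * (a - c)| < 2 * r / 3 := by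
        rw [hxin, hmin] at hCS
        calc |w k * (a - c) - (3:ℝ)⁻¹ * (a - c)|
            = |(c + w k * (a - c)) - (c + (3:ℝ)⁻¹ * (a - c))| := by ring_nf
          _ ≤ dist x m := hCS
          _ < 2 * r / 3 := hdist
      by_contra hneg
      push_neg at hneg
      have : (3:ℝ)⁻¹ * (a - c) - w k * (a - c) ≤ |w k * (a - c) - (3:ℝ)⁻¹ * (a - c)| := by
        rw [abs_sub_comm]; exact le_abs_self _
      nlinarith
    -- now x is a convex combination
    rw [hxw, ← Finset.centerMass_eq_of_sum_1 _ _ hw1]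
    exact Finset.centerMass_mem_convexHull _ (fun k _ => hwpos k) (by rw [hw1]; norm_num)
      (fun k _ => himg ▸ Set.mem_range_self k)
  -- span of face equals span of the three vertices
  have hspanF : affineSpan ℝ F = affineSpan ℝ (v '' ({i}ᶜ : Set (Fin 4))) := by
    rw [hF, affineSpan_convexHull]
  -- points of the span close to m are in the intrinsic interior
  have hIntr : ∀ y : EuclideanSpace ℝ (Fin 3), y ∈ affineSpan ℝ F → dist y m < 2 * r / 3 →
      y ∈ intrinsicInterior ℝ F := by
    intro y hy hdist
    set S : Set (affineSpan ℝ F) := Subtype.val ⁻¹' Metric.ball m (2 * r / 3) with hS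
    have hSopen : IsOpen S := continuous_subtype_val.isOpen_preimage _ Metric.isOpen_ball
    have hSsub : S ⊆ Subtype.val ⁻¹' F := by
      rintro ⟨p, hp⟩ hpS
      have : dist p m < 2 * r / 3 := by simpa [hS, Metric.mem_ball] using hpS
      have := hsubF p (hspanF ▸ hp) this
      simpa [hF] using this
    rw [mem_intrinsicInterior]
    refine ⟨⟨y, hy⟩, interior_maximal hSsub hSopen ?_, rfl⟩
    simpa [hS, Metric.mem_ball] using hdist
  -- every point of the intrinsic frontier is far from m
  have hfar : ∀ y ∈ intrinsicFrontier ℝ F, 2 * r / 3 ≤ dist m y := by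
    intro y hy
    by_contra hlt
    push_neg at hlt
    obtain ⟨y', hy', rfl⟩ := mem_intrinsicFrontier.mp hy
    have hyA : (y' : EuclideanSpace ℝ (Fin 3)) ∈ affineSpan ℝ F := y'.2
    have := hIntr y' hyA (by rwa [dist_comm])
    obtain ⟨y'', hy'', hcoe⟩ := mem_intrinsicInterior.mp this
    have : y'' = y' := Subtype.ext hcoe
    subst this
    exact hy'.2 hy''
  -- the intrinsic frontier is nonempty
  have hne : (intrinsicFrontier ℝ F).Nonempty := by
    obtain ⟨j₀, k₀, hj₀, hk₀, hjk⟩ : ∃ j₀ k₀ : Fin 4, j₀ ≠ i ∧ k₀ ≠ i ∧ j₀ ≠ k₀ := by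
      fin_cases i <;> decide
    have hvjF : v j₀ ∈ F := by
      rw [hF]
      exact subset_convexHull ℝ _ (Set.mem_image_of_mem _ (by simpa using hj₀))
    have hvjA : v j₀ ∈ affineSpan ℝ F := subset_affineSpan ℝ _ hvjF
    have hmF : m ∈ F := by
      rw [hF, hm', ← Finset.centerMass_eq_of_sum_1 _ _ hsum_third]
      exact Finset.centerMass_mem_convexHull _ (fun k _ => by norm_num)
        (by rw [hsum_third]; norm_num) (fun k _ => himg ▸ Set.mem_range_self k)
    have hmA : m ∈ affineSpan ℝ F := subset_affineSpan ℝ _ hmF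
    refine ⟨v j₀, mem_intrinsicFrontier.mpr ⟨⟨v j₀, hvjA⟩, ?_, rfl⟩⟩
    constructor
    · exact subset_closure (by simpa using hvjF)
    · -- not in the interior
      intro hin
      set γ : ℝ → affineSpan ℝ F := fun t =>
        ⟨AffineMap.lineMap m (v j₀) t, AffineMap.lineMap_mem t hmA hvjA⟩ with hγ
      have hγcont : Continuous γ :=
        AffineMap.lineMap_continuous.subtype_mk _
      have h1U : (1 : ℝ) ∈ γ ⁻¹' interior (Subtype.val ⁻¹' F) := by
        have : γ 1 = ⟨v j₀, hvjA⟩ := by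
          apply Subtype.ext; simp [hγ]
        rw [Set.mem_preimage, this]
        exact hin
      obtain ⟨ε, hε, hb⟩ := Metric.isOpen_iff.mp (hγcont.isOpen_preimage _ isOpen_interior) 1 h1U
      set t : ℝ := 1 + min ε 1 / 2 with htdef
      have htmem : t ∈ Metric.ball (1:ℝ) ε := by
        rw [Metric.mem_ball, Real.dist_eq]
        have h01 : 0 < min ε 1 := lt_min hε one_pos
        have : |t - 1| = min ε 1 / 2 := by
          rw [htdef]; rw [add_sub_cancel_left, abs_of_pos (by linarith)]
        rw [this]
        calc min ε 1 / 2 < min ε 1 := by linarith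
          _ ≤ ε := min_le_left _ _
      have hγtF : (γ t : EuclideanSpace ℝ (Fin 3)) ∈ F := by
        have h2 := hb htmem
        rw [Set.mem_preimage] at h2
        have h3 : γ t ∈ Subtype.val ⁻¹' F := interior_subset h2
        exact h3
      -- contradiction via the separating functional at k₀
      obtain ⟨u, c, hunorm, hconst, hgap⟩ :=
        sep_functional v hv T hT z r hball hrpos.le k₀
      have hFge : F ⊆ {x | c ≤ (inner ℝ x u : ℝ)} := by
        rw [hF]
        apply convexHull_min
        · rintro x ⟨k, hk, rfl⟩
          rw [Set.mem_setOf_eq]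
          by_cases hkk : k = k₀
          · subst hkk; linarith
          · rw [hconst k hkk]
        · exact convex_halfSpace_ge
            ⟨fun x y => inner_add_left x y u, fun c x => real_inner_smul_left x u c⟩ c
      have hmu : (inner ℝ m u : ℝ) = c + (3:ℝ)⁻¹ * ((inner ℝ (v k₀) u : ℝ) - c) := by
        rw [hm', hinner_sum (fun _ => (3:ℝ)⁻¹) u c ⟨k₀, hk₀⟩ hconst, hsum_third, one_mul]
      have hju : (inner ℝ (v j₀) u : ℝ) = c := hconst j₀ hjk
      have hγtu : (inner ℝ (γ t : EuclideanSpace ℝ (Fin 3)) u : ℝ)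
          = (1 - t) * (inner ℝ m u : ℝ) + t * (inner ℝ (v j₀) u : ℝ) := by
        show (inner ℝ (AffineMap.lineMap m (v j₀) t) u : ℝ) = _
        rw [AffineMap.lineMap_apply_module, inner_add_left, real_inner_smul_left,
          real_inner_smul_left]
      have hlt : (inner ℝ (γ t : EuclideanSpace ℝ (Fin 3)) u : ℝ) < c := by
        rw [hγtu, hmu, hju]
        set g : ℝ := (inner ℝ (v k₀) u : ℝ) - c with hg
        have hgap' : 0 < g := by rw [hg]; linarith
        have ht1 : 1 < t := by
          rw [htdef]
          have : 0 < min ε 1 := lt_min hε one_pos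
          linarith
        have hprod : 0 < (t - 1) * g := mul_pos (by linarith) hgap'
        have hgoal : (1 - t) * (c + 3⁻¹ * g) + t * c = c - (t - 1) * g / 3 := by ring
        rw [hgoal]
        exact sub_lt_self c (div_pos hprod (by norm_num))
      exact absurd (hFge hγtF) (by simpa using not_le.mpr hlt)
  -- conclude
  refine ⟨?_, hsecond⟩
  by_contra hlt
  push_neg at hlt
  obtain ⟨y, hy, hdy⟩ := (Metric.infDist_lt_iff hne).mp hlt
  exact absurd hdy (not_lt.mpr (hfar y hy))
end

section
/- Let c₀ ≥ 1 and let T be a nondegenerate tetrahedron in ℝ³ with diameter h_T, insphere diameter ρ_T, and incenter z_T, satisfying h_T/ρ_T ≤ c₀. Let F be a face of T, let m be a point in the relative interior of F with dist(m, ∂F) ≥ c₂·h_T for some constant c₂ > 0, and let e = [x₁, x₂] be an edge of F. Then the tetrahedron K = conv{x₁, x₂, m, z_T} satisfies |K| ≥ (c₂ / (12 c₀³)) · h_T³. -/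
open MeasureTheory Set Pointwise
open scoped ENNReal

section AuxiliaryLemmas

/-- A continuous path starting in the interior of `A` and ending outside `A`
meets the frontier of `A`. -/
lemma path_crossing_frontier {X : Type*} [TopologicalSpace X] {γ : ℝ → X}
    (hγ : Continuous γ) {A : Set X} (h0 : γ 0 ∈ interior A) (h1 : γ 1 ∉ A) :
    ∃ t ∈ Set.Icc (0:ℝ) 1, γ t ∈ frontier A := by
  by_cases hcl : γ 1 ∈ closure A
  · exact ⟨1, by norm_num, hcl, fun h => h1 (interior_subset h)⟩
  · by_contra hcon
    push_neg at hcon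
    set u := γ ⁻¹' interior A with hu
    set w := γ ⁻¹' (closure A)ᶜ with hw
    have hcover : Set.Icc (0:ℝ) 1 ⊆ u ∪ w := by
      intro t ht
      by_cases h : γ t ∈ closure A
      · by_cases h' : γ t ∈ interior A
        · exact Or.inl h'
        · exact absurd ⟨h, h'⟩ (hcon t ht)
      · exact Or.inr h
    have hdisj : Disjoint u w := by
      apply Set.disjoint_left.mpr
      intro t htu htw
      exact htw (subset_closure (interior_subset htu))
    rcases (isPreconnected_Icc).subset_or_subset
        (isOpen_interior.preimage hγ) (isClosed_closure.isOpen_compl.preimage hγ)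
        hdisj hcover with h | h
    · exact h1 (interior_subset (h ⟨zero_le_one, le_refl 1⟩ : (1:ℝ) ∈ u))
    · exact (h ⟨le_refl 0, zero_le_one⟩ : (0:ℝ) ∈ w) (subset_closure (interior_subset h0))

/-- If `m` is in the intrinsic interior of a closed set `F` and `p` is a point of the affine
span of `F` not in the intrinsic interior, then the distance from `m` to the intrinsic
frontier is at most `dist m p`. -/
lemma infDist_intrinsicFrontier_le {E : Type*} [NormedAddCommGroup E] [NormedSpace ℝ E]
    {F : Set E} (hFcl : IsClosed F) {m p : E} (hm : m ∈ intrinsicInterior ℝ F)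
    (hp : p ∈ affineSpan ℝ F) (hpi : p ∉ intrinsicInterior ℝ F) :
    Metric.infDist m (intrinsicFrontier ℝ F) ≤ dist m p := by
  obtain ⟨m', hm'int, hm'⟩ := hm
  have hmF : m ∈ F := intrinsicInterior_subset ⟨m', hm'int, hm'⟩
  have hmspan : m ∈ affineSpan ℝ F := subset_affineSpan ℝ F hmF
  have hAcl : IsClosed ((↑) ⁻¹' F : Set (affineSpan ℝ F)) :=
    hFcl.preimage continuous_subtype_val
  by_cases hpF : p ∈ F
  · -- p itself is in the intrinsic frontier
    have : p ∈ intrinsicFrontier ℝ F := by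
      refine ⟨⟨p, hp⟩, ⟨subset_closure hpF, ?_⟩, rfl⟩
      intro hint
      exact hpi ⟨⟨p, hp⟩, hint, rfl⟩
    exact Metric.infDist_le_dist_of_mem this
  · -- path from m to p
    have hmem : ∀ t : ℝ, t • (p - m) + m ∈ affineSpan ℝ F := by
      intro t
      exact AffineSubspace.smul_vsub_vadd_mem _ t hp hmspan hmspan
    set γ : ℝ → (affineSpan ℝ F : Set E) := fun t => ⟨t • (p - m) + m, hmem t⟩ with hγdef
    have hγcont : Continuous γ := by
      apply Continuous.subtype_mk
      exact (continuous_id.smul continuous_const).add continuous_const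
    have hγ0 : γ 0 ∈ interior ((↑) ⁻¹' F : Set (affineSpan ℝ F)) := by
      have : γ 0 = m' := by
        apply Subtype.ext
        simp [hγdef, hm']
      rw [this]; exact hm'int
    have hγ1 : γ 1 ∉ ((↑) ⁻¹' F : Set (affineSpan ℝ F)) := by
      intro h
      apply hpF
      simpa [hγdef] using h
    obtain ⟨t, ht, htfr⟩ := path_crossing_frontier hγcont hγ0 hγ1
    have hq : (t • (p - m) + m) ∈ intrinsicFrontier ℝ F := ⟨γ t, htfr, rfl⟩
    calc Metric.infDist m (intrinsicFrontier ℝ F) ≤ dist m (t • (p - m) + m) :=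
          Metric.infDist_le_dist_of_mem hq
      _ ≤ dist m p := by
          rw [dist_eq_norm, dist_eq_norm]
          have : m - (t • (p - m) + m) = t • (m - p) := by
            module
          rw [this, norm_smul]
          calc |t| * ‖m - p‖ ≤ 1 * ‖m - p‖ := by
                apply mul_le_mul_of_nonneg_right _ (norm_nonneg _)
                rw [abs_le]; exact ⟨by linarith [ht.1], ht.2⟩
            _ = ‖m - p‖ := one_mul _

local notation "E3" => EuclideanSpace ℝ (Fin 3)

lemma corner_mem_le_one {x : E3} (hx : (∀ i, 0 ≤ x i) ∧ (∑ i, x i) ≤ 1) (i : Fin 3) :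
    x i ≤ 1 :=
  le_trans (Finset.single_le_sum (fun j _ => hx.1 j) (Finset.mem_univ i)) hx.2

lemma corner_isCompact :
    IsCompact {x : E3 | (∀ i, 0 ≤ x i) ∧ (∑ i, x i) ≤ 1} := by
  have hconti : ∀ i : Fin 3, Continuous fun x : E3 => x i := by
    intro i
    exact (continuous_apply i).comp (PiLp.continuous_ofLp 2 (fun _ : Fin 3 => ℝ))
  have hclosed : IsClosed {x : E3 | (∀ i, 0 ≤ x i) ∧ (∑ i, x i) ≤ 1} := by
    have hset : {x : E3 | (∀ i, 0 ≤ x i) ∧ (∑ i, x i) ≤ 1}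
        = (⋂ i, {x : E3 | 0 ≤ x i}) ∩ {x : E3 | (∑ i, x i) ≤ 1} := by
      ext x; simp [forall_and]
    rw [hset]
    exact IsClosed.inter (isClosed_iInter fun i => isClosed_le continuous_const (hconti i))
      (isClosed_le (continuous_finset_sum _ fun i _ => hconti i) continuous_const)
  rw [Metric.isCompact_iff_isClosed_bounded]
  refine ⟨hclosed, ?_⟩
  rw [Metric.isBounded_iff_subset_closedBall 0]
  refine ⟨3, fun x hx => ?_⟩
  simp only [Metric.mem_closedBall, dist_zero_right]
  rw [EuclideanSpace.norm_eq]
  have hsum : (∑ i, ‖x i‖ ^ 2) ≤ 9 := by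
    have : ∀ i : Fin 3, ‖x i‖ ^ 2 ≤ 1 := by
      intro i
      rw [Real.norm_eq_abs, abs_of_nonneg (hx.1 i), ← one_pow 2]
      exact pow_le_pow_left₀ (hx.1 i) (corner_mem_le_one hx i) 2
    calc (∑ i, ‖x i‖ ^ 2) ≤ ∑ _i : Fin 3, (1:ℝ) := Finset.sum_le_sum fun i _ => this i
      _ = 3 := by simp
      _ ≤ 9 := by norm_num
  calc Real.sqrt (∑ i, ‖x i‖ ^ 2) ≤ Real.sqrt 9 := Real.sqrt_le_sqrt hsum
    _ = 3 := by
        rw [(by norm_num : (9:ℝ) = 3 ^ 2), Real.sqrt_sq (by norm_num : (0:ℝ) ≤ 3)]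

lemma corner_simplex_volume :
    (6 : ℝ≥0∞)⁻¹ ≤ volume {x : E3 | (∀ i, 0 ≤ x i) ∧ (∑ i, x i) ≤ 1} := by
  set C := {x : E3 | (∀ i, 0 ≤ x i) ∧ (∑ i, x i) ≤ 1} with hC
  set M₀ : Matrix (Fin 3) (Fin 3) ℝ := !![1,0,0;1,1,0;1,1,1] with hM₀
  set Φ : E3 →ₗ[ℝ] E3 := Matrix.toEuclideanLin M₀ with hΦ
  have hdet : LinearMap.det Φ = 1 := by
    rw [hΦ, Matrix.toEuclideanLin_eq_toLin_orthonormal, LinearMap.det_toLin]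
    simp [hM₀, Matrix.det_fin_three]
  -- the image of C under Φ is measurable with the same volume
  have hImMeas : MeasurableSet (⇑Φ '' C) := by
    have : IsCompact (⇑Φ '' C) := corner_isCompact.image (LinearMap.continuous_of_finiteDimensional Φ)
    exact this.isClosed.measurableSet
  have hImVol : volume (⇑Φ '' C) = volume C := by
    rw [Measure.addHaar_image_linearMap, hdet]
    simp
  -- permutations
  set P : Equiv.Perm (Fin 3) → (E3 ≃ₗᵢ[ℝ] E3) :=
    fun σ => LinearIsometryEquiv.piLpCongrLeft 2 ℝ ℝ σ with hP
  have hPvol : ∀ σ, volume (⇑(P σ) '' (⇑Φ '' C)) = volume C := by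
    intro σ
    have h1 : ⇑(P σ) '' (⇑Φ '' C) = ⇑((P σ).toMeasurableEquiv) '' (⇑Φ '' C) := rfl
    rw [h1, MeasurableEquiv.image_eq_preimage_symm]
    have h2 : ⇑((P σ).toMeasurableEquiv.symm) = ⇑((P σ).symm) := rfl
    rw [h2, ((P σ).symm.measurePreserving).measure_preimage]
    · exact hImVol
    · exact hImMeas.nullMeasurableSet
  -- the unit cube
  set Cube : Set E3 := ⇑(WithLp.equiv 2 (Fin 3 → ℝ)) ⁻¹' (Set.univ.pi fun _ => Icc (0:ℝ) 1)
    with hCube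
  have hCubeVol : volume Cube = 1 := by
    rw [hCube, show ⇑(WithLp.equiv 2 (Fin 3 → ℝ)) = WithLp.ofLp from rfl,
      (PiLp.volume_preserving_ofLp (Fin 3)).measure_preimage]
    · rw [volume_pi_pi]
      simp [Real.volume_Icc]
    · exact (MeasurableSet.univ_pi fun _ => measurableSet_Icc).nullMeasurableSet
  -- covering
  have hcover : Cube ⊆ ⋃ σ : Equiv.Perm (Fin 3), ⇑(P σ) '' (⇑Φ '' C) := by
    intro x hx
    have hxi : ∀ i, x i ∈ Icc (0:ℝ) 1 := by
      intro i
      have := hx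
      rw [hCube, Set.mem_preimage, Set.mem_univ_pi] at this
      exact this i
    set τ := Tuple.sort (⇑(WithLp.equiv 2 (Fin 3 → ℝ)) x) with hτ
    set y : Fin 3 → ℝ := (⇑(WithLp.equiv 2 (Fin 3 → ℝ)) x) ∘ τ with hy
    have hymono : Monotone y := Tuple.monotone_sort _
    have hyx : ∀ i, y i = x (τ i) := fun i => rfl
    set c : E3 := (WithLp.equiv 2 (Fin 3 → ℝ)).symm ![y 0, y 1 - y 0, y 2 - y 1] with hc
    have hci : ∀ i, c i = ![y 0, y 1 - y 0, y 2 - y 1] i := fun i => rfl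
    have hcC : c ∈ C := by
      constructor
      · intro i
        fin_cases i
        · rw [hci]; simpa [hyx] using (hxi (τ 0)).1
        · rw [hci]
          simpa using sub_nonneg.mpr (hymono (by decide : (0:Fin 3) ≤ 1))
        · rw [hci]
          simpa using sub_nonneg.mpr (hymono (by decide : (1:Fin 3) ≤ 2))
      · rw [show (∑ i, c i) = c 0 + c 1 + c 2 from Fin.sum_univ_three _]
        rw [hci, hci, hci]
        simpa [hyx] using (hxi (τ 2)).2
    refine Set.mem_iUnion.mpr ⟨τ, ⟨Φ c, ⟨c, hcC, rfl⟩, ?_⟩⟩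
    -- show P τ (Φ c) = x
    have hΦc : Φ c = (WithLp.equiv 2 (Fin 3 → ℝ)).symm y := by
      rw [hΦ, hc, WithLp.equiv_symm_apply, Matrix.toEuclideanLin_apply_piLp_toLp]
      congr 1
      funext i
      fin_cases i <;>
        simp [hM₀, Matrix.mulVec, dotProduct, Fin.sum_univ_three] <;> ring
    rw [hΦc]
    ext i
    show ((P τ) ((WithLp.equiv 2 (Fin 3 → ℝ)).symm y)) i = x i
    rw [hP]
    rw [LinearIsometryEquiv.piLpCongrLeft_apply]
    show y (τ.symm i) = x i
    rw [hyx, Equiv.apply_symm_apply]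
  -- put it all together
  have h1 : (1 : ℝ≥0∞) ≤ 6 * volume C := by
    calc (1 : ℝ≥0∞) = volume Cube := hCubeVol.symm
      _ ≤ volume (⋃ σ : Equiv.Perm (Fin 3), ⇑(P σ) '' (⇑Φ '' C)) := measure_mono hcover
      _ ≤ ∑ σ : Equiv.Perm (Fin 3), volume (⇑(P σ) '' (⇑Φ '' C)) :=
          measure_iUnion_fintype_le _ _
      _ = ∑ _σ : Equiv.Perm (Fin 3), volume C := by
          apply Finset.sum_congr rfl
          intro σ _
          exact hPvol σ
      _ = 6 * volume C := by
          rw [Finset.sum_const]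
          simp [Fintype.card_perm]
          rfl
  calc (6 : ℝ≥0∞)⁻¹ = 6⁻¹ * 1 := (mul_one _).symm
    _ ≤ 6⁻¹ * (6 * volume C) := mul_le_mul_right h1 _
    _ = volume C := by
        rw [← mul_assoc, ENNReal.inv_mul_cancel (by norm_num) (by norm_num), one_mul]

end AuxiliaryLemmas

set_option maxHeartbeats 2000000 in

/-- Let `c₀ ≥ 1` and let `T` be a nondegenerate tetrahedron in `ℝ³` with
diameter `h_T`, insphere diameter `ρ_T = 2 * r`, and incenter `z` (center of the largest
closed ball contained in `T`), satisfying `h_T/ρ_T ≤ c₀`.  Let `F` be the face of `T` opposite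
the vertex `v i`, let `m` be a point in the relative interior of `F` with
`dist(m, ∂F) ≥ c₂·h_T` for some constant `c₂ > 0`, and let `e = [v j, v k]` (`j, k ≠ i`,
`j ≠ k`) be an edge of `F`.  Then the tetrahedron `K = conv {v j, v k, m, z}` satisfies
`|K| ≥ (c₂ / (12 c₀³)) · h_T³`. -/
theorem volume_subtetrahedron_ge
    (c₀ : ℝ) (hc₀ : 1 ≤ c₀)
    (v : Fin 4 → EuclideanSpace ℝ (Fin 3))
    (hv : AffineIndependent ℝ v)
    (T : Set (EuclideanSpace ℝ (Fin 3)))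
    (hT : T = convexHull ℝ (Set.range v))
    (z : EuclideanSpace ℝ (Fin 3)) (r : ℝ)
    (hball : Metric.closedBall z r ⊆ T)
    (hmax : ∀ (z' : EuclideanSpace ℝ (Fin 3)) (r' : ℝ),
      Metric.closedBall z' r' ⊆ T → r' ≤ r)
    (hreg : Metric.diam T / (2 * r) ≤ c₀)
    (i j k : Fin 4) (hji : j ≠ i) (hki : k ≠ i) (hjk : j ≠ k)
    (F : Set (EuclideanSpace ℝ (Fin 3)))
    (hF : F = convexHull ℝ (v '' ({i}ᶜ : Set (Fin 4))))
    (c₂ : ℝ) (hc₂ : 0 < c₂)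
    (m : EuclideanSpace ℝ (Fin 3))
    (hmF : m ∈ intrinsicInterior ℝ F)
    (hmdist : c₂ * Metric.diam T ≤ Metric.infDist m (intrinsicFrontier ℝ F))
    (K : Set (EuclideanSpace ℝ (Fin 3)))
    (hK : K = convexHull ℝ {v j, v k, m, z}) :
    c₂ / (12 * c₀ ^ 3) * Metric.diam T ^ 3 ≤ (volume K).toReal := by
  classical
  set h := Metric.diam T with hh
  have hh0 : 0 ≤ h := Metric.diam_nonneg
  have hvinj : Function.Injective v := hv.injective
  -- the fourth vertex
  obtain ⟨l, hl⟩ : (({i, j, k} : Finset (Fin 4))ᶜ).Nonempty := by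
    rw [← Finset.card_pos, Finset.card_compl]
    have h1 := Finset.card_insert_le i ({j, k} : Finset (Fin 4))
    have h2 := Finset.card_insert_le j ({k} : Finset (Fin 4))
    simp only [Finset.card_singleton] at h1 h2
    have : Fintype.card (Fin 4) = 4 := by simp
    omega
  rw [Finset.mem_compl, Finset.mem_insert, Finset.mem_insert, Finset.mem_singleton] at hl
  push_neg at hl
  obtain ⟨hli, hlj, hlk⟩ := hl
  have huniv : ∀ x : Fin 4, x = i ∨ x = j ∨ x = k ∨ x = l := by
    intro x
    have hc : ({i, j, k, l} : Finset (Fin 4)) = Finset.univ := by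
      apply Finset.eq_univ_of_card
      rw [Finset.card_insert_of_notMem (by simp [hji.symm, hki.symm, Ne.symm hli]),
        Finset.card_insert_of_notMem (by simp [hjk, Ne.symm hlj]),
        Finset.card_insert_of_notMem (by simp [Ne.symm hlk]), Finset.card_singleton]
      simp
    have hx : x ∈ ({i, j, k, l} : Finset (Fin 4)) := hc ▸ Finset.mem_univ x
    simpa using hx
  -- the face as a triple
  have hFs : v '' ({i}ᶜ : Set (Fin 4)) = {v j, v k, v l} := by
    ext y
    constructor
    · rintro ⟨x, hx, rfl⟩
      have hxi : x ≠ i := hx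
      rcases huniv x with rfl | rfl | rfl | rfl
      · exact absurd rfl hxi
      · exact Or.inl rfl
      · exact Or.inr (Or.inl rfl)
      · exact Or.inr (Or.inr rfl)
    · rintro (rfl | rfl | rfl)
      · exact ⟨j, hji, rfl⟩
      · exact ⟨k, hki, rfl⟩
      · exact ⟨l, hli, rfl⟩
  have hFhull : F = convexHull ℝ ({v j, v k, v l} : Set (EuclideanSpace ℝ (Fin 3))) := by rw [hF, hFs]
  have hvjF : v j ∈ F := hFhull ▸ subset_convexHull ℝ _ (by simp)
  have hvkF : v k ∈ F := hFhull ▸ subset_convexHull ℝ _ (by simp)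
  have hvlF : v l ∈ F := hFhull ▸ subset_convexHull ℝ _ (by simp)
  have hFclosed : IsClosed F := by
    rw [hFhull]
    exact (((Set.finite_singleton _).insert _ |>.insert _).isCompact_convexHull ℝ).isClosed
  have hmemF : m ∈ F := intrinsicInterior_subset hmF
  -- affine independence of the face vertices
  have hemb : Function.Injective ![j, k, l] := by
    intro x y hxy
    fin_cases x <;> fin_cases y <;> simp_all <;>
      first
        | rfl
        | exact absurd hxy hjk
        | exact absurd hxy.symm hjk
        | exact absurd hxy.symm hlj
        | exact absurd hxy hlj.symm
        | exact absurd hxy.symm hlk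
        | exact absurd hxy hlk.symm
  have hu3 : AffineIndependent ℝ ![v j, v k, v l] := by
    have h1 := hv.comp_embedding ⟨![j, k, l], hemb⟩
    have h2 : v ∘ ![j, k, l] = ![v j, v k, v l] := by
      funext x; fin_cases x <;> rfl
    rwa [Function.Embedding.coeFn_mk, h2] at h1
  -- positivity of r
  have hr0 : 0 < r := by
    have hspan : affineSpan ℝ (Set.range v) = ⊤ := by
      rw [hv.affineSpan_eq_top_iff_card_eq_finrank_add_one]
      simp
    have hint : (interior T).Nonempty := by
      rw [hT, Convex.interior_nonempty_iff_affineSpan_eq_top (convex_convexHull ℝ _),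
        affineSpan_convexHull]
      exact hspan
    obtain ⟨x, hx⟩ := hint
    obtain ⟨ε, hε, hball'⟩ := Metric.isOpen_iff.mp isOpen_interior x hx
    have hsub : Metric.closedBall x (ε/2) ⊆ T :=
      (Metric.closedBall_subset_ball (by linarith)).trans (hball'.trans interior_subset)
    linarith [hmax x (ε/2) hsub]
  have hrh : h ≤ 2 * r * c₀ := by
    rw [div_le_iff₀ (by linarith : (0:ℝ) < 2 * r)] at hreg
    linarith
  -- inner products in coordinates
  have hip : ∀ x y : EuclideanSpace ℝ (Fin 3), (inner ℝ x y : ℝ) = ∑ i₀, x i₀ * y i₀ := by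
    intro x y
    rw [PiLp.inner_apply]
    simp [RCLike.inner_apply, mul_comm]
  have hnsq : ∀ x : EuclideanSpace ℝ (Fin 3), ‖x‖^2 = ∑ i₀, x i₀^2 := by
    intro x
    rw [← real_inner_self_eq_norm_sq, hip]
    exact Finset.sum_congr rfl fun _ _ => (sq _).symm
  -- edge vector and face vectors
  set a : EuclideanSpace ℝ (Fin 3) := v k - v j with ha
  set b : EuclideanSpace ℝ (Fin 3) := m - v j with hb
  have ha0 : a ≠ 0 := sub_ne_zero_of_ne (hvinj.ne (Ne.symm hjk))
  have hanorm : 0 < ‖a‖ := norm_pos_iff.mpr ha0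
  -- the line through v j and v k avoids the intrinsic interior of F
  have hline_span : ∀ t' : ℝ, (t' • a + v j : EuclideanSpace ℝ (Fin 3)) ∈ affineSpan ℝ F := by
    intro t'
    have h1 := AffineSubspace.smul_vsub_vadd_mem (affineSpan ℝ F) t'
      (subset_affineSpan ℝ F hvkF) (subset_affineSpan ℝ F hvjF) (subset_affineSpan ℝ F hvjF)
    simpa [ha] using h1
  have hline : ∀ t' : ℝ, (t' • a + v j : EuclideanSpace ℝ (Fin 3)) ∉ intrinsicInterior ℝ F := by
    intro t' hmem
    obtain ⟨p', hp'int, hp'⟩ := hmem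
    set p : EuclideanSpace ℝ (Fin 3) := t' • a + v j with hpdef
    have hpspan : p ∈ affineSpan ℝ F := hline_span t'
    have hvlspan : v l ∈ affineSpan ℝ F := subset_affineSpan ℝ F hvlF
    have hmem2 : ∀ s : ℝ, s • (p - v l) + p ∈ affineSpan ℝ F := by
      intro s
      have h1 := AffineSubspace.smul_vsub_vadd_mem (affineSpan ℝ F) s hpspan hvlspan hpspan
      simpa using h1
    set g : ℝ → (affineSpan ℝ F : Set (EuclideanSpace ℝ (Fin 3))) :=
      fun s => ⟨s • (p - v l) + p, hmem2 s⟩ with hg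
    have hgcont : Continuous g :=
      Continuous.subtype_mk ((continuous_id.smul continuous_const).add continuous_const) _
    have hg0 : g 0 ∈ interior ((↑) ⁻¹' F : Set (affineSpan ℝ F)) := by
      have he : g 0 = p' := Subtype.ext (by simp [hg, hp'])
      rw [he]; exact hp'int
    have hnhds : g ⁻¹' (interior ((↑) ⁻¹' F : Set (affineSpan ℝ F))) ∈ nhds (0:ℝ) :=
      (isOpen_interior.preimage hgcont).mem_nhds hg0
    obtain ⟨ε, hε0, hεsub⟩ := Metric.mem_nhds_iff.mp hnhds
    have hgε : g (ε/2) ∈ interior ((↑) ⁻¹' F : Set (affineSpan ℝ F)) := by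
      apply hεsub
      simp only [Metric.mem_ball, Real.dist_eq, sub_zero]
      rw [abs_of_pos (by linarith)]
      linarith
    have hqF : ((ε/2) • (p - v l) + p) ∈ F := by
      have h1 : g (ε/2) ∈ ((↑) ⁻¹' F : Set (affineSpan ℝ F)) := interior_subset hgε
      exact h1
    -- barycentric coordinates
    have hqhull : ((ε/2) • (p - v l) + p) ∈
        convexHull ℝ (↑({v j, v k, v l} : Finset (EuclideanSpace ℝ (Fin 3))) :
          Set (EuclideanSpace ℝ (Fin 3))) := by
      have hcoe : (↑({v j, v k, v l} : Finset (EuclideanSpace ℝ (Fin 3))) :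
          Set (EuclideanSpace ℝ (Fin 3))) = {v j, v k, v l} := by simp
      rw [hcoe, ← hFhull]
      exact hqF
    rw [Finset.convexHull_eq] at hqhull
    obtain ⟨wt, hwt0, hwt1, hwtq⟩ := hqhull
    have hne1 : v j ≠ v k := hvinj.ne hjk
    have hne2 : v j ≠ v l := hvinj.ne (Ne.symm hlj)
    have hne3 : v k ≠ v l := hvinj.ne (Ne.symm hlk)
    have hmemjk : v j ∉ ({v k, v l} : Finset (EuclideanSpace ℝ (Fin 3))) := by
      simp [hne1, hne2]
    have hmemkl : v k ∉ ({v l} : Finset (EuclideanSpace ℝ (Fin 3))) := by simp [hne3]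
    have hsum1 : wt (v j) + wt (v k) + wt (v l) = 1 := by
      rw [Finset.sum_insert hmemjk, Finset.sum_insert hmemkl, Finset.sum_singleton] at hwt1
      linarith
    have hsum3 : wt (v j) • v j + wt (v k) • v k + wt (v l) • v l = (ε/2) • (p - v l) + p := by
      rw [Finset.centerMass, hwt1, inv_one, one_smul,
        Finset.sum_insert hmemjk, Finset.sum_insert hmemkl, Finset.sum_singleton] at hwtq
      simpa [add_assoc] using hwtq
    have hrep : (ε/2) • (p - v l) + p =
        ((1+ε/2)*(1-t')) • v j + ((1+ε/2)*t') • v k + (-(ε/2)) • v l := by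
      rw [hpdef, ha]
      module
    set cw : Fin 3 → ℝ :=
      ![wt (v j) - (1+ε/2)*(1-t'), wt (v k) - (1+ε/2)*t', wt (v l) + ε/2] with hcw
    have hcwsum : Finset.univ.sum cw = 0 := by
      rw [Fin.sum_univ_three]
      simp only [hcw, Matrix.cons_val_zero, Matrix.cons_val_one, Matrix.head_cons,
        Matrix.cons_val_two, Matrix.tail_cons]
      ring_nf
      nlinarith [hsum1]
    have hcwvec : ∑ e, cw e • (![v j, v k, v l] : Fin 3 → EuclideanSpace ℝ (Fin 3)) e = 0 := by
      rw [Fin.sum_univ_three]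
      simp only [hcw, Matrix.cons_val_zero, Matrix.cons_val_one, Matrix.head_cons,
        Matrix.cons_val_two, Matrix.tail_cons]
      have hexp : (wt (v j) - (1+ε/2)*(1-t')) • v j + (wt (v k) - (1+ε/2)*t') • v k +
          (wt (v l) + ε/2) • v l =
          (wt (v j) • v j + wt (v k) • v k + wt (v l) • v l) -
          (((1+ε/2)*(1-t')) • v j + ((1+ε/2)*t') • v k + (-(ε/2)) • v l) := by
        module
      rw [hexp, hsum3, hrep, sub_self]
    have hzero := affineIndependent_iff.mp hu3 Finset.univ cw hcwsum
      (by simpa using hcwvec) 2 (Finset.mem_univ 2)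
    have : wt (v l) + ε/2 = 0 := by simpa [hcw] using hzero
    have hwtl : 0 ≤ wt (v l) := hwt0 (v l) (by simp)
    linarith
  -- w: the cross product of a and b
  set w : EuclideanSpace ℝ (Fin 3) := (WithLp.equiv 2 (Fin 3 → ℝ)).symm
    ![a 1 * b 2 - a 2 * b 1, a 2 * b 0 - a 0 * b 2, a 0 * b 1 - a 1 * b 0] with hw
  have hwi : ∀ i₀ : Fin 3, w i₀ =
      ![a 1 * b 2 - a 2 * b 1, a 2 * b 0 - a 0 * b 2, a 0 * b 1 - a 1 * b 0] i₀ := fun _ => rfl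
  have hsub_apply : ∀ (x y : EuclideanSpace ℝ (Fin 3)) (i₀ : Fin 3), (x - y) i₀ = x i₀ - y i₀ :=
    fun _ _ _ => rfl
  have hwa : (inner ℝ w a : ℝ) = 0 := by
    rw [hip, Fin.sum_univ_three, hwi, hwi, hwi]
    simp only [Matrix.cons_val_zero, Matrix.cons_val_one, Matrix.head_cons,
      Matrix.cons_val_two, Matrix.tail_cons]
    ring
  have hwb : (inner ℝ w b : ℝ) = 0 := by
    rw [hip, Fin.sum_univ_three, hwi, hwi, hwi]
    simp only [Matrix.cons_val_zero, Matrix.cons_val_one, Matrix.head_cons,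
      Matrix.cons_val_two, Matrix.tail_cons]
    ring
  have hw_sq : ‖w‖^2 = ‖a‖^2 * ‖b‖^2 - (inner ℝ a b : ℝ)^2 := by
    rw [hnsq, hnsq, hnsq, hip, Fin.sum_univ_three, Fin.sum_univ_three, Fin.sum_univ_three,
      Fin.sum_univ_three, hwi, hwi, hwi]
    simp only [Matrix.cons_val_zero, Matrix.cons_val_one, Matrix.head_cons,
      Matrix.cons_val_two, Matrix.tail_cons]
    ring
  -- the foot of the perpendicular from m to the line
  set t : ℝ := (inner ℝ a b : ℝ) / ‖a‖ ^ 2 with htdef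
  have hdistp : c₂ * h ≤ dist m (t • a + v j) :=
    le_trans hmdist (infDist_intrinsicFrontier_le hFclosed hmF (hline_span t) (hline t))
  have hbta : dist m (t • a + v j) = ‖b - t • a‖ := by
    rw [dist_eq_norm]
    congr 1
    rw [hb]
    abel
  have hmline : c₂ * h ≤ ‖b - t • a‖ := hbta ▸ hdistp
  have hbta0 : 0 < ‖b - t • a‖ := by
    rw [norm_pos_iff, sub_ne_zero]
    intro heq
    apply hline t
    rw [← heq, hb]
    convert hmF using 2
    abel
  have hw_norm : ‖w‖ = ‖a‖ * ‖b - t • a‖ := by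
    have hna : (0:ℝ) < ‖a‖^2 := by positivity
    have hexp : ‖b - t • a‖^2 = ‖b‖^2 - 2 * (inner ℝ b (t • a) : ℝ) + ‖t • a‖^2 :=
      norm_sub_sq_real b (t • a)
    have h1 : (inner ℝ b (t • a) : ℝ) = t * (inner ℝ a b : ℝ) := by
      rw [real_inner_smul_right, real_inner_comm]
    have h2 : ‖t • a‖^2 = t^2 * ‖a‖^2 := by
      rw [norm_smul, mul_pow, Real.norm_eq_abs, sq_abs]
    have hsq_eq : (‖a‖ * ‖b - t • a‖)^2 = ‖w‖^2 := by
      rw [mul_pow, hexp, h1, h2, hw_sq, htdef]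
      field_simp
      ring
    have h3 : 0 ≤ ‖a‖ * ‖b - t • a‖ := by positivity
    nlinarith [norm_nonneg w, hsq_eq, h3]
  have hw0 : 0 < ‖w‖ := by rw [hw_norm]; exact mul_pos hanorm hbta0
  -- span {a, b} is the direction of the affine span of F
  have hdirF : Submodule.span ℝ ({a, b} : Set (EuclideanSpace ℝ (Fin 3)))
      = (affineSpan ℝ F).direction := by
    have hd1 : (affineSpan ℝ F).direction
        = vectorSpan ℝ ({v j, v k, v l} : Set (EuclideanSpace ℝ (Fin 3))) := by
      rw [hFhull, affineSpan_convexHull, direction_affineSpan]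
    have hrange : Set.range (![v j, v k, v l] : Fin 3 → EuclideanSpace ℝ (Fin 3))
        = ({v j, v k, v l} : Set (EuclideanSpace ℝ (Fin 3))) := by
      ext y
      simp [Matrix.range_cons, Matrix.range_empty]
      tauto
    have hrankdir : Module.finrank ℝ (affineSpan ℝ F).direction = 2 := by
      rw [hd1, ← hrange]
      exact hu3.finrank_vectorSpan (by simp)
    have hadir : a ∈ (affineSpan ℝ F).direction := by
      have h1 := AffineSubspace.vsub_mem_direction
        (subset_affineSpan ℝ F hvkF) (subset_affineSpan ℝ F hvjF)
      simpa [ha] using h1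
    have hbdir : b ∈ (affineSpan ℝ F).direction := by
      have h1 := AffineSubspace.vsub_mem_direction
        (subset_affineSpan ℝ F hmemF) (subset_affineSpan ℝ F hvjF)
      simpa [hb] using h1
    have hle : Submodule.span ℝ ({a, b} : Set (EuclideanSpace ℝ (Fin 3)))
        ≤ (affineSpan ℝ F).direction := by
      rw [Submodule.span_le]
      rintro x (rfl | rfl)
      · exact hadir
      · exact hbdir
    have hb0 : b ≠ 0 := by
      intro heq
      apply hline 0
      have : m = v j := by
        have := heq
        rw [hb, sub_eq_zero] at this
        exact this
      rw [zero_smul, zero_add, ← this]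
      exact hmF
    have li2 : LinearIndependent ℝ ![a, b] := by
      rw [linearIndependent_fin2]
      constructor
      · simpa using hb0
      · intro s heq
        simp only [Matrix.cons_val_one, Matrix.head_cons, Matrix.cons_val_zero] at heq
        rcases eq_or_ne s 0 with rfl | hs
        · exact ha0 (by rw [← heq, zero_smul])
        · apply hline s⁻¹
          have hbeq : b = s⁻¹ • a := by
            rw [← heq, smul_smul, inv_mul_cancel₀ hs, one_smul]
          have : m = s⁻¹ • a + v j := by
            have h1 : m - v j = s⁻¹ • a := hb ▸ hbeq
            rw [← h1]; abel
          rw [← this]; exact hmF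
    have hrange2 : Set.range (![a, b] : Fin 2 → EuclideanSpace ℝ (Fin 3))
        = ({a, b} : Set (EuclideanSpace ℝ (Fin 3))) := by
      ext y
      simp [Matrix.range_cons, Matrix.range_empty]
      tauto
    have hspanrank : Module.finrank ℝ
        (Submodule.span ℝ ({a, b} : Set (EuclideanSpace ℝ (Fin 3)))) = 2 := by
      rw [← hrange2, finrank_span_eq_card li2]
      simp
    exact Submodule.eq_of_le_of_finrank_le hle (by rw [hrankdir, hspanrank])
  have hw_orth : ∀ x, x ∈ (affineSpan ℝ F).direction → (inner ℝ w x : ℝ) = 0 := by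
    intro x hx
    rw [← hdirF, Submodule.mem_span_pair] at hx
    obtain ⟨s1, s2, rfl⟩ := hx
    rw [inner_add_right, real_inner_smul_right, real_inner_smul_right, hwa, hwb]
    ring
  have hw_vert : ∀ x : Fin 4, x ≠ i → (inner ℝ w (v x - v j) : ℝ) = 0 := by
    intro x hx
    have hvxF : v x ∈ F := by
      rcases huniv x with rfl | rfl | rfl | rfl
      · exact absurd rfl hx
      · exact hvjF
      · exact hvkF
      · exact hvlF
    apply hw_orth
    have h1 := AffineSubspace.vsub_mem_direction
      (subset_affineSpan ℝ F hvxF) (subset_affineSpan ℝ F hvjF)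
    simpa using h1
  -- w is not orthogonal to v i - v j
  have hs0 : (inner ℝ w (v i - v j) : ℝ) ≠ 0 := by
    intro h0
    have hli4 := (affineIndependent_iff_linearIndependent_vsub ℝ v j).mp hv
    have htop : Submodule.span ℝ
        (Set.range fun x : {y : Fin 4 // y ≠ j} => v ↑x -ᵥ v j) = ⊤ := by
      apply Submodule.eq_top_of_finrank_eq
      rw [finrank_span_eq_card hli4, finrank_euclideanSpace_fin]
      rw [Fintype.card_subtype_compl, Fintype.card_subtype_eq]
      simp
    have hwmem : w ∈ Submodule.span ℝ
        (Set.range fun x : {y : Fin 4 // y ≠ j} => v ↑x -ᵥ v j) := htop ▸ Submodule.mem_top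
    obtain ⟨cf, hcf⟩ := (Submodule.mem_span_range_iff_exists_fun ℝ).mp hwmem
    have hww : (inner ℝ w w : ℝ) = 0 := by
      have hstep : (inner ℝ w w : ℝ)
          = inner ℝ w (∑ x : {y : Fin 4 // y ≠ j}, cf x • (v ↑x -ᵥ v j)) := by rw [hcf]
      rw [hstep, inner_sum]
      apply Finset.sum_eq_zero
      intro x _
      rw [real_inner_smul_right]
      have hx0 : (inner ℝ w (v ↑x -ᵥ v j) : ℝ) = 0 := by
        rcases eq_or_ne (x : Fin 4) i with hxi | hxi
        · rw [vsub_eq_sub, hxi]; exact h0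
        · rw [vsub_eq_sub]; exact hw_vert x hxi
      rw [hx0, mul_zero]
    have : w = 0 := inner_self_eq_zero.mp hww
    rw [this, norm_zero] at hw0
    exact lt_irrefl 0 hw0
  -- the incenter is far from the plane of F
  have hinner_lin : IsLinearMap ℝ (fun x : EuclideanSpace ℝ (Fin 3) => (inner ℝ w x : ℝ)) :=
    ⟨fun x y => inner_add_right w x y, fun c x => real_inner_smul_right w x c⟩
  have hzlow : r * ‖w‖ ≤ |(inner ℝ w (z - v j) : ℝ)| := by
    set s₀ : ℝ := (inner ℝ w (v i - v j) : ℝ) with hs₀def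
    set σ : ℝ := if 0 < s₀ then -1 else 1 with hσ
    have hσabs : |σ| = 1 := by rw [hσ]; split <;> simp
    have hσs : σ * s₀ < 0 := by
      rw [hσ]
      split
      · nlinarith [‹0 < s₀›]
      · have h1 : s₀ < 0 := lt_of_le_of_ne (not_lt.mp ‹¬0 < s₀›) hs0
        nlinarith
    set n : EuclideanSpace ℝ (Fin 3) := σ • w with hn
    have hnnorm : ‖n‖ = ‖w‖ := by rw [hn, norm_smul, Real.norm_eq_abs, hσabs, one_mul]
    have hn0 : (0:ℝ) < ‖n‖ := hnnorm ▸ hw0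
    have hnlin : IsLinearMap ℝ (fun x : EuclideanSpace ℝ (Fin 3) => (inner ℝ n x : ℝ)) :=
      ⟨fun x y => inner_add_right n x y, fun c x => real_inner_smul_right n x c⟩
    have hTsub : T ⊆ {x : EuclideanSpace ℝ (Fin 3) |
        (inner ℝ n x : ℝ) ≤ (inner ℝ n (v j) : ℝ)} := by
      rw [hT]
      apply convexHull_min _ (convex_halfSpace_le hnlin _)
      rintro x ⟨x₀, rfl⟩
      have hkey : (inner ℝ n (v x₀ - v j) : ℝ) ≤ 0 := by
        rcases eq_or_ne x₀ i with rfl | hx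
        · rw [hn, real_inner_smul_left]
          exact le_of_lt hσs
        · rw [hn, real_inner_smul_left, hw_vert x₀ hx, mul_zero]
      have hsplit : (inner ℝ n (v x₀) : ℝ) - (inner ℝ n (v j) : ℝ)
          = (inner ℝ n (v x₀ - v j) : ℝ) := (inner_sub_right n (v x₀) (v j)).symm
      have : (inner ℝ n (v x₀) : ℝ) - (inner ℝ n (v j) : ℝ) ≤ 0 := by rw [hsplit]; exact hkey
      simp only [Set.mem_setOf_eq]
      linarith
    have hball_pt : z + (r / ‖n‖) • n ∈ T := by
      apply hball
      rw [Metric.mem_closedBall, dist_eq_norm]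
      have : z + (r / ‖n‖) • n - z = (r / ‖n‖) • n := by abel
      rw [this, norm_smul, Real.norm_eq_abs, abs_of_pos (by positivity)]
      rw [div_mul_cancel₀ _ hn0.ne']
    have hhalf := hTsub hball_pt
    simp only [Set.mem_setOf_eq] at hhalf
    rw [inner_add_right, real_inner_smul_right, real_inner_self_eq_norm_sq] at hhalf
    have h2 : (inner ℝ n (z - v j) : ℝ) ≤ -(r * ‖n‖) := by
      rw [inner_sub_right]
      have h3 : r / ‖n‖ * ‖n‖^2 = r * ‖n‖ := by
        field_simp
      linarith
    have h4 : r * ‖w‖ ≤ -(inner ℝ n (z - v j) : ℝ) := by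
      rw [← hnnorm]
      linarith
    have h5 : r * ‖w‖ ≤ |(inner ℝ n (z - v j) : ℝ)| := le_trans h4 (neg_le_abs _)
    rw [hn, real_inner_smul_left, abs_mul, hσabs, one_mul] at h5
    exact h5
  -- the edge v j v k has length at least 2r
  have hedge : 2 * r ≤ ‖a‖ := by
    set x₁ : EuclideanSpace ℝ (Fin 3) := v i - v l with hx₁
    set x₂ : EuclideanSpace ℝ (Fin 3) := v j + v k - v l - v l with hx₂
    set W := Submodule.span ℝ ({x₁, x₂} : Set (EuclideanSpace ℝ (Fin 3))) with hW
    have hWperp : Wᗮ ≠ ⊥ := by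
      intro hbot
      have htop : W = ⊤ := Submodule.orthogonal_eq_bot_iff.mp hbot
      have hWrank : Module.finrank ℝ W ≤ 2 := by
        have h1 : ({x₁, x₂} : Set (EuclideanSpace ℝ (Fin 3)))
            = (↑({x₁, x₂} : Finset (EuclideanSpace ℝ (Fin 3))) :
              Set (EuclideanSpace ℝ (Fin 3))) := by simp
        rw [hW, h1]
        refine le_trans (finrank_span_finset_le_card _) ?_
        refine le_trans (Finset.card_insert_le _ _) ?_
        simp
      rw [htop, finrank_top, finrank_euclideanSpace_fin] at hWrank
      omega
    obtain ⟨u', hu'W, hu'0⟩ := Submodule.ne_bot_iff _ |>.mp hWperp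
    set u : EuclideanSpace ℝ (Fin 3) := ‖u'‖⁻¹ • u' with hu
    have hu'norm : (0:ℝ) < ‖u'‖ := norm_pos_iff.mpr hu'0
    have hunorm : ‖u‖ = 1 := by
      rw [hu, norm_smul, Real.norm_eq_abs, abs_of_pos (by positivity),
        inv_mul_cancel₀ hu'norm.ne']
    have hux : ∀ x, x ∈ W → (inner ℝ u x : ℝ) = 0 := by
      intro x hx
      have h1 : (inner ℝ x u' : ℝ) = 0 := (Submodule.mem_orthogonal W u').mp hu'W x hx
      rw [hu, real_inner_smul_left, real_inner_comm, h1, mul_zero]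
    have hx₁W : x₁ ∈ W := Submodule.subset_span (by simp)
    have hx₂W : x₂ ∈ W := Submodule.subset_span (by simp)
    have hδi : (inner ℝ u (v i) : ℝ) = (inner ℝ u (v l) : ℝ) := by
      have h1 := hux x₁ hx₁W
      rw [hx₁, inner_sub_right] at h1
      linarith
    have hδ2 : (inner ℝ u (v j) : ℝ) + (inner ℝ u (v k) : ℝ) = 2 * (inner ℝ u (v l) : ℝ) := by
      have h1 := hux x₂ hx₂W
      rw [hx₂, inner_sub_right, inner_sub_right, inner_add_right] at h1
      linarith
    have hulin : IsLinearMap ℝ (fun x : EuclideanSpace ℝ (Fin 3) => (inner ℝ u x : ℝ)) :=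
      ⟨fun x y => inner_add_right u x y, fun c x => real_inner_smul_right u x c⟩
    set α : ℝ := (inner ℝ u (v j) : ℝ) with hα
    set β : ℝ := (inner ℝ u (v k) : ℝ) with hβ
    have hvert_up : ∀ x₀ : Fin 4, (inner ℝ u (v x₀) : ℝ) ≤ max α β := by
      intro x₀
      have hj' : α ≤ max α β := le_max_left _ _
      have hk' : β ≤ max α β := le_max_right _ _
      rcases huniv x₀ with rfl | rfl | rfl | rfl
      · rw [hδi]; linarith [hδ2]
      · exact hj'
      · exact hk'
      · linarith [hδ2]
    have hvert_down : ∀ x₀ : Fin 4, min α β ≤ (inner ℝ u (v x₀) : ℝ) := by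
      intro x₀
      have hj' : min α β ≤ α := min_le_left _ _
      have hk' : min α β ≤ β := min_le_right _ _
      rcases huniv x₀ with rfl | rfl | rfl | rfl
      · rw [hδi]; linarith [hδ2]
      · exact hj'
      · exact hk'
      · linarith [hδ2]
    have hup : T ⊆ {x : EuclideanSpace ℝ (Fin 3) | (inner ℝ u x : ℝ) ≤ max α β} := by
      rw [hT]
      apply convexHull_min _ (convex_halfSpace_le hulin _)
      rintro x ⟨x₀, rfl⟩
      exact hvert_up x₀
    have hdown : T ⊆ {x : EuclideanSpace ℝ (Fin 3) | min α β ≤ (inner ℝ u x : ℝ)} := by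
      rw [hT]
      apply convexHull_min _ (convex_halfSpace_ge hulin _)
      rintro x ⟨x₀, rfl⟩
      exact hvert_down x₀
    have husq : (inner ℝ u u : ℝ) = 1 := by
      rw [real_inner_self_eq_norm_sq, hunorm, one_pow]
    have hz1 : (inner ℝ u z : ℝ) + r ≤ max α β := by
      have hmem : z + r • u ∈ T := by
        apply hball
        rw [Metric.mem_closedBall, dist_eq_norm]
        have : z + r • u - z = r • u := by abel
        rw [this, norm_smul, Real.norm_eq_abs, abs_of_pos hr0, hunorm, mul_one]
      have := hup hmem
      simp only [Set.mem_setOf_eq] at this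
      rw [inner_add_right, real_inner_smul_right, husq, mul_one] at this
      exact this
    have hz2 : min α β ≤ (inner ℝ u z : ℝ) - r := by
      have hmem : z - r • u ∈ T := by
        apply hball
        rw [Metric.mem_closedBall, dist_eq_norm]
        have : z - r • u - z = -(r • u) := by abel
        rw [this, norm_neg, norm_smul, Real.norm_eq_abs, abs_of_pos hr0, hunorm, mul_one]
      have := hdown hmem
      simp only [Set.mem_setOf_eq] at this
      rw [inner_sub_right, real_inner_smul_right, husq, mul_one] at this
      exact this
    have h2r : 2 * r ≤ max α β - min α β := by linarith
    rw [max_sub_min_eq_abs, abs_sub_comm] at h2r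
    calc 2 * r ≤ |α - β| := h2r
      _ = |(inner ℝ u (v j - v k) : ℝ)| := by rw [inner_sub_right]
      _ ≤ ‖u‖ * ‖v j - v k‖ := abs_real_inner_le_norm _ _
      _ = ‖a‖ := by
          rw [hunorm, one_mul, ← norm_neg, ha]
          congr 1
          abel
  -- the matrix with columns a, b, z - v j
  set dcols : Fin 3 → EuclideanSpace ℝ (Fin 3) := ![a, b, z - v j] with hdcols
  set M : Matrix (Fin 3) (Fin 3) ℝ := Matrix.of fun r' c' => dcols c' r' with hM
  set L : EuclideanSpace ℝ (Fin 3) →ₗ[ℝ] EuclideanSpace ℝ (Fin 3) :=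
    Matrix.toEuclideanLin M with hL
  have hdetM : LinearMap.det L = M.det := by
    rw [hL, Matrix.toEuclideanLin_eq_toLin_orthonormal, LinearMap.det_toLin]
  have hdet_inner : M.det = (inner ℝ w (z - v j) : ℝ) := by
    rw [Matrix.det_fin_three, hip, Fin.sum_univ_three, hwi, hwi, hwi]
    simp only [hM, hdcols, Matrix.of_apply, Matrix.cons_val_zero, Matrix.cons_val_one,
      Matrix.head_cons, Matrix.cons_val_two, Matrix.tail_cons]
    ring
  have hLe : ∀ i₀ : Fin 3, L (EuclideanSpace.single i₀ 1) = dcols i₀ := by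
    intro i₀
    have h1 : (EuclideanSpace.single i₀ (1:ℝ))
        = (WithLp.equiv 2 (Fin 3 → ℝ)).symm (Pi.single i₀ 1) := rfl
    rw [hL, h1, WithLp.equiv_symm_apply, Matrix.toEuclideanLin_apply_piLp_toLp,
      ← WithLp.equiv_symm_apply, Equiv.symm_apply_eq,
      Matrix.mulVec_single]
    funext r'
    show M r' i₀ * 1 = _
    simp only [hM, Matrix.of_apply, mul_one]
    rfl
  -- K as an affine image of the corner simplex hull
  set f : EuclideanSpace ℝ (Fin 3) →ᵃ[ℝ] EuclideanSpace ℝ (Fin 3) :=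
    AffineMap.mk' (fun x => v j + L x) L 0
      (by intro p'; simp [vadd_eq_add, map_zero]; abel) with hf
  have hf_apply : ∀ x, f x = v j + L x := fun x => rfl
  set SS : Set (EuclideanSpace ℝ (Fin 3)) := {0, EuclideanSpace.single 0 1,
    EuclideanSpace.single 1 1, EuclideanSpace.single 2 1} with hSS
  have himg : ⇑f '' SS = {v j, v k, m, z} := by
    rw [hSS, Set.image_insert_eq, Set.image_insert_eq, Set.image_insert_eq,
      Set.image_singleton]
    have e0 : f 0 = v j := by rw [hf_apply, map_zero, add_zero]
    have e1 : f (EuclideanSpace.single 0 1) = v k := by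
      rw [hf_apply, hLe 0]
      show v j + dcols 0 = v k
      simp only [hdcols, Matrix.cons_val_zero, ha]
      abel
    have e2 : f (EuclideanSpace.single 1 1) = m := by
      rw [hf_apply, hLe 1]
      show v j + dcols 1 = m
      show v j + b = m
      exact add_sub_cancel (v j) m
    have e3 : f (EuclideanSpace.single 2 1) = z := by
      rw [hf_apply, hLe 2]
      show v j + dcols 2 = z
      simp only [hdcols, Matrix.cons_val_two, Matrix.tail_cons, Matrix.head_cons]
      abel
    rw [e0, e1, e2, e3]
  have hKrep : K = ⇑f '' (convexHull ℝ SS) := by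
    rw [AffineMap.image_convexHull, himg, hK]
  -- the corner simplex is inside the hull of SS
  have hS₃hull : {x : EuclideanSpace ℝ (Fin 3) | (∀ i₀, 0 ≤ x i₀) ∧ (∑ i₀, x i₀) ≤ 1}
      ⊆ convexHull ℝ SS := by
    intro x hx
    obtain ⟨hx0, hx1⟩ := hx
    set wt4 : Fin 4 → ℝ := ![1 - ∑ i₀, x i₀, x 0, x 1, x 2] with hwt4
    set pts : Fin 4 → EuclideanSpace ℝ (Fin 3) := ![0, EuclideanSpace.single 0 1,
      EuclideanSpace.single 1 1, EuclideanSpace.single 2 1] with hpts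
    have hwt4sum : ∑ i₀, wt4 i₀ = 1 := by
      rw [Fin.sum_univ_four]
      simp only [hwt4, Matrix.cons_val_zero, Matrix.cons_val_one, Matrix.head_cons,
        Matrix.cons_val_two, Matrix.tail_cons, Matrix.cons_val_three]
      rw [Fin.sum_univ_three]
      ring
    have hwt4nn : ∀ i₀ ∈ Finset.univ, 0 ≤ wt4 i₀ := by
      intro i₀ _
      have hx0' : (0:ℝ) ≤ 1 - ∑ i₀, x i₀ := by linarith
      fin_cases i₀ <;> simp [hwt4] <;>
        first
          | linarith
          | exact hx0 0
          | exact hx0 1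
          | exact hx0 2
    have hptsmem : ∀ i₀ ∈ Finset.univ, pts i₀ ∈ SS := by
      intro i₀ _
      fin_cases i₀ <;> simp [hpts, hSS]
    have hmem := Finset.centerMass_mem_convexHull Finset.univ hwt4nn
      (by rw [hwt4sum]; norm_num) hptsmem
    have hcm : Finset.univ.centerMass wt4 pts = x := by
      rw [Finset.centerMass, hwt4sum, inv_one, one_smul, Fin.sum_univ_four]
      apply (WithLp.equiv 2 (Fin 3 → ℝ)).injective
      funext i₀
      have happ : ∀ (y : EuclideanSpace ℝ (Fin 3)), (WithLp.equiv 2 (Fin 3 → ℝ)) y i₀ = y i₀ :=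
        fun _ => rfl
      rw [happ, happ]
      show (wt4 0 • pts 0 + wt4 1 • pts 1 + wt4 2 • pts 2 + wt4 3 • pts 3) i₀ = x i₀
      have hadd : ∀ (y₁ y₂ : EuclideanSpace ℝ (Fin 3)), (y₁ + y₂) i₀ = y₁ i₀ + y₂ i₀ :=
        fun _ _ => rfl
      have hsmul : ∀ (c : ℝ) (y : EuclideanSpace ℝ (Fin 3)), (c • y) i₀ = c * y i₀ :=
        fun _ _ => rfl
      rw [hadd, hadd, hadd, hsmul, hsmul, hsmul, hsmul]
      simp only [hwt4, hpts, Matrix.cons_val_zero, Matrix.cons_val_one, Matrix.head_cons,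
        Matrix.cons_val_two, Matrix.tail_cons, Matrix.cons_val_three]
      rw [EuclideanSpace.single_apply, EuclideanSpace.single_apply,
        EuclideanSpace.single_apply]
      have hzero : (0 : EuclideanSpace ℝ (Fin 3)) i₀ = 0 := rfl
      rw [hzero]
      fin_cases i₀ <;> simp <;> ring
    rw [← hcm]
    exact hmem
  -- volume computation
  have hKcompact : IsCompact K := by
    rw [hK]
    exact Set.Finite.isCompact_convexHull ℝ
      (((Set.finite_singleton _).insert _ |>.insert _ |>.insert _))
  have hKvol : ENNReal.ofReal (|M.det| / 6) ≤ volume K := by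
    rw [hKrep]
    have himage : ⇑f '' (convexHull ℝ SS) = v j +ᵥ (⇑L '' (convexHull ℝ SS)) := by
      rw [← Set.image_vadd, ← Set.image_comp]
      rfl
    rw [himage, measure_vadd, Measure.addHaar_image_linearMap, hdetM]
    have h6 : (6 : ℝ≥0∞)⁻¹ ≤ volume (convexHull ℝ SS) :=
      le_trans corner_simplex_volume (measure_mono hS₃hull)
    calc ENNReal.ofReal (|M.det| / 6)
        = ENNReal.ofReal |M.det| * ENNReal.ofReal (6:ℝ)⁻¹ := by
          rw [← ENNReal.ofReal_mul (abs_nonneg _)]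
          ring_nf
      _ = ENNReal.ofReal |M.det| * (6:ℝ≥0∞)⁻¹ := by
          rw [ENNReal.ofReal_inv_of_pos (by norm_num)]
          norm_num
      _ ≤ ENNReal.ofReal |M.det| * volume (convexHull ℝ SS) := mul_le_mul_right h6 _
  have htoReal : |M.det| / 6 ≤ (volume K).toReal := by
    have h1 := ENNReal.toReal_mono hKcompact.measure_lt_top.ne hKvol
    rwa [ENNReal.toReal_ofReal (by positivity)] at h1
  have hdetlb : r * (2 * r * (c₂ * h)) ≤ |M.det| := by
    have h1 : 2 * r * (c₂ * h) ≤ ‖w‖ := by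
      rw [hw_norm]
      exact mul_le_mul hedge hmline (by positivity) (norm_nonneg a)
    have h2 : r * (2 * r * (c₂ * h)) ≤ r * ‖w‖ := mul_le_mul_of_nonneg_left h1 hr0.le
    rw [hdet_inner]
    exact le_trans h2 hzlow
  have hc0pos : (0:ℝ) < c₀ := lt_of_lt_of_le zero_lt_one hc₀
  have hfinal : c₂ / (12 * c₀ ^ 3) * h ^ 3 ≤ |M.det| / 6 := by
    have h12 : (0:ℝ) < 12 * c₀ ^ 3 := by
      have := pow_pos hc0pos 3
      linarith
    rw [div_mul_eq_mul_div, div_le_div_iff₀ h12 (by norm_num : (0:ℝ) < 6)]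
    have hrc0 : (0:ℝ) ≤ 2 * r * c₀ := by nlinarith
    have H1 : c₂ * h * (h * h) ≤ c₂ * h * ((2*r*c₀) * (2*r*c₀)) :=
      mul_le_mul_of_nonneg_left (mul_le_mul hrh hrh hh0 hrc0) (mul_nonneg hc₂.le hh0)
    have H2 : 0 ≤ (c₀ - 1) * (c₂ * h * (r * r) * (c₀ * c₀)) :=
      mul_nonneg (by linarith)
        (mul_nonneg (mul_nonneg (mul_nonneg hc₂.le hh0) (mul_nonneg hr0.le hr0.le))
          (mul_nonneg hc0pos.le hc0pos.le))
    have H3 : (r * (2 * r * (c₂ * h))) * (12 * c₀ ^ 3) ≤ |M.det| * (12 * c₀ ^ 3) :=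
      mul_le_mul_of_nonneg_right hdetlb (by linarith)
    nlinarith [H1, H2, H3]
  exact le_trans hfinal htoReal
end

section
/- Let c₀ ≥ 1 and let T be a nondegenerate tetrahedron in ℝ³ with diameter h_T, insphere diameter ρ_T, and incenter z_T, satisfying h_T/ρ_T ≤ c₀. Let F be a face of T, let m be the barycenter (centroid) of F, and let e = [x₁, x₂] be an edge of F. Then the tetrahedron K = conv{x₁, x₂, m, z_T} satisfies h_K/ρ_K ≤ 2π c₀³ / c₂, where c₂ = min{ 𝔠₂, (3c₀)⁻¹ } and 𝔠₂ = (2c₀)⁻¹ · √(−1 + 2/(1 + √(1 − c₀⁻²))). -/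
open Metric Set

section Helpers
noncomputable def crossE (a b : EuclideanSpace ℝ (Fin 3)) : EuclideanSpace ℝ (Fin 3) :=
  WithLp.toLp 2 ![a 1 * b 2 - a 2 * b 1, a 2 * b 0 - a 0 * b 2, a 0 * b 1 - a 1 * b 0]
lemma inner3 (x y : EuclideanSpace ℝ (Fin 3)) :
    (inner ℝ x y : ℝ) = x 0 * y 0 + x 1 * y 1 + x 2 * y 2 := by
  simp [PiLp.inner_apply, Fin.sum_univ_three, RCLike.inner_apply, mul_comm]
lemma crossE_0 (a b : EuclideanSpace ℝ (Fin 3)) : crossE a b 0 = a 1 * b 2 - a 2 * b 1 := rfl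
lemma crossE_1 (a b : EuclideanSpace ℝ (Fin 3)) : crossE a b 1 = a 2 * b 0 - a 0 * b 2 := rfl
lemma crossE_2 (a b : EuclideanSpace ℝ (Fin 3)) : crossE a b 2 = a 0 * b 1 - a 1 * b 0 := rfl
lemma norm_sq3 (x : EuclideanSpace ℝ (Fin 3)) : ‖x‖ ^ 2 = x 0 ^ 2 + x 1 ^ 2 + x 2 ^ 2 := by
  rw [← real_inner_self_eq_norm_sq, inner3]; ring
lemma sub3 (a b : EuclideanSpace ℝ (Fin 3)) (s : Fin 3) : (a - b) s = a s - b s := rfl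
lemma add3 (a b : EuclideanSpace ℝ (Fin 3)) (s : Fin 3) : (a + b) s = a s + b s := rfl
lemma smul3 (c : ℝ) (a : EuclideanSpace ℝ (Fin 3)) (s : Fin 3) : (c • a) s = c * a s := rfl

lemma norm_crossE_le (a b : EuclideanSpace ℝ (Fin 3)) : ‖crossE a b‖ ≤ ‖a‖ * ‖b‖ := by
  have lag : ‖crossE a b‖ ^ 2 + (inner ℝ a b : ℝ) ^ 2 = ‖a‖ ^ 2 * ‖b‖ ^ 2 := by
    rw [norm_sq3, norm_sq3, norm_sq3, inner3, crossE_0, crossE_1, crossE_2]; ring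
  nlinarith [norm_nonneg (crossE a b), mul_nonneg (norm_nonneg a) (norm_nonneg b),
    sq_nonneg (inner ℝ a b : ℝ)]

lemma crossE_cyclic (a b c : EuclideanSpace ℝ (Fin 3)) :
    (inner ℝ (crossE a b) c : ℝ) = (inner ℝ (crossE b c) a : ℝ) := by
  rw [inner3, inner3, crossE_0, crossE_1, crossE_2, crossE_0, crossE_1, crossE_2]; ring

lemma crossE_sum (a b c : EuclideanSpace ℝ (Fin 3)) :
    crossE b c + crossE c a + crossE a b = crossE (b - a) (c - a) := by
  have h0 : (crossE b c + crossE c a + crossE a b) 0 = crossE (b - a) (c - a) 0 := by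
    simp only [add3, crossE_0, sub3]; ring
  have h1 : (crossE b c + crossE c a + crossE a b) 1 = crossE (b - a) (c - a) 1 := by
    simp only [add3, crossE_1, sub3]; ring
  have h2 : (crossE b c + crossE c a + crossE a b) 2 = crossE (b - a) (c - a) 2 := by
    simp only [add3, crossE_2, sub3]; ring
  ext s
  fin_cases s
  exacts [h0, h1, h2]

lemma cramer3 (u μ ζ η : EuclideanSpace ℝ (Fin 3)) :
    (inner ℝ (crossE u μ) ζ : ℝ) • η =
      (inner ℝ (crossE μ ζ) η : ℝ) • u + (inner ℝ (crossE ζ u) η : ℝ) • μ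
        + (inner ℝ (crossE u μ) η : ℝ) • ζ := by
  set R := (inner ℝ (crossE μ ζ) η : ℝ) • u + (inner ℝ (crossE ζ u) η : ℝ) • μ
        + (inner ℝ (crossE u μ) η : ℝ) • ζ with hR
  have h0 : ((inner ℝ (crossE u μ) ζ : ℝ) • η) 0 = R 0 := by
    simp only [hR, add3, smul3, inner3, crossE_0, crossE_1, crossE_2, Fin.sum_univ_three]; ring
  have h1 : ((inner ℝ (crossE u μ) ζ : ℝ) • η) 1 = R 1 := by
    simp only [hR, add3, smul3, inner3, crossE_0, crossE_1, crossE_2, Fin.sum_univ_three]; ring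
  have h2 : ((inner ℝ (crossE u μ) ζ : ℝ) • η) 2 = R 2 := by
    simp only [hR, add3, smul3, inner3, crossE_0, crossE_1, crossE_2, Fin.sum_univ_three]; ring
  ext s
  fin_cases s
  exacts [h0, h1, h2]

lemma inner_crossE_left (a b : EuclideanSpace ℝ (Fin 3)) : (inner ℝ (crossE a b) a : ℝ) = 0 := by
  rw [inner3, crossE_0, crossE_1, crossE_2]; ring
lemma inner_crossE_right (a b : EuclideanSpace ℝ (Fin 3)) : (inner ℝ (crossE a b) b : ℝ) = 0 := by
  rw [inner3, crossE_0, crossE_1, crossE_2]; ring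

lemma vec4_2 {X : Type*} (a b c d : X) : ![a, b, c, d] 2 = c := rfl
lemma vec4_3 {X : Type*} (a b c d : X) : ![a, b, c, d] 3 = d := rfl

end Helpers


lemma slab_lemma (v : Fin 4 → EuclideanSpace ℝ (Fin 3)) (hv : AffineIndependent ℝ v)
    (z : EuclideanSpace ℝ (Fin 3)) (r : ℝ) (hr : 0 ≤ r)
    (hball : Metric.closedBall z r ⊆ convexHull ℝ (Set.range v))
    (a : Fin 4) (q : EuclideanSpace ℝ (Fin 3))
    (hq : q ∈ affineSpan ℝ (v '' ({a}ᶜ : Set (Fin 4)))) :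
    2 * r ≤ dist (v a) q := by
  set S := affineSpan ℝ (v '' ({a}ᶜ : Set (Fin 4))) with hS
  obtain ⟨b, hb⟩ := exists_ne a
  have hvbS : v b ∈ S := subset_affineSpan ℝ _ ⟨b, hb, rfl⟩
  haveI : Nonempty S := ⟨⟨v b, hvbS⟩⟩
  have hva : v a ∉ S := by
    have h := hv.notMem_affineSpan_diff a Set.univ
    rwa [← Set.compl_eq_univ_diff] at h
  set p0 : EuclideanSpace ℝ (Fin 3) := ↑(EuclideanGeometry.orthogonalProjection S (v a)) with hp0
  have hp0S : p0 ∈ S := (EuclideanGeometry.orthogonalProjection S (v a)).2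
  set n0 : EuclideanSpace ℝ (Fin 3) := v a - p0 with hn0
  have hn0orth : n0 ∈ S.directionᗮ := by
    have := EuclideanGeometry.vsub_orthogonalProjection_mem_direction_orthogonal S (v a)
    simpa [hn0, vsub_eq_sub] using this
  have hn0ne : n0 ≠ 0 := by
    intro h
    apply hva
    have : v a = p0 := by rwa [hn0, sub_eq_zero] at h
    rw [this]; exact hp0S
  set d : ℝ := ‖n0‖ with hd
  have hdpos : 0 < d := norm_pos_iff.mpr hn0ne
  have hinner_n0 : ∀ x ∈ S, (inner ℝ n0 (x - p0) : ℝ) = 0 := by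
    intro x hx
    have hdir : x - p0 ∈ S.direction := by
      simpa [vsub_eq_sub] using AffineSubspace.vsub_mem_direction hx hp0S
    exact (Submodule.mem_orthogonal' S.direction n0).mp hn0orth _ hdir
  have hlin : IsLinearMap ℝ (fun x : EuclideanSpace ℝ (Fin 3) => (inner ℝ n0 x : ℝ)) :=
    ⟨fun x y => inner_add_right n0 x y, fun c x => real_inner_smul_right n0 x c⟩
  set β : ℝ := inner ℝ n0 p0 with hβ
  have hga : (inner ℝ n0 (v a) : ℝ) = β + d ^ 2 := by
    have : v a = p0 + n0 := by rw [hn0]; abel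
    rw [this, inner_add_right, hβ, ← real_inner_self_eq_norm_sq]
  have hgS : ∀ x ∈ S, (inner ℝ n0 x : ℝ) = β := by
    intro x hx
    have := hinner_n0 x hx
    rw [inner_sub_right] at this
    linarith
  have hhull : convexHull ℝ (Set.range v) ⊆ {x | β ≤ (inner ℝ n0 x : ℝ)} ∩
      {x | (inner ℝ n0 x : ℝ) ≤ β + d ^ 2} := by
    apply convexHull_min
    · rintro _ ⟨c, rfl⟩
      by_cases hc : c = a
      · subst hc
        constructor
        · simp only [Set.mem_setOf_eq, hga]; nlinarith
        · simp only [Set.mem_setOf_eq, hga]; exact le_refl _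
      · have hcS : v c ∈ S := subset_affineSpan ℝ _ ⟨c, hc, rfl⟩
        have := hgS _ hcS
        constructor
        · simp only [Set.mem_setOf_eq, this]; exact le_refl _
        · simp only [Set.mem_setOf_eq, this]; nlinarith
    · exact (convex_halfSpace_ge hlin β).inter (convex_halfSpace_le hlin (β + d ^ 2))
  have hzplus : z + (r / d) • n0 ∈ Metric.closedBall z r := by
    rw [Metric.mem_closedBall, dist_eq_norm]
    simp only [add_sub_cancel_left]
    rw [norm_smul, Real.norm_eq_abs, abs_of_nonneg (by positivity)]
    rw [← hd, div_mul_cancel₀]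
    exact hdpos.ne'
  have hzminus : z - (r / d) • n0 ∈ Metric.closedBall z r := by
    rw [Metric.mem_closedBall, dist_eq_norm]
    simp only [sub_sub_cancel_left, norm_neg]
    rw [norm_smul, Real.norm_eq_abs, abs_of_nonneg (by positivity)]
    rw [← hd, div_mul_cancel₀]
    exact hdpos.ne'
  have h1 := (hhull (hball hzplus)).2
  have h2 := (hhull (hball hzminus)).1
  simp only [Set.mem_setOf_eq, inner_add_right, inner_sub_right, real_inner_smul_right,
    ← real_inner_self_eq_norm_sq] at h1 h2
  have hself : (inner ℝ n0 n0 : ℝ) = d ^ 2 := by rw [real_inner_self_eq_norm_sq]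
  rw [hself] at h1 h2
  have h2rd : 2 * r ≤ d := by
    have e1 : (inner ℝ n0 z : ℝ) + r * d ≤ β + d ^ 2 := by
      have : r / d * d ^ 2 = r * d := by field_simp
      nlinarith [h1]
    have e2 : β ≤ (inner ℝ n0 z : ℝ) - r * d := by
      have : r / d * d ^ 2 = r * d := by field_simp
      nlinarith [h2]
    nlinarith
  -- finally
  have hq' : (inner ℝ n0 q : ℝ) = β := hgS q hq
  have hfin : d ^ 2 ≤ d * dist (v a) q := by
    have : (inner ℝ n0 (v a - q) : ℝ) = d ^ 2 := by
      rw [inner_sub_right, hga, hq']; ring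
    calc d ^ 2 = (inner ℝ n0 (v a - q) : ℝ) := this.symm
      _ ≤ ‖n0‖ * ‖v a - q‖ := real_inner_le_norm _ _
      _ = d * dist (v a) q := by rw [dist_eq_norm]
  have : d ≤ dist (v a) q := by
    nlinarith [hdpos]
  linarith


set_option maxHeartbeats 4000000 in
/-- Let `c₀ ≥ 1` and let `T` be a nondegenerate tetrahedron in `ℝ³` with
diameter `h_T`, insphere diameter `ρ_T = 2 * r`, and incenter `z` (center of the largest
closed ball contained in `T`), satisfying `h_T/ρ_T ≤ c₀`.  Let `F` be the face of `T` opposite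
the vertex `v i`, let `m` be the barycenter (centroid) of `F`, and let `e = [v j, v k]`
(`j, k ≠ i`, `j ≠ k`) be an edge of `F`.  Then the tetrahedron `K = conv {v j, v k, m, z}`
satisfies `h_K/ρ_K ≤ 2π c₀³ / c₂`, where `c₂ = min {𝔠₂, (3c₀)⁻¹}` and
`𝔠₂ = (2c₀)⁻¹ · √(−1 + 2/(1 + √(1 − c₀⁻²)))`. -/
theorem shape_regularity_worsey_farin_boundary
    (c₀ : ℝ) (hc₀ : 1 ≤ c₀)
    (v : Fin 4 → EuclideanSpace ℝ (Fin 3))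
    (hv : AffineIndependent ℝ v)
    (T : Set (EuclideanSpace ℝ (Fin 3)))
    (hT : T = convexHull ℝ (Set.range v))
    (z : EuclideanSpace ℝ (Fin 3)) (r : ℝ)
    (hball : Metric.closedBall z r ⊆ T)
    (hmax : ∀ (z' : EuclideanSpace ℝ (Fin 3)) (r' : ℝ),
      Metric.closedBall z' r' ⊆ T → r' ≤ r)
    (hreg : Metric.diam T / (2 * r) ≤ c₀)
    (i j k : Fin 4) (hji : j ≠ i) (hki : k ≠ i) (hjk : j ≠ k)
    (F : Set (EuclideanSpace ℝ (Fin 3)))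
    (hF : F = convexHull ℝ (v '' ({i}ᶜ : Set (Fin 4))))
    (m : EuclideanSpace ℝ (Fin 3))
    (hm : m = (3 : ℝ)⁻¹ • ∑ l ∈ ({i}ᶜ : Finset (Fin 4)), v l)
    (K : Set (EuclideanSpace ℝ (Fin 3)))
    (hK : K = convexHull ℝ {v j, v k, m, z})
    (zK : EuclideanSpace ℝ (Fin 3)) (rK : ℝ)
    (hballK : Metric.closedBall zK rK ⊆ K)
    (hmaxK : ∀ (z' : EuclideanSpace ℝ (Fin 3)) (r' : ℝ),
      Metric.closedBall z' r' ⊆ K → r' ≤ rK) :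
    Metric.diam K / (2 * rK) ≤ 2 * Real.pi * c₀ ^ 3 /
      min ((2 * c₀)⁻¹ * Real.sqrt (-1 + 2 / (1 + Real.sqrt (1 - (c₀ ^ 2)⁻¹))))
        (3 * c₀)⁻¹ := by
  -- the fourth index
  have hex : ∀ i' j' k' : Fin 4, j' ≠ i' → k' ≠ i' → j' ≠ k' →
      ∃ l' : Fin 4, l' ≠ i' ∧ l' ≠ j' ∧ l' ≠ k' := by decide
  obtain ⟨l, hli, hlj, hlk⟩ := hex i j k hji hki hjk
  have hcover' : ∀ i' j' k' l' : Fin 4, j' ≠ i' → k' ≠ i' → j' ≠ k' → l' ≠ i' → l' ≠ j' →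
      l' ≠ k' → ∀ b : Fin 4, b = i' ∨ b = j' ∨ b = k' ∨ b = l' := by decide
  have hcover := hcover' i j k l hji hki hjk hli hlj hlk
  have hfinset' : ∀ i' j' k' l' : Fin 4, j' ≠ i' → k' ≠ i' → j' ≠ k' → l' ≠ i' → l' ≠ j' →
      l' ≠ k' → ({i'}ᶜ : Finset (Fin 4)) = {j', k', l'} := by decide
  have hfinset := hfinset' i j k l hji hki hjk hli hlj hlk
  -- r is positive
  have hTconv : Convex ℝ T := hT ▸ convex_convexHull ℝ _
  have hspan : affineSpan ℝ (Set.range v) = ⊤ := by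
    rw [hv.affineSpan_eq_top_iff_card_eq_finrank_add_one]
    simp [finrank_euclideanSpace_fin]
  have hint : (interior T).Nonempty := by
    rw [hTconv.interior_nonempty_iff_affineSpan_eq_top, hT, affineSpan_convexHull]
    exact hspan
  obtain ⟨x, hx⟩ := hint
  obtain ⟨ε, hε, hballx⟩ := Metric.isOpen_iff.mp isOpen_interior x hx
  have hrpos : 0 < r := by
    have hsub : Metric.closedBall x (ε / 2) ⊆ T :=
      (Metric.closedBall_subset_ball (by linarith)).trans (hballx.trans interior_subset)
    have := hmax _ _ hsub
    linarith
  have hr : 0 ≤ r := hrpos.le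
  have hballT : Metric.closedBall z r ⊆ convexHull ℝ (Set.range v) := hT ▸ hball
  -- the explicit formula for m
  have hm' : m = (3 : ℝ)⁻¹ • (v j + (v k + v l)) := by
    rw [hm, hfinset, Finset.sum_insert (by simp [hjk, hlj.symm]),
      Finset.sum_insert (by simp [hlk.symm]), Finset.sum_singleton]
  -- basic vectors
  set u : EuclideanSpace ℝ (Fin 3) := v k - v j with hu
  set lam : EuclideanSpace ℝ (Fin 3) := v l - v j with hlam
  set ζ : EuclideanSpace ℝ (Fin 3) := z - v j with hζ
  set μ : EuclideanSpace ℝ (Fin 3) := m - v j with hμdef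
  have hμ : μ = (3 : ℝ)⁻¹ • (u + lam) := by
    rw [hμdef, hm', hu, hlam]; module
  -- edge length bound
  have hunorm : 2 * r ≤ ‖u‖ := by
    have hmem : v j ∈ affineSpan ℝ (v '' ({k}ᶜ : Set (Fin 4))) :=
      subset_affineSpan ℝ _ ⟨j, hjk, rfl⟩
    have := slab_lemma v hv z r hr hballT k (v j) hmem
    rwa [dist_eq_norm] at this
  -- distance from v l to the line through v j, v k
  have hcross_ul : ‖u‖ * (2 * r) ≤ ‖crossE u lam‖ := by
    have hupos : (0:ℝ) < ‖u‖ := by nlinarith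
    have hune : ‖u‖ ≠ 0 := hupos.ne'
    set t : ℝ := (inner ℝ u lam : ℝ) / ‖u‖ ^ 2 with ht
    have hqmem : v j + t • u ∈ affineSpan ℝ (v '' ({l}ᶜ : Set (Fin 4))) := by
      have hjm : v j ∈ affineSpan ℝ (v '' ({l}ᶜ : Set (Fin 4))) :=
        subset_affineSpan ℝ _ ⟨j, hlj.symm, rfl⟩
      have hkm : v k ∈ affineSpan ℝ (v '' ({l}ᶜ : Set (Fin 4))) :=
        subset_affineSpan ℝ _ ⟨k, hlk.symm, rfl⟩
      have := AffineSubspace.smul_vsub_vadd_mem _ t hkm hjm hjm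
      simpa [vsub_eq_sub, hu, add_comm] using this
    have hdist : 2 * r ≤ ‖lam - t • u‖ := by
      have := slab_lemma v hv z r hr hballT l (v j + t • u) hqmem
      rw [dist_eq_norm] at this
      have heq : v l - (v j + t • u) = lam - t • u := by rw [hlam]; abel
      rwa [heq] at this
    have lag : ‖crossE u lam‖ ^ 2 + (inner ℝ u lam : ℝ) ^ 2 = ‖u‖ ^ 2 * ‖lam‖ ^ 2 := by
      rw [norm_sq3, norm_sq3, norm_sq3, inner3, crossE_0, crossE_1, crossE_2]; ring
    have hexp : ‖lam - t • u‖ ^ 2 = ‖lam‖ ^ 2 - 2 * t * (inner ℝ u lam : ℝ) + t ^ 2 * ‖u‖ ^ 2 := by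
      rw [norm_sub_sq_real, real_inner_smul_right, norm_smul, Real.norm_eq_abs]
      rw [real_inner_comm]
      ring_nf
      rw [sq_abs]
    have htip : t * ‖u‖ ^ 2 = (inner ℝ u lam : ℝ) := by
      rw [ht]; field_simp
    have hkey : ‖crossE u lam‖ ^ 2 = ‖u‖ ^ 2 * ‖lam - t • u‖ ^ 2 := by
      rw [hexp]
      linear_combination lag + ((inner ℝ u lam : ℝ) - t * ‖u‖ ^ 2) * htip
    have hX : 0 ≤ ‖u‖ * (2 * r) := mul_nonneg (norm_nonneg u) (by linarith)
    have h3 : (2 * r) ^ 2 ≤ ‖lam - t • u‖ ^ 2 := by nlinarith [hdist, hr]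
    have h2 : (‖u‖ * (2 * r)) ^ 2 ≤ ‖crossE u lam‖ ^ 2 := by
      rw [hkey]
      nlinarith [mul_le_mul_of_nonneg_left h3 (sq_nonneg ‖u‖)]
    nlinarith [h2, hX, norm_nonneg (crossE u lam)]
  -- cross product with μ
  have hcrossμ : crossE u μ = (3 : ℝ)⁻¹ • crossE u lam := by
    rw [hμ]
    have h0 : crossE u ((3:ℝ)⁻¹ • (u + lam)) 0 = ((3:ℝ)⁻¹ • crossE u lam) 0 := by
      simp only [crossE_0, smul3, add3]; ring
    have h1 : crossE u ((3:ℝ)⁻¹ • (u + lam)) 1 = ((3:ℝ)⁻¹ • crossE u lam) 1 := by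
      simp only [crossE_1, smul3, add3]; ring
    have h2 : crossE u ((3:ℝ)⁻¹ • (u + lam)) 2 = ((3:ℝ)⁻¹ • crossE u lam) 2 := by
      simp only [crossE_2, smul3, add3]; ring
    ext s; fin_cases s; exacts [h0, h1, h2]
  set w : EuclideanSpace ℝ (Fin 3) := crossE u μ with hw
  set N : ℝ := ‖w‖ with hN
  have hNlow : (3 : ℝ)⁻¹ * (‖u‖ * (2 * r)) ≤ N := by
    rw [hN, hcrossμ, norm_smul, Real.norm_eq_abs]
    have : |(3:ℝ)⁻¹| = (3:ℝ)⁻¹ := abs_of_pos (by norm_num)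
    rw [this]
    have h3 : (0:ℝ) < (3:ℝ)⁻¹ := by norm_num
    nlinarith [hcross_ul]
  have hNpos : 0 < N := by nlinarith [hunorm, hrpos]
  -- inner ℝ products of w with u, lam
  have hwu : (inner ℝ w u : ℝ) = 0 := by
    rw [hw]; exact inner_crossE_left u μ
  have hwμ : (inner ℝ w μ : ℝ) = 0 := by
    rw [hw]; exact inner_crossE_right u μ
  have hwlam : (inner ℝ w lam : ℝ) = 0 := by
    have hlameq : lam = (3 : ℝ) • μ - u := by
      rw [hμ]; module
    rw [hlameq, inner_sub_right, real_inner_smul_right, hwμ, hwu]; ring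
  -- half-space estimate
  have half : ∀ w' : EuclideanSpace ℝ (Fin 3),
      (∀ b : Fin 4, (inner ℝ w' (v j) : ℝ) ≤ inner ℝ w' (v b)) →
      (inner ℝ w' (v j) : ℝ) + r * ‖w'‖ ≤ inner ℝ w' z := by
    intro w' hwv
    by_cases hw0 : w' = 0
    · simp [hw0]
    have hwnorm : (0:ℝ) < ‖w'‖ := norm_pos_iff.mpr hw0
    have hlin : IsLinearMap ℝ (fun x : EuclideanSpace ℝ (Fin 3) => (inner ℝ w' x : ℝ)) :=
      ⟨fun a b => inner_add_right w' a b, fun c a => real_inner_smul_right w' a c⟩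
    have hTsub : T ⊆ {x | (inner ℝ w' (v j) : ℝ) ≤ inner ℝ w' x} := by
      rw [hT]
      apply convexHull_min
      · rintro _ ⟨b, rfl⟩; exact hwv b
      · exact convex_halfSpace_ge hlin _
    have hzmem : z - (r / ‖w'‖) • w' ∈ T := by
      apply hball
      rw [Metric.mem_closedBall, dist_eq_norm]
      simp only [sub_sub_cancel_left, norm_neg]
      rw [norm_smul, Real.norm_eq_abs, abs_of_nonneg (by positivity), div_mul_cancel₀]
      exact hwnorm.ne'
    have := hTsub hzmem
    simp only [Set.mem_setOf_eq, inner_sub_right, real_inner_smul_right,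
      real_inner_self_eq_norm_sq] at this
    have hrw : r / ‖w'‖ * ‖w'‖ ^ 2 = r * ‖w'‖ := by field_simp
    nlinarith [this]
  -- |Δ| ≥ r * N
  set Δ : ℝ := inner ℝ w ζ with hΔ
  have habsΔ : r * N ≤ |Δ| := by
    have hsplit : ∀ b : Fin 4, (inner ℝ w (v b) : ℝ) = inner ℝ w (v j) + inner ℝ w (v b - v j) := by
      intro b; rw [inner_sub_right]; ring
    have hk' : (inner ℝ w (v k - v j) : ℝ) = 0 := hwu
    have hl' : (inner ℝ w (v l - v j) : ℝ) = 0 := hwlam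
    have hΔval : (inner ℝ w z : ℝ) - inner ℝ w (v j) = Δ := by
      rw [hΔ, hζ, inner_sub_right]
    rcases le_or_gt 0 (inner ℝ w (v i - v j) : ℝ) with hs0 | hs0
    · have hwv : ∀ b : Fin 4, (inner ℝ w (v j) : ℝ) ≤ inner ℝ w (v b) := by
        intro b
        rcases hcover b with hb | hb | hb | hb <;> rw [hb]
        · rw [hsplit i]; linarith
        · rw [hsplit k, hk']; simp
        · rw [hsplit l, hl']; simp
      have hhalf := half w hwv
      rw [← hN] at hhalf
      have : r * N ≤ Δ := by linarith
      exact le_abs.mpr (Or.inl this)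
    · have hwv : ∀ b : Fin 4, (inner ℝ (-w) (v j) : ℝ) ≤ inner ℝ (-w) (v b) := by
        intro b
        simp only [inner_neg_left, neg_le_neg_iff]
        rcases hcover b with hb | hb | hb | hb <;> rw [hb]
        · rw [hsplit i]; linarith
        · rw [hsplit k, hk']; simp
        · rw [hsplit l, hl']; simp
      have hhalf := half (-w) hwv
      simp only [inner_neg_left, norm_neg] at hhalf
      rw [← hN] at hhalf
      have : r * N ≤ -Δ := by linarith
      exact le_abs.mpr (Or.inr this)
  have hΔlow : 4 / 3 * r ^ 3 ≤ |Δ| := by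
    have h1 : (2 * r) * (2 * r) ≤ ‖u‖ * (2 * r) :=
      mul_le_mul_of_nonneg_right hunorm (by linarith)
    have h2 : (3:ℝ)⁻¹ * ((2 * r) * (2 * r)) ≤ (3:ℝ)⁻¹ * (‖u‖ * (2 * r)) := by linarith
    have h3 : (3:ℝ)⁻¹ * ((2 * r) * (2 * r)) ≤ N := by linarith [hNlow]
    have h4 : r * ((3:ℝ)⁻¹ * ((2 * r) * (2 * r))) ≤ r * N :=
      mul_le_mul_of_nonneg_left h3 hr
    have h5 : 4 / 3 * r ^ 3 = r * ((3:ℝ)⁻¹ * ((2 * r) * (2 * r))) := by ring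
    linarith [habsΔ]
  have hΔpos : 0 < |Δ| := by nlinarith [hrpos]
  have hΔne : Δ ≠ 0 := by
    intro h; rw [h] at hΔpos; simp at hΔpos
  -- points in T and the diameter bound
  have hvT : ∀ b : Fin 4, v b ∈ T := fun b => hT ▸ subset_convexHull ℝ _ ⟨b, rfl⟩
  have hzT : z ∈ T := hball (Metric.mem_closedBall_self hr)
  have hmT : m ∈ T := by
    rw [hm']
    have h1 := hTconv (hvT k) (hvT l) (by norm_num : (0:ℝ) ≤ 1/2) (by norm_num : (0:ℝ) ≤ 1/2)
      (by norm_num)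
    have h2 := hTconv (hvT j) h1 (by norm_num : (0:ℝ) ≤ 1/3) (by norm_num : (0:ℝ) ≤ 2/3)
      (by norm_num)
    have : (3:ℝ)⁻¹ • (v j + (v k + v l)) =
        (1/3 : ℝ) • v j + (2/3 : ℝ) • ((1/2 : ℝ) • v k + (1/2 : ℝ) • v l) := by module
    rw [this]
    exact h2
  have hbounded : Bornology.IsBounded T := by
    rw [hT]
    exact isBounded_convexHull.mpr (Set.finite_range v).isBounded
  set D : ℝ := Metric.diam T with hD
  have hDle : D ≤ 2 * c₀ * r := by
    have h2r : (0:ℝ) < 2 * r := by linarith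
    have := (div_le_iff₀ h2r).mp hreg
    linarith
  have hdistD : ∀ x y : EuclideanSpace ℝ (Fin 3), x ∈ T → y ∈ T → ‖x - y‖ ≤ D := by
    intro a b ha hb
    rw [← dist_eq_norm]
    exact Metric.dist_le_diam_of_mem hbounded ha hb
  have huD : ‖u‖ ≤ D := hdistD _ _ (hvT k) (hvT j)
  have hμD : ‖μ‖ ≤ D := hdistD _ _ hmT (hvT j)
  have hζD : ‖ζ‖ ≤ D := hdistD _ _ hzT (hvT j)
  have hμuD : ‖μ - u‖ ≤ D := by
    have : μ - u = m - v k := by rw [hμdef, hu]; abel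
    rw [this]; exact hdistD _ _ hmT (hvT k)
  have hζuD : ‖ζ - u‖ ≤ D := by
    have : ζ - u = z - v k := by rw [hζ, hu]; abel
    rw [this]; exact hdistD _ _ hzT (hvT k)
  have hDpos : 0 < D := by nlinarith [hunorm, hrpos, huD]
  -- the inscribed ball of K
  set ρ : ℝ := |Δ| / (4 * D ^ 2) with hρ
  have hρpos : 0 < ρ := by positivity
  set c : EuclideanSpace ℝ (Fin 3) := v j + (4:ℝ)⁻¹ • (u + μ + ζ) with hc
  have hsubK : Metric.closedBall c ρ ⊆ K := by
    intro y hy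
    rw [Metric.mem_closedBall, dist_eq_norm] at hy
    set δ : EuclideanSpace ℝ (Fin 3) := y - c with hδ
    set η : EuclideanSpace ℝ (Fin 3) := y - v j with hη
    have hηδ : η = (4:ℝ)⁻¹ • (u + μ + ζ) + δ := by
      rw [hη, hδ, hc]; abel
    set A : ℝ := (inner ℝ (crossE μ ζ) η : ℝ) / Δ with hA
    set B : ℝ := (inner ℝ (crossE ζ u) η : ℝ) / Δ with hB
    set C : ℝ := (inner ℝ (crossE u μ) η : ℝ) / Δ with hC
    have hcyc3 : (inner ℝ (crossE u μ) ζ : ℝ) = Δ := by rw [hΔ, hw]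
    have hcyc1 : (inner ℝ (crossE μ ζ) u : ℝ) = Δ := by
      rw [crossE_cyclic μ ζ u, crossE_cyclic ζ u μ]
      try exact hcyc3
    have hcyc2 : (inner ℝ (crossE ζ u) μ : ℝ) = Δ := by
      rw [crossE_cyclic ζ u μ]
      try exact hcyc3
    have hAval : A = (4:ℝ)⁻¹ + (inner ℝ (crossE μ ζ) δ : ℝ) / Δ := by
      rw [hA, hηδ]
      simp only [inner_add_right, real_inner_smul_right, hcyc1, inner_crossE_left,
        inner_crossE_right]
      field_simp
      try ring
    have hBval : B = (4:ℝ)⁻¹ + (inner ℝ (crossE ζ u) δ : ℝ) / Δ := by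
      rw [hB, hηδ]
      simp only [inner_add_right, real_inner_smul_right, hcyc2, inner_crossE_left,
        inner_crossE_right]
      try field_simp
      try ring
    have hCval : C = (4:ℝ)⁻¹ + (inner ℝ (crossE u μ) δ : ℝ) / Δ := by
      rw [hC, hηδ]
      simp only [inner_add_right, real_inner_smul_right, hcyc3, inner_crossE_left,
        inner_crossE_right]
      try field_simp
      try ring
    have hbnd : ∀ a b : EuclideanSpace ℝ (Fin 3), ‖a‖ ≤ D → ‖b‖ ≤ D →
        |(inner ℝ (crossE a b) δ : ℝ)| ≤ D ^ 2 * ρ := by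
      intro a b ha hb
      have h1 : |(inner ℝ (crossE a b) δ : ℝ)| ≤ ‖crossE a b‖ * ‖δ‖ := abs_real_inner_le_norm _ _
      have h2 : ‖crossE a b‖ ≤ ‖a‖ * ‖b‖ := norm_crossE_le a b
      have h3 : ‖δ‖ ≤ ρ := hy
      have hab : ‖a‖ * ‖b‖ ≤ D ^ 2 := by
        nlinarith [mul_le_mul ha hb (norm_nonneg b) hDpos.le]
      have h5 : ‖crossE a b‖ ≤ D ^ 2 := h2.trans hab
      have h6 : ‖crossE a b‖ * ‖δ‖ ≤ D ^ 2 * ρ :=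
        mul_le_mul h5 h3 (norm_nonneg δ) (by positivity)
      linarith
    have hDρΔ : D ^ 2 * ρ ≤ |Δ| / 4 := by
      have heq : D ^ 2 * ρ = |Δ| / 4 := by
        rw [hρ]; field_simp
      linarith [heq.le]
    have hquarter : ∀ x : ℝ, |x| ≤ D ^ 2 * ρ → |x / Δ| ≤ (4:ℝ)⁻¹ := by
      intro x hx
      rw [abs_div, div_le_iff₀ hΔpos]
      nlinarith [hx, hDρΔ]
    have hApos : 0 ≤ A := by
      rw [hAval]
      have habs := hquarter _ (hbnd μ ζ hμD hζD)
      have h := abs_le.mp habs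
      linarith [h.1]
    have hBpos : 0 ≤ B := by
      rw [hBval]
      have habs := hquarter _ (hbnd ζ u hζD huD)
      have h := abs_le.mp habs
      linarith [h.1]
    have hCpos : 0 ≤ C := by
      rw [hCval]
      have habs := hquarter _ (hbnd u μ huD hμD)
      have h := abs_le.mp habs
      linarith [h.1]
    have hW0pos : 0 ≤ 1 - A - B - C := by
      have hcs : crossE μ ζ + crossE ζ u + crossE u μ = crossE (μ - u) (ζ - u) :=
        crossE_sum u μ ζ
      have hsum : A + B + C = 3 * (4:ℝ)⁻¹ + (inner ℝ (crossE (μ - u) (ζ - u)) δ : ℝ) / Δ := by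
        rw [hAval, hBval, hCval, ← hcs, inner_add_left, inner_add_left]
        ring
      have habs := hquarter _ (hbnd (μ - u) (ζ - u) hμuD hζuD)
      have h := abs_le.mp habs
      have hABC : A + B + C ≤ 1 := by
        rw [hsum]; linarith [h.2]
      linarith
    have hηeq : η = A • u + B • μ + C • ζ := by
      have hcram := cramer3 u μ ζ η
      rw [hcyc3] at hcram
      have hkey : A • u + B • μ + C • ζ = Δ⁻¹ • (Δ • η) := by
        rw [hcram, smul_add, smul_add, smul_smul, smul_smul, smul_smul, hA, hB, hC,
          div_eq_inv_mul, div_eq_inv_mul, div_eq_inv_mul]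
      rw [hkey, smul_smul, inv_mul_cancel₀ hΔne, one_smul]
    have hyeq : y = (1 - A - B - C) • v j + A • v k + B • m + C • z := by
      have hrw : (1 - A - B - C) • v j + A • v k + B • m + C • z =
          v j + (A • (v k - v j) + B • (m - v j) + C • (z - v j)) := by module
      rw [hrw, ← hu, ← hμdef, ← hζ, ← hηeq, hη]
      abel
    rw [hK]
    have hmem : ∀ b : Fin 4, (![v j, v k, m, z]) b ∈
        convexHull ℝ ({v j, v k, m, z} : Set (EuclideanSpace ℝ (Fin 3))) := by
      intro b
      apply subset_convexHull
      fin_cases b <;> simp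
    have hfin := (convex_convexHull ℝ ({v j, v k, m, z} : Set (EuclideanSpace ℝ (Fin 3)))).sum_mem
      (t := Finset.univ) (w := ![1 - A - B - C, A, B, C]) (z := ![v j, v k, m, z])
      (by
        intro b _
        fin_cases b
        · simpa using hW0pos
        · simpa using hApos
        · simpa using hBpos
        · simpa using hCpos)
      (by rw [Fin.sum_univ_four]; simp; ring)
      (fun b _ => hmem b)
    rw [Fin.sum_univ_four] at hfin
    simp only [Matrix.cons_val_zero, Matrix.cons_val_one, Matrix.head_cons,
      vec4_2, vec4_3] at hfin
    rwa [← hyeq] at hfin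
  -- conclusion
  have hrK : ρ ≤ rK := hmaxK c ρ hsubK
  have hrKpos : 0 < rK := lt_of_lt_of_le hρpos hrK
  have hKsub : K ⊆ T := by
    rw [hK]
    apply convexHull_min _ hTconv
    intro x hx
    rcases hx with hx | hx | hx | hx
    · rw [hx]; exact hvT j
    · rw [hx]; exact hvT k
    · rw [hx]; exact hmT
    · rw [Set.mem_singleton_iff] at hx; rw [hx]; exact hzT
  have hdiamK : Metric.diam K ≤ D := hD ▸ Metric.diam_mono hKsub hbounded
  -- main bound: diam K / (2 rK) ≤ 12 c₀³
  have hmain : Metric.diam K / (2 * rK) ≤ 12 * c₀ ^ 3 := by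
    rw [div_le_iff₀ (by positivity)]
    have hc₀3 : (0:ℝ) ≤ c₀ ^ 3 := by positivity
    have hDcube : D ^ 3 ≤ 6 * c₀ ^ 3 * |Δ| := by
      have h1 : D ^ 3 ≤ (2 * c₀ * r) ^ 3 := pow_le_pow_left₀ hDpos.le hDle 3
      have h2 := mul_le_mul_of_nonneg_left hΔlow (by positivity : (0:ℝ) ≤ 6 * c₀ ^ 3)
      nlinarith [h1, h2]
    have hρval : ρ * (4 * D ^ 2) = |Δ| := by
      rw [hρ]
      exact div_mul_cancel₀ _ (by positivity)
    have hρD : D ≤ 24 * c₀ ^ 3 * ρ := by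
      nlinarith [hDcube, hρval, hDpos, mul_pos hDpos hDpos]
    calc Metric.diam K ≤ D := hdiamK
      _ ≤ 24 * c₀ ^ 3 * ρ := hρD
      _ ≤ 12 * c₀ ^ 3 * (2 * rK) := by
          have h24 := mul_le_mul_of_nonneg_left hrK (by positivity : (0:ℝ) ≤ 24 * c₀ ^ 3)
          nlinarith [h24]
  -- the right-hand side is at least 12 c₀³
  set s : ℝ := Real.sqrt (1 - (c₀ ^ 2)⁻¹) with hs
  have hc₀pos : (0:ℝ) < c₀ := by linarith
  have hsnonneg : 0 ≤ s := Real.sqrt_nonneg _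
  have hslt : s < 1 := by
    rw [hs]
    have h1 : 1 - (c₀ ^ 2)⁻¹ < 1 := by
      have : (0:ℝ) < (c₀ ^ 2)⁻¹ := by positivity
      linarith
    have h2 : (1:ℝ) ≤ c₀ ^ 2 := by nlinarith [hc₀]
    have h3 : (c₀ ^ 2)⁻¹ ≤ 1 := by
      rw [inv_eq_one_div, div_le_one (by positivity)]
      exact h2
    calc Real.sqrt (1 - (c₀ ^ 2)⁻¹) < Real.sqrt 1 := by
          apply Real.sqrt_lt_sqrt _ h1
          linarith
      _ = 1 := Real.sqrt_one
  have harg : 0 < -1 + 2 / (1 + s) := by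
    have h1s : 0 < 1 + s := by linarith
    have : 1 < 2 / (1 + s) := by
      rw [lt_div_iff₀ h1s]; linarith
    linarith
  have hfrak : 0 < (2 * c₀)⁻¹ * Real.sqrt (-1 + 2 / (1 + Real.sqrt (1 - (c₀ ^ 2)⁻¹))) := by
    apply mul_pos (by positivity)
    rw [← hs]
    exact Real.sqrt_pos.mpr harg
  set mn : ℝ := min ((2 * c₀)⁻¹ * Real.sqrt (-1 + 2 / (1 + Real.sqrt (1 - (c₀ ^ 2)⁻¹))))
      (3 * c₀)⁻¹ with hmn
  have hmnpos : 0 < mn := lt_min hfrak (by positivity)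
  have hmnle : mn ≤ (3 * c₀)⁻¹ := min_le_right _ _
  have hrhs : 2 * Real.pi * c₀ ^ 3 * (3 * c₀) ≤ 2 * Real.pi * c₀ ^ 3 / mn := by
    rw [le_div_iff₀ hmnpos]
    have hpi : (0:ℝ) < Real.pi := Real.pi_pos
    have h1 : mn * (3 * c₀) ≤ 1 := by
      have := mul_le_mul_of_nonneg_right hmnle (by positivity : (0:ℝ) ≤ 3 * c₀)
      rwa [inv_mul_cancel₀ (by positivity : (3:ℝ) * c₀ ≠ 0)] at this
    have h2 := mul_le_mul_of_nonneg_left h1 (by positivity : (0:ℝ) ≤ 2 * Real.pi * c₀ ^ 3)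
    nlinarith [h2]
  have hfinal : (12:ℝ) * c₀ ^ 3 ≤ 2 * Real.pi * c₀ ^ 3 * (3 * c₀) := by
    have hpi : (3:ℝ) ≤ Real.pi := by linarith [Real.pi_gt_three]
    have h4 : (0:ℝ) ≤ c₀ ^ 3 := by positivity
    have h5 : c₀ ^ 3 * 1 ≤ c₀ ^ 3 * c₀ := mul_le_mul_of_nonneg_left hc₀ h4
    have h6 : (0:ℝ) ≤ c₀ ^ 4 := by positivity
    have h7 := mul_le_mul_of_nonneg_right hpi h6
    have h8 : (0:ℝ) ≤ Real.pi * c₀ ^ 4 := mul_nonneg (by linarith) h6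
    nlinarith [h5, h7, h8]
  linarith [hmain, hrhs, hfinal]
end
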